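/- arXiv:1611.01905 — 11 statements merged into one kernel-verified Lean document; each statement's English description precedes it below -/
import Mathlib

section
/- Let f : ℝ → ℝ be convex on an interval I and let a, b ∈ I with a < b. Then (1/(b-a)) ∫_a^b f(t) dt ≤ (1/4)(f(a) + f(b)) + (1/2) f((a+b)/2). -/
open MeasureTheory intervalIntegral

/-- Trapezoid rule upper bound for convex functions. -/
lemma trapezoid_bound (f : ℝ → ℝ) (I : Set ℝ) (hf : ConvexOn ℝ I f)
    (a b : ℝ) (ha : a ∈ I) (hb : b ∈ I) (hab : a < b)
    (hint : IntervalIntegrable f volume a b) :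
    ∫ t in a..b, f t ≤ (b - a) * (f a + f b) / 2 := by
  have hba : (0:ℝ) < b - a := by linarith
  have key : ∀ t ∈ Set.Icc a b,
      f t ≤ f a + (t - a) / (b - a) * (f b - f a) := by
    intro t ht
    obtain ⟨h1, h2⟩ := ht
    have hp : (0:ℝ) ≤ (b - t) / (b - a) := div_nonneg (by linarith) hba.le
    have hq : (0:ℝ) ≤ (t - a) / (b - a) := div_nonneg (by linarith) hba.le
    have hpq : (b - t) / (b - a) + (t - a) / (b - a) = 1 := by
      field_simp; ring
    have := hf.2 ha hb hp hq hpq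
    have hcomb : ((b - t) / (b - a)) • a + ((t - a) / (b - a)) • b = t := by
      rw [smul_eq_mul, smul_eq_mul, div_mul_eq_mul_div, div_mul_eq_mul_div, ← add_div,
        div_eq_iff hba.ne']; ring
    rw [hcomb] at this
    have : f t ≤ (b - t) / (b - a) * f a + (t - a) / (b - a) * f b := this
    have hexp : (b - t) / (b - a) * f a + (t - a) / (b - a) * f b
        = f a + (t - a) / (b - a) * (f b - f a) := by
      field_simp; ring
    linarith [hexp ▸ this]
  have hgint : IntervalIntegrable (fun t => f a + (t - a) / (b - a) * (f b - f a))
      volume a b := by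
    apply IntervalIntegrable.add intervalIntegrable_const
    exact (((intervalIntegrable_id.sub intervalIntegrable_const).div_const _).mul_const _)
  have hmono := intervalIntegral.integral_mono_on hab.le hint hgint key
  have hgval : ∫ t in a..b, (f a + (t - a) / (b - a) * (f b - f a))
      = (b - a) * (f a + f b) / 2 := by
    have : ∀ t : ℝ, f a + (t - a) / (b - a) * (f b - f a)
        = f a + (f b - f a) / (b - a) * t - (f b - f a) / (b - a) * a := by
      intro t; field_simp; ring
    simp only [this]
    rw [intervalIntegral.integral_sub, intervalIntegral.integral_add,
      intervalIntegral.integral_const, intervalIntegral.integral_const_mul,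
      integral_id]
    · simp only [intervalIntegral.integral_const, smul_eq_mul]; field_simp; ring
    · exact intervalIntegrable_const
    · exact intervalIntegrable_id.const_mul _
    · exact (intervalIntegrable_const.add (intervalIntegrable_id.const_mul _))
    · exact intervalIntegrable_const
  linarith [hgval ▸ hmono]

/-- **Theorem 1 (Hermite–Hadamard refinement, upper bound).**
If `f` is convex on an interval `I` and `a, b ∈ I` with `a < b`, then
`(1/(b-a)) ∫_a^b f ≤ (1/4)(f a + f b) + (1/2) f ((a+b)/2)`. -/
theorem stmt_0 (f : ℝ → ℝ) (I : Set ℝ) (hf : ConvexOn ℝ I f)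
    (a b : ℝ) (ha : a ∈ I) (hb : b ∈ I) (hab : a < b)
    (hint : IntervalIntegrable f volume a b) :
    (1 / (b - a)) * ∫ t in a..b, f t ≤
      (1 / 4) * (f a + f b) + (1 / 2) * f ((a + b) / 2) := by
  set m := (a + b) / 2 with hm
  have ham : a < m := by simp [hm]; linarith
  have hmb : m < b := by simp [hm]; linarith
  have hmI : m ∈ I := by
    have h := hf.1 ha hb (by norm_num : (0:ℝ) ≤ 1/2) (by norm_num : (0:ℝ) ≤ 1/2)
      (by norm_num)
    have he : (1/2:ℝ) • a + (1/2:ℝ) • b = m := by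
      simp [hm, smul_eq_mul]; ring
    rwa [he] at h
  have hint1 : IntervalIntegrable f volume a m := by
    apply hint.mono_set
    rw [Set.uIcc_of_le ham.le, Set.uIcc_of_le hab.le]
    exact Set.Icc_subset_Icc le_rfl hmb.le
  have hint2 : IntervalIntegrable f volume m b := by
    apply hint.mono_set
    rw [Set.uIcc_of_le hmb.le, Set.uIcc_of_le hab.le]
    exact Set.Icc_subset_Icc ham.le le_rfl
  have h1 := trapezoid_bound f I hf a m ha hmI ham hint1
  have h2 := trapezoid_bound f I hf m b hmI hb hmb hint2
  have hsplit : ∫ t in a..b, f t = (∫ t in a..m, f t) + ∫ t in m..b, f t :=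
    (intervalIntegral.integral_add_adjacent_intervals hint1 hint2).symm
  have hba : (0:ℝ) < b - a := by linarith
  rw [hsplit]
  rw [div_mul_eq_mul_div, div_le_iff₀ hba]
  have hm1 : m - a = (b - a) / 2 := by rw [hm]; ring
  have hm2 : b - m = (b - a) / 2 := by rw [hm]; ring
  rw [hm1] at h1; rw [hm2] at h2
  nlinarith [h1, h2]
end

section
/- Let f : ℝ → ℝ be four times continuously differentiable on an interval I, and suppose f and its second derivative f'' are both convex on I. Then for all a, b ∈ I with a < b: ((b-a)^2/48) f''((a+b)/2) ≤ (1/4)(f(a)+f(b)) + (1/2) f((a+b)/2) − (1/(b-a)) ∫_a^b f(t) dt ≤ ((b-a)^2/96) (f''(a) + f''(b)). -/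
open MeasureTheory intervalIntegral

/-- **Theorem 2, first part.** If `f ∈ C⁴(I)` and both `f` and `f''` are convex on the
interval `I`, then for `a, b ∈ I` with `a < b`,
`((b-a)²/48) f''((a+b)/2) ≤ N(1/4,1/2) - (1/(b-a)) ∫_a^b f ≤ ((b-a)²/96)(f''(a)+f''(b))`. -/
theorem stmt_1 (f : ℝ → ℝ) (I : Set ℝ) (hI : Convex ℝ I)
    (hf : ContDiffOn ℝ 4 f I) (hconv : ConvexOn ℝ I f)
    (hconv'' : ConvexOn ℝ I (deriv (deriv f)))
    (a b : ℝ) (ha : a ∈ I) (hb : b ∈ I) (hab : a < b) :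
    (b - a) ^ 2 / 48 * deriv (deriv f) ((a + b) / 2) ≤
      (1 / 4) * (f a + f b) + (1 / 2) * f ((a + b) / 2)
        - (1 / (b - a)) * ∫ t in a..b, f t ∧
    (1 / 4) * (f a + f b) + (1 / 2) * f ((a + b) / 2)
        - (1 / (b - a)) * ∫ t in a..b, f t ≤
      (b - a) ^ 2 / 96 * (deriv (deriv f) a + deriv (deriv f) b) := by
  set f2 : ℝ → ℝ := deriv (deriv f) with hf2def
  set m : ℝ := (a + b) / 2 with hm
  set r : ℝ := (b - a) / 2 with hrdef
  have hr0 : 0 < r := by rw [hrdef]; linarith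
  have hba : (0:ℝ) < b - a := by linarith
  have hba' : b - a ≠ 0 := ne_of_gt hba
  have hsub : Set.Icc a b ⊆ I := hI.ordConnected.out ha hb
  have hIooU : Set.Ioo a b ⊆ interior I := by
    rw [← interior_Icc]; exact interior_mono hsub
  have hU : IsOpen (interior I) := isOpen_interior
  have hfU : ContDiffOn ℝ 4 f (interior I) := hf.mono interior_subset
  have hf1U : ContDiffOn ℝ 3 (deriv f) (interior I) := hfU.deriv_of_isOpen hU (by norm_num)
  have hF1 : ∀ y ∈ Set.Ioo a b, HasDerivAt f (deriv f y) y := fun y hy =>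
    ((hfU.differentiableOn (by norm_num)).differentiableAt (hU.mem_nhds (hIooU hy))).hasDerivAt
  have hF2 : ∀ y ∈ Set.Ioo a b, HasDerivAt (deriv f) (f2 y) y := fun y hy =>
    ((hf1U.differentiableOn (by norm_num)).differentiableAt (hU.mem_nhds (hIooU hy))).hasDerivAt
  have hcont : ContinuousOn f (Set.Icc a b) := (hf.continuousOn).mono hsub
  have hcontIoo : ContinuousOn f (Set.Ioo a b) := hcont.mono Set.Ioo_subset_Icc_self
  have hint : ∀ y ∈ Set.Icc a b, IntervalIntegrable f volume a y := by
    intro y hy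
    apply ContinuousOn.intervalIntegrable
    apply hcont.mono
    rw [Set.uIcc_of_le hy.1]
    exact Set.Icc_subset_Icc le_rfl hy.2
  set Φ : ℝ → ℝ := fun y => ∫ t in a..y, f t with hΦdef
  have hΦc : ContinuousOn Φ (Set.Icc a b) := by
    have h1 : IntegrableOn f (Set.uIcc a b) := by
      rw [Set.uIcc_of_le hab.le]; exact hcont.integrableOn_Icc
    have := intervalIntegral.continuousOn_primitive_interval h1
    rwa [Set.uIcc_of_le hab.le] at this
  have hΦd : ∀ y ∈ Set.Ioo a b, HasDerivAt Φ (f y) y := by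
    intro y hy
    exact intervalIntegral.integral_hasDerivAt_right
      (hint y ⟨hy.1.le, hy.2.le⟩)
      (ContinuousOn.stronglyMeasurableAtFilter isOpen_Ioo hcontIoo y hy)
      (hcontIoo.continuousAt (Ioo_mem_nhds hy.1 hy.2))
  set G : ℝ → ℝ := fun x => x/2 * (f (m - x) + f (m + x)) + x * f m - (Φ (m + x) - Φ (m - x))
    with hG
  set G1 : ℝ → ℝ := fun x =>
    f m - (f (m + x) + f (m - x))/2 + x/2 * (deriv f (m + x) - deriv f (m - x)) with hG1
  set G2 : ℝ → ℝ := fun x => x/2 * (f2 (m + x) + f2 (m - x)) with hG2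
  have hmem : ∀ x ∈ Set.Ioo (-r) r, m - x ∈ Set.Ioo a b ∧ m + x ∈ Set.Ioo a b := by
    intro x hx
    obtain ⟨h1, h2⟩ := hx
    exact ⟨⟨by linarith, by linarith⟩, ⟨by linarith, by linarith⟩⟩
  -- derivative of G
  have hGd : ∀ x ∈ Set.Ioo (-r) r, HasDerivAt G (G1 x) x := by
    intro x hx
    obtain ⟨hmx, hpx⟩ := hmem x hx
    have dmx : HasDerivAt (fun y : ℝ => m - y) (-1) x := by
      simpa using (hasDerivAt_id x).const_sub m
    have dpx : HasDerivAt (fun y : ℝ => m + y) 1 x := by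
      simpa using (hasDerivAt_id x).const_add m
    have d1 : HasDerivAt (fun y => f (m - y)) (deriv f (m - x) * (-1)) x :=
      (hF1 _ hmx).comp x dmx
    have d2 : HasDerivAt (fun y => f (m + y)) (deriv f (m + x) * 1) x :=
      (hF1 _ hpx).comp x dpx
    have d3 : HasDerivAt (fun y => Φ (m - y)) (f (m - x) * (-1)) x :=
      (hΦd _ hmx).comp x dmx
    have d4 : HasDerivAt (fun y => Φ (m + y)) (f (m + x) * 1) x :=
      (hΦd _ hpx).comp x dpx
    have d5 : HasDerivAt (fun y : ℝ => y/2) (1/2 : ℝ) x := by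
      simpa using (hasDerivAt_id x).div_const 2
    have d6 := ((d5.mul (d1.add d2)).add ((hasDerivAt_id x).mul_const (f m))).sub (d4.sub d3)
    rw [hG]
    simp only [hG1]
    exact d6.congr_deriv (by simp only [Pi.add_apply, Pi.sub_apply]; ring)
  -- derivative of G1
  have hG1d : ∀ x ∈ Set.Ioo (-r) r, HasDerivAt G1 (G2 x) x := by
    intro x hx
    obtain ⟨hmx, hpx⟩ := hmem x hx
    have dmx : HasDerivAt (fun y : ℝ => m - y) (-1) x := by
      simpa using (hasDerivAt_id x).const_sub m
    have dpx : HasDerivAt (fun y : ℝ => m + y) 1 x := by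
      simpa using (hasDerivAt_id x).const_add m
    have d1 : HasDerivAt (fun y => f (m - y)) (deriv f (m - x) * (-1)) x :=
      (hF1 _ hmx).comp x dmx
    have d2 : HasDerivAt (fun y => f (m + y)) (deriv f (m + x) * 1) x :=
      (hF1 _ hpx).comp x dpx
    have e1 : HasDerivAt (fun y => deriv f (m - y)) (f2 (m - x) * (-1)) x :=
      (hF2 _ hmx).comp x dmx
    have e2 : HasDerivAt (fun y => deriv f (m + y)) (f2 (m + x) * 1) x :=
      (hF2 _ hpx).comp x dpx
    have d5 : HasDerivAt (fun y : ℝ => y/2) (1/2 : ℝ) x := by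
      simpa using (hasDerivAt_id x).div_const 2
    have d6 := (((d2.add d1).div_const 2).const_sub (f m)).add (d5.mul (e2.sub e1))
    rw [hG1]
    simp only [hG2]
    exact d6.congr_deriv (by simp only [Pi.add_apply, Pi.sub_apply]; ring)
  -- pointwise bounds on G2 from convexity of f''
  have hG2low : ∀ x ∈ Set.Ico 0 r, x * f2 m ≤ G2 x := by
    intro x hx
    obtain ⟨hx0, hxr⟩ := hx
    have hmxI : m - x ∈ I := hsub ⟨by linarith, by linarith⟩
    have hpxI : m + x ∈ I := hsub ⟨by linarith, by linarith⟩
    have hc := hconv''.2 hpxI hmxI (by norm_num : (0:ℝ) ≤ 1/2) (by norm_num : (0:ℝ) ≤ 1/2)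
      (by norm_num)
    have hmid : (1/2 : ℝ) • (m + x) + (1/2 : ℝ) • (m - x) = m := by
      simp only [smul_eq_mul]; ring
    rw [hmid] at hc
    simp only [smul_eq_mul] at hc
    simp only [hG2]
    nlinarith [mul_le_mul_of_nonneg_left hc hx0]
  have hG2up : ∀ x ∈ Set.Ico 0 r, G2 x ≤ x/2 * (f2 a + f2 b) := by
    intro x hx
    obtain ⟨hx0, hxr⟩ := hx
    have hxr' : x ≤ (b - a)/2 := by rw [hrdef] at hxr; linarith
    have hl0 : (0:ℝ) ≤ 1/2 - x/(b-a) := by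
      have : x/(b-a) ≤ 1/2 := by rw [div_le_iff₀ hba]; linarith
      linarith
    have hl1 : (0:ℝ) ≤ 1/2 + x/(b-a) := by positivity
    have hc1 := hconv''.2 ha hb hl0 hl1 (by ring : (1/2 - x/(b-a)) + (1/2 + x/(b-a)) = 1)
    have hc2 := hconv''.2 ha hb hl1 hl0 (by ring : (1/2 + x/(b-a)) + (1/2 - x/(b-a)) = 1)
    have e1 : (1/2 - x/(b-a)) • a + (1/2 + x/(b-a)) • b = m + x := by
      simp only [smul_eq_mul]; rw [hm]; field_simp; ring
    have e2 : (1/2 + x/(b-a)) • a + (1/2 - x/(b-a)) • b = m - x := by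
      simp only [smul_eq_mul]; rw [hm]; field_simp; ring
    rw [e1] at hc1
    rw [e2] at hc2
    simp only [smul_eq_mul] at hc1 hc2
    have hsum : f2 (m + x) + f2 (m - x) ≤ f2 a + f2 b := by linarith
    simp only [hG2]
    nlinarith [mul_le_mul_of_nonneg_left hsum hx0]
  -- polynomial derivatives
  have hq2 : ∀ (c y : ℝ), HasDerivAt (fun t : ℝ => c * t^2) (2*c*y) y := by
    intro c y
    have h := (hasDerivAt_pow 2 y).const_mul c
    exact h.congr_deriv (by push_cast; ring)
  have hq3 : ∀ (c y : ℝ), HasDerivAt (fun t : ℝ => c * t^3) (3*c*y^2) y := by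
    intro c y
    have h := (hasDerivAt_pow 3 y).const_mul c
    exact h.congr_deriv (by push_cast; ring)
  -- generic monotonicity steps
  have mono0 : ∀ (F F' : ℝ → ℝ), (∀ y ∈ Set.Ioo (-r) r, HasDerivAt F (F' y) y) →
      (∀ y ∈ Set.Ico 0 r, 0 ≤ F' y) → ∀ x ∈ Set.Ico 0 r, F 0 ≤ F x := by
    intro F F' hFd hF'pos x hx
    rcases eq_or_lt_of_le hx.1 with h0 | h0
    · exact le_of_eq (by rw [← h0])
    · have hsubJ : Set.Icc (0:ℝ) x ⊆ Set.Ioo (-r) r := fun y hy =>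
        ⟨by have := hy.1; linarith, by have := hy.2; have := hx.2; linarith⟩
      have hmono : MonotoneOn F (Set.Icc 0 x) := by
        apply monotoneOn_of_deriv_nonneg (convex_Icc 0 x)
        · intro y hy
          exact (hFd y (hsubJ hy)).continuousAt.continuousWithinAt
        · rw [interior_Icc]
          intro y hy
          exact ((hFd y (hsubJ (Set.mem_Icc_of_Ioo hy))).differentiableAt).differentiableWithinAt
        · rw [interior_Icc]
          intro y hy
          rw [(hFd y (hsubJ (Set.mem_Icc_of_Ioo hy))).deriv]
          exact hF'pos y ⟨hy.1.le, lt_trans hy.2 hx.2⟩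
      exact hmono ⟨le_rfl, h0.le⟩ ⟨h0.le, le_rfl⟩ h0.le
  have mono1 : ∀ (F F' : ℝ → ℝ), ContinuousOn F (Set.Icc 0 r) →
      (∀ y ∈ Set.Ioo (-r) r, HasDerivAt F (F' y) y) →
      (∀ y ∈ Set.Ico 0 r, 0 ≤ F' y) → F 0 ≤ F r := by
    intro F F' hFc hFd hF'pos
    have hmono : MonotoneOn F (Set.Icc 0 r) := by
      apply monotoneOn_of_deriv_nonneg (convex_Icc 0 r) hFc
      · rw [interior_Icc]
        intro y hy
        exact ((hFd y ⟨by have := hy.1; linarith, hy.2⟩).differentiableAt).differentiableWithinAt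
      · rw [interior_Icc]
        intro y hy
        rw [(hFd y ⟨by have := hy.1; linarith, hy.2⟩).deriv]
        exact hF'pos y ⟨hy.1.le, hy.2⟩
    exact hmono ⟨le_rfl, hr0.le⟩ ⟨hr0.le, le_rfl⟩ hr0.le
  -- continuity of G on [0, r]
  have hmaps1 : Set.MapsTo (fun x : ℝ => m - x) (Set.Icc 0 r) (Set.Icc a b) := by
    intro x hx
    obtain ⟨h1, h2⟩ := hx
    simp only [Set.mem_Icc]
    constructor <;> linarith
  have hmaps2 : Set.MapsTo (fun x : ℝ => m + x) (Set.Icc 0 r) (Set.Icc a b) := by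
    intro x hx
    obtain ⟨h1, h2⟩ := hx
    simp only [Set.mem_Icc]
    constructor <;> linarith
  have hcm : ContinuousOn (fun x : ℝ => m - x) (Set.Icc 0 r) :=
    continuousOn_const.sub continuousOn_id
  have hcp : ContinuousOn (fun x : ℝ => m + x) (Set.Icc 0 r) :=
    continuousOn_const.add continuousOn_id
  have hcf1 : ContinuousOn (fun x : ℝ => f (m - x)) (Set.Icc 0 r) := hcont.comp hcm hmaps1
  have hcf2 : ContinuousOn (fun x : ℝ => f (m + x)) (Set.Icc 0 r) := hcont.comp hcp hmaps2
  have hcf3 : ContinuousOn (fun x : ℝ => Φ (m - x)) (Set.Icc 0 r) := hΦc.comp hcm hmaps1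
  have hcf4 : ContinuousOn (fun x : ℝ => Φ (m + x)) (Set.Icc 0 r) := hΦc.comp hcp hmaps2
  have hGc : ContinuousOn G (Set.Icc 0 r) := by
    rw [hG]
    exact (((continuousOn_id.div_const 2).mul (hcf1.add hcf2)).add
      (continuousOn_id.mul continuousOn_const)).sub (hcf4.sub hcf3)
  -- values at 0
  have hG10 : G1 0 = 0 := by
    simp only [hG1]
    norm_num
  have hG0 : G 0 = 0 := by
    simp only [hG]
    norm_num
  -- lower bound
  have hψd : ∀ y ∈ Set.Ioo (-r) r,
      HasDerivAt (fun t => G t - f2 m/6 * t^3) (G1 y - f2 m/2 * y^2) y := by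
    intro y hy
    have h := (hGd y hy).sub (hq3 (f2 m/6) y)
    exact h.congr_deriv (by ring)
  have hψ1d : ∀ y ∈ Set.Ioo (-r) r,
      HasDerivAt (fun t => G1 t - f2 m/2 * t^2) (G2 y - f2 m * y) y := by
    intro y hy
    have h := (hG1d y hy).sub (hq2 (f2 m/2) y)
    exact h.congr_deriv (by ring)
  have hψ1pos : ∀ x ∈ Set.Ico 0 r, 0 ≤ G1 x - f2 m/2 * x^2 := by
    intro x hx
    have h := mono0 (fun t => G1 t - f2 m/2 * t^2) (fun y => G2 y - f2 m * y) hψ1d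
      (fun y hy => by have := hG2low y hy; show (0:ℝ) ≤ G2 y - f2 m * y; linarith) x hx
    simp only [hG10] at h
    simpa using h
  have key1 : f2 m/6 * r^3 ≤ G r := by
    have h := mono1 (fun t => G t - f2 m/6 * t^3) (fun y => G1 y - f2 m/2 * y^2)
      (hGc.sub ((continuous_const.mul (continuous_pow 3)).continuousOn)) hψd hψ1pos
    simp only [hG0] at h
    have h0 : (0:ℝ)^3 = 0 := by norm_num
    simp only [h0, mul_zero, sub_zero, zero_sub] at h
    linarith
  -- upper bound
  have hχd : ∀ y ∈ Set.Ioo (-r) r,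
      HasDerivAt (fun t => (f2 a + f2 b)/12 * t^3 - G t) ((f2 a + f2 b)/4 * y^2 - G1 y) y := by
    intro y hy
    have h := (hq3 ((f2 a + f2 b)/12) y).sub (hGd y hy)
    exact h.congr_deriv (by ring)
  have hχ1d : ∀ y ∈ Set.Ioo (-r) r,
      HasDerivAt (fun t => (f2 a + f2 b)/4 * t^2 - G1 t) ((f2 a + f2 b)/2 * y - G2 y) y := by
    intro y hy
    have h := (hq2 ((f2 a + f2 b)/4) y).sub (hG1d y hy)
    exact h.congr_deriv (by ring)
  have hχ1pos : ∀ x ∈ Set.Ico 0 r, 0 ≤ (f2 a + f2 b)/4 * x^2 - G1 x := by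
    intro x hx
    have h := mono0 (fun t => (f2 a + f2 b)/4 * t^2 - G1 t)
      (fun y => (f2 a + f2 b)/2 * y - G2 y) hχ1d
      (fun y hy => by have := hG2up y hy; show (0:ℝ) ≤ (f2 a + f2 b)/2 * y - G2 y; linarith) x hx
    simp only [hG10] at h
    simpa using h
  have key2 : G r ≤ (f2 a + f2 b)/12 * r^3 := by
    have h := mono1 (fun t => (f2 a + f2 b)/12 * t^3 - G t)
      (fun y => (f2 a + f2 b)/4 * y^2 - G1 y)
      (((continuous_const.mul (continuous_pow 3)).continuousOn).sub hGc) hχd hχ1pos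
    simp only [hG0] at h
    have h0 : (0:ℝ)^3 = 0 := by norm_num
    simp only [h0, mul_zero, zero_sub, sub_zero] at h
    linarith
  -- value of G at r
  have hGr : G r = (b-a)/4 * (f a + f b) + (b-a)/2 * f m - ∫ t in a..b, f t := by
    have em1 : m - r = a := by rw [hm, hrdef]; ring
    have ep1 : m + r = b := by rw [hm, hrdef]; ring
    simp only [hG, em1, ep1, hΦdef, intervalIntegral.integral_same]
    rw [hrdef]; ring
  constructor
  · have e1 : (b-a)^2/48 * f2 m * (b-a) = f2 m/6 * r^3 := by rw [hrdef]; ring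
    have e2 : ((1/4) * (f a + f b) + (1/2) * f m - (1/(b-a)) * ∫ t in a..b, f t) * (b-a)
        = G r := by
      rw [hGr]; field_simp
    refine le_of_mul_le_mul_right ?_ hba
    rw [e1, e2]
    exact key1
  · have e1 : (b-a)^2/96 * (f2 a + f2 b) * (b-a) = (f2 a + f2 b)/12 * r^3 := by
      rw [hrdef]; ring
    have e2 : ((1/4) * (f a + f b) + (1/2) * f m - (1/(b-a)) * ∫ t in a..b, f t) * (b-a)
        = G r := by
      rw [hGr]; field_simp
    refine le_of_mul_le_mul_right ?_ hba
    rw [e1, e2]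
    exact key2
end

section
/- Let f : ℝ → ℝ be four times continuously differentiable on an interval I, with f convex and its second derivative f'' concave on I. Then for all a, b ∈ I with a < b: ((b-a)^2/96)(f''(a)+f''(b)) ≤ (1/4)(f(a)+f(b)) + (1/2) f((a+b)/2) − (1/(b-a)) ∫_a^b f(t) dt ≤ ((b-a)^2/48) f''((a+b)/2). -/
open MeasureTheory intervalIntegral Set

private lemma int_cubic (c0 c1 c2 c3 x y : ℝ) :
    ∫ t in x..y, (c0 + c1 * t + c2 * t ^ 2 + c3 * t ^ 3) =
      (c0 * y + c1 * y ^ 2 / 2 + c2 * y ^ 3 / 3 + c3 * y ^ 4 / 4)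
        - (c0 * x + c1 * x ^ 2 / 2 + c2 * x ^ 3 / 3 + c3 * x ^ 4 / 4) := by
  have h : ∀ t : ℝ, HasDerivAt
      (fun u : ℝ => c0 * u + c1 * u ^ 2 / 2 + c2 * u ^ 3 / 3 + c3 * u ^ 4 / 4)
      (c0 + c1 * t + c2 * t ^ 2 + c3 * t ^ 3) t := by
    intro t
    have h1 : HasDerivAt (fun u : ℝ => c0 * u) c0 t := by
      simpa using (hasDerivAt_id t).const_mul c0
    have h2 : HasDerivAt (fun u : ℝ => c1 * u ^ 2 / 2) (c1 * t) t := by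
      have := ((hasDerivAt_pow 2 t).const_mul c1).div_const 2
      refine this.congr_deriv ?_
      push_cast; ring
    have h3 : HasDerivAt (fun u : ℝ => c2 * u ^ 3 / 3) (c2 * t ^ 2) t := by
      have := ((hasDerivAt_pow 3 t).const_mul c2).div_const 3
      refine this.congr_deriv ?_
      push_cast; ring
    have h4 : HasDerivAt (fun u : ℝ => c3 * u ^ 4 / 4) (c3 * t ^ 3) t := by
      have := ((hasDerivAt_pow 4 t).const_mul c3).div_const 4
      refine this.congr_deriv ?_
      push_cast; ring
    exact ((h1.add h2).add h3).add h4
  have hcont : Continuous fun t : ℝ => c0 + c1 * t + c2 * t ^ 2 + c3 * t ^ 3 := by continuity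
  rw [intervalIntegral.integral_eq_sub_of_hasDerivAt (fun t _ => h t)
    (hcont.intervalIntegrable x y)]

set_option maxHeartbeats 2000000 in
/-- **Theorem 2, second part.** If `f ∈ C⁴(I)`, `f` is convex and `f''` is concave on the
interval `I`, then for `a, b ∈ I` with `a < b`,
`((b-a)²/96)(f''(a)+f''(b)) ≤ N(1/4,1/2) - (1/(b-a)) ∫_a^b f ≤ ((b-a)²/48) f''((a+b)/2)`. -/
theorem stmt_2 (f : ℝ → ℝ) (I : Set ℝ) (hI : Convex ℝ I)
    (hf : ContDiffOn ℝ 4 f I) (hconv : ConvexOn ℝ I f)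
    (hconc'' : ConcaveOn ℝ I (deriv (deriv f)))
    (a b : ℝ) (ha : a ∈ I) (hb : b ∈ I) (hab : a < b) :
    (b - a) ^ 2 / 96 * (deriv (deriv f) a + deriv (deriv f) b) ≤
      (1 / 4) * (f a + f b) + (1 / 2) * f ((a + b) / 2)
        - (1 / (b - a)) * ∫ t in a..b, f t ∧
    (1 / 4) * (f a + f b) + (1 / 2) * f ((a + b) / 2)
        - (1 / (b - a)) * ∫ t in a..b, f t ≤
      (b - a) ^ 2 / 48 * deriv (deriv f) ((a + b) / 2) := by
  have hd : (0 : ℝ) < b - a := sub_pos.2 hab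
  set m : ℝ := (a + b) / 2 with hm
  set g : ℝ → ℝ := deriv (deriv f) with hgdef
  have ham : a < m := by rw [hm]; linarith
  have hmb : m < b := by rw [hm]; linarith
  have hIcc : Icc a b ⊆ I := hI.ordConnected.out ha hb
  have hIoo : Ioo a b ⊆ interior I :=
    interior_maximal (fun x hx => hIcc (Ioo_subset_Icc_self hx)) isOpen_Ioo
  have hmint : m ∈ interior I := hIoo ⟨ham, hmb⟩
  have hUD : UniqueDiffOn ℝ I := uniqueDiffOn_convex hI ⟨m, hmint⟩
  set f₁ : ℝ → ℝ := derivWithin f I with hf₁def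
  set f₂ : ℝ → ℝ := derivWithin f₁ I with hf₂def
  have hf1C : ContDiffOn ℝ 3 f₁ I := hf.derivWithin hUD (by norm_num)
  have hcf : ContinuousOn f I := hf.continuousOn
  have hcf1 : ContinuousOn f₁ I := hf1C.continuousOn
  have hcf2 : ContinuousOn f₂ I := hf1C.continuousOn_derivWithin hUD (by norm_num)
  -- local facts on the interior
  have hlocal : ∀ t ∈ interior I, f₁ =ᶠ[nhds t] deriv f := by
    intro t ht
    filter_upwards [isOpen_interior.mem_nhds ht] with x hx
    rw [hf₁def]
    exact derivWithin_of_mem_nhds (mem_interior_iff_mem_nhds.1 hx)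
  have hderiv1 : ∀ t ∈ interior I, HasDerivAt f (f₁ t) t := by
    intro t ht
    have hn : I ∈ nhds t := mem_interior_iff_mem_nhds.1 ht
    have hdiff : DifferentiableAt ℝ f t := (hf.contDiffAt hn).differentiableAt (by norm_num)
    have : f₁ t = deriv f t := by rw [hf₁def]; exact derivWithin_of_mem_nhds hn
    rw [this]
    exact hdiff.hasDerivAt
  have hdi : ContDiffOn ℝ 3 (deriv f) (interior I) :=
    (hf.mono interior_subset).deriv_of_isOpen isOpen_interior (by norm_num)
  have hgderiv : ∀ t ∈ interior I, HasDerivAt f₁ (g t) t := by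
    intro t ht
    have hdiff : DifferentiableAt ℝ (deriv f) t :=
      (hdi.contDiffAt (isOpen_interior.mem_nhds ht)).differentiableAt (by norm_num)
    exact hdiff.hasDerivAt.congr_of_eventuallyEq (hlocal t ht)
  have hgf2 : ∀ t ∈ interior I, g t = f₂ t := by
    intro t ht
    have hn : I ∈ nhds t := mem_interior_iff_mem_nhds.1 ht
    rw [hf₂def, derivWithin_of_mem_nhds hn, hgdef]
    exact ((hlocal t ht).deriv_eq).symm
  -- subset facts
  have hsub1 : Icc a m ⊆ I := fun x hx => hIcc ⟨hx.1, le_trans hx.2 hmb.le⟩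
  have hsub2 : Icc m b ⊆ I := fun x hx => hIcc ⟨le_trans ham.le hx.1, hx.2⟩
  have hIoo1 : Ioc a m ⊆ interior I := fun x hx => hIoo ⟨hx.1, lt_of_le_of_lt hx.2 hmb⟩
  have hIoo2 : Ico m b ⊆ interior I := fun x hx => hIoo ⟨lt_of_lt_of_le ham hx.1, hx.2⟩
  -- integrability of f on both halves
  have hfint1 : IntervalIntegrable f volume a m := by
    apply ContinuousOn.intervalIntegrable
    rw [uIcc_of_le ham.le]; exact hcf.mono hsub1
  have hfint2 : IntervalIntegrable f volume m b := by
    apply ContinuousOn.intervalIntegrable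
    rw [uIcc_of_le hmb.le]; exact hcf.mono hsub2
  -- integrability of the kernel integrands
  have hKg1 : IntervalIntegrable (fun t => (t - a) * (m - t) * g t) volume a m := by
    have hc : ContinuousOn (fun t => (t - a) * (m - t) * f₂ t) (uIcc a m) := by
      rw [uIcc_of_le ham.le]
      exact (((continuousOn_id.sub continuousOn_const).mul
        (continuousOn_const.sub continuousOn_id))).mul (hcf2.mono hsub1)
    refine hc.intervalIntegrable.congr_ae ?_
    rw [uIoc_of_le ham.le]
    filter_upwards [ae_restrict_mem measurableSet_Ioc] with x hx
    rw [hgf2 x (hIoo1 hx)]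
  have hne_b : ∀ᵐ x ∂(volume.restrict (Ioc m b)), x ≠ b := by
    refine MeasureTheory.ae_iff.2 ?_
    simp only [not_not, setOf_eq_eq_singleton]
    rw [Measure.restrict_apply (measurableSet_singleton b)]
    exact measure_mono_null inter_subset_left (measure_singleton b)
  have hKg2 : IntervalIntegrable (fun t => (b - t) * (t - m) * g t) volume m b := by
    have hc : ContinuousOn (fun t => (b - t) * (t - m) * f₂ t) (uIcc m b) := by
      rw [uIcc_of_le hmb.le]
      exact (((continuousOn_const.sub continuousOn_id).mul
        (continuousOn_id.sub continuousOn_const))).mul (hcf2.mono hsub2)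
    refine hc.intervalIntegrable.congr_ae ?_
    rw [uIoc_of_le hmb.le]
    filter_upwards [ae_restrict_mem measurableSet_Ioc, hne_b] with x hx hxb
    rw [hgf2 x (hIoo2 ⟨hx.1.le, lt_of_le_of_ne hx.2 hxb⟩)]
  -- FTC on [a, m]
  have hFTC1 : ∫ t in a..m, ((t - a) * (m - t) * g t + 2 * f t)
      = (m - a) * (f m + f a) := by
    have hint1 : IntervalIntegrable (fun t => (t - a) * (m - t) * g t + 2 * f t) volume a m := by
      have h2f : IntervalIntegrable (fun t => 2 * f t) volume a m := by
        simpa using hfint1.const_mul 2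
      exact hKg1.add h2f
    have hcont1 : ContinuousOn
        (fun t => (t - a) * (m - t) * f₁ t - (a + m - 2 * t) * f t) (Icc a m) := by
      refine ContinuousOn.sub (ContinuousOn.mul ?_ (hcf1.mono hsub1))
        (ContinuousOn.mul ?_ (hcf.mono hsub1))
      · exact (continuousOn_id.sub continuousOn_const).mul
          (continuousOn_const.sub continuousOn_id)
      · exact continuousOn_const.sub (continuousOn_const.mul continuousOn_id)
    have hder : ∀ t ∈ Ioo a m, HasDerivWithinAt
        (fun t => (t - a) * (m - t) * f₁ t - (a + m - 2 * t) * f t)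
        ((t - a) * (m - t) * g t + 2 * f t) (Ioi t) t := by
      intro t ht
      have htI : t ∈ interior I := hIoo ⟨ht.1, lt_trans ht.2 hmb⟩
      have h1 := hderiv1 t htI
      have h2 := hgderiv t htI
      have hK : HasDerivAt (fun u => (u - a) * (m - u)) ((m - t) + (t - a) * (-1)) t := by
        have := ((hasDerivAt_id t).sub_const a).mul
          ((hasDerivAt_const t m).sub (hasDerivAt_id t))
        exact this.congr_deriv (by simp only [Pi.sub_apply, id]; ring)
      have hK' : HasDerivAt (fun u : ℝ => a + m - 2 * u) (-2) t := by
        have := (hasDerivAt_const t (a + m)).sub ((hasDerivAt_id t).const_mul 2)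
        exact this.congr_deriv (by ring)
      have hfull := (hK.mul h2).sub (hK'.mul h1)
      have : HasDerivAt (fun t => (t - a) * (m - t) * f₁ t - (a + m - 2 * t) * f t)
          ((t - a) * (m - t) * g t + 2 * f t) t := by
        refine hfull.congr_deriv ?_
        ring
      exact this.hasDerivWithinAt
    have := intervalIntegral.integral_eq_sub_of_hasDeriv_right_of_le ham.le hcont1 hder hint1
    rw [this]
    ring
  -- FTC on [m, b]
  have hFTC2 : ∫ t in m..b, ((b - t) * (t - m) * g t + 2 * f t)
      = (b - m) * (f b + f m) := by
    have hint2 : IntervalIntegrable (fun t => (b - t) * (t - m) * g t + 2 * f t) volume m b := by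
      have h2f : IntervalIntegrable (fun t => 2 * f t) volume m b := by
        simpa using hfint2.const_mul 2
      exact hKg2.add h2f
    have hcont2 : ContinuousOn
        (fun t => (b - t) * (t - m) * f₁ t - (b + m - 2 * t) * f t) (Icc m b) := by
      refine ContinuousOn.sub (ContinuousOn.mul ?_ (hcf1.mono hsub2))
        (ContinuousOn.mul ?_ (hcf.mono hsub2))
      · exact (continuousOn_const.sub continuousOn_id).mul
          (continuousOn_id.sub continuousOn_const)
      · exact continuousOn_const.sub (continuousOn_const.mul continuousOn_id)
    have hder : ∀ t ∈ Ioo m b, HasDerivWithinAt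
        (fun t => (b - t) * (t - m) * f₁ t - (b + m - 2 * t) * f t)
        ((b - t) * (t - m) * g t + 2 * f t) (Ioi t) t := by
      intro t ht
      have htI : t ∈ interior I := hIoo ⟨lt_trans ham ht.1, ht.2⟩
      have h1 := hderiv1 t htI
      have h2 := hgderiv t htI
      have hK : HasDerivAt (fun u => (b - u) * (u - m)) ((-1) * (t - m) + (b - t)) t := by
        have := ((hasDerivAt_const t b).sub (hasDerivAt_id t)).mul
          ((hasDerivAt_id t).sub_const m)
        exact this.congr_deriv (by simp only [Pi.sub_apply, id]; ring)
      have hK' : HasDerivAt (fun u : ℝ => b + m - 2 * u) (-2) t := by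
        have := (hasDerivAt_const t (b + m)).sub ((hasDerivAt_id t).const_mul 2)
        exact this.congr_deriv (by ring)
      have hfull := (hK.mul h2).sub (hK'.mul h1)
      have : HasDerivAt (fun t => (b - t) * (t - m) * f₁ t - (b + m - 2 * t) * f t)
          ((b - t) * (t - m) * g t + 2 * f t) t := by
        refine hfull.congr_deriv ?_
        ring
      exact this.hasDerivWithinAt
    have := intervalIntegral.integral_eq_sub_of_hasDeriv_right_of_le hmb.le hcont2 hder hint2
    rw [this]
    ring
  -- identities for the kernel integrals
  have id1 : ∫ t in a..m, (t - a) * (m - t) * g t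
      = (m - a) * (f m + f a) - 2 * ∫ t in a..m, f t := by
    have h2f : IntervalIntegrable (fun t => 2 * f t) volume a m := by
      simpa using hfint1.const_mul 2
    have := hFTC1
    rw [intervalIntegral.integral_add hKg1 h2f, intervalIntegral.integral_const_mul] at this
    linarith
  have id2 : ∫ t in m..b, (b - t) * (t - m) * g t
      = (b - m) * (f b + f m) - 2 * ∫ t in m..b, f t := by
    have h2f : IntervalIntegrable (fun t => 2 * f t) volume m b := by
      simpa using hfint2.const_mul 2
    have := hFTC2
    rw [intervalIntegral.integral_add hKg2 h2f, intervalIntegral.integral_const_mul] at this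
    linarith
  have isplit : ∫ t in a..b, f t = (∫ t in a..m, f t) + ∫ t in m..b, f t :=
    (intervalIntegral.integral_add_adjacent_intervals hfint1 hfint2).symm
  -- the main representation
  have key : (1 / 4) * (f a + f b) + (1 / 2) * f m - (1 / (b - a)) * ∫ t in a..b, f t
      = ((∫ t in a..m, (t - a) * (m - t) * g t) + ∫ t in m..b, (b - t) * (t - m) * g t)
        / (2 * (b - a)) := by
    have hma : m - a = (b - a) / 2 := by rw [hm]; ring
    have hbm : b - m = (b - a) / 2 := by rw [hm]; ring
    rw [id1, id2, isplit]
    field_simp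
    rw [hm]; ring
  have hbne : b - a ≠ 0 := ne_of_gt hd
  -- chord lower bound for the concave g
  have hchord : ∀ t ∈ Icc a b, ((b - t) * g a + (t - a) * g b) / (b - a) ≤ g t := by
    intro t ht
    have hp : 0 ≤ (b - t) / (b - a) := div_nonneg (by linarith [ht.2]) hd.le
    have hq : 0 ≤ (t - a) / (b - a) := div_nonneg (by linarith [ht.1]) hd.le
    have hpq : (b - t) / (b - a) + (t - a) / (b - a) = 1 := by field_simp; ring
    have h2 := hconc''.2 ha hb hp hq hpq
    have h3 : ((b - t) / (b - a)) • a + ((t - a) / (b - a)) • b = t := by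
      simp only [smul_eq_mul]; field_simp; ring
    rw [h3] at h2
    simp only [smul_eq_mul] at h2
    calc ((b - t) * g a + (t - a) * g b) / (b - a)
        = (b - t) / (b - a) * g a + (t - a) / (b - a) * g b := by ring
      _ ≤ g t := h2
  have hcL : Continuous fun t : ℝ => ((b - t) * g a + (t - a) * g b) / (b - a) :=
    (((continuous_const.sub continuous_id).mul continuous_const).add
      ((continuous_id.sub continuous_const).mul continuous_const)).div_const (b - a)
  have hK1c : Continuous fun t : ℝ => (t - a) * (m - t) :=
    (continuous_id.sub continuous_const).mul (continuous_const.sub continuous_id)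
  have hK2c : Continuous fun t : ℝ => (b - t) * (t - m) :=
    (continuous_const.sub continuous_id).mul (continuous_id.sub continuous_const)
  have mono1 : ∫ t in a..m, (t - a) * (m - t) * (((b - t) * g a + (t - a) * g b) / (b - a))
      ≤ ∫ t in a..m, (t - a) * (m - t) * g t := by
    refine intervalIntegral.integral_mono_on ham.le ((hK1c.mul hcL).intervalIntegrable a m)
      hKg1 (fun t ht => ?_)
    have hK : 0 ≤ (t - a) * (m - t) :=
      mul_nonneg (by linarith [ht.1]) (by linarith [ht.2])
    exact mul_le_mul_of_nonneg_left (hchord t ⟨ht.1, ht.2.trans hmb.le⟩) hK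
  have mono2 : ∫ t in m..b, (b - t) * (t - m) * (((b - t) * g a + (t - a) * g b) / (b - a))
      ≤ ∫ t in m..b, (b - t) * (t - m) * g t := by
    refine intervalIntegral.integral_mono_on hmb.le ((hK2c.mul hcL).intervalIntegrable m b)
      hKg2 (fun t ht => ?_)
    have hK : 0 ≤ (b - t) * (t - m) :=
      mul_nonneg (by linarith [ht.2]) (by linarith [ht.1])
    exact mul_le_mul_of_nonneg_left (hchord t ⟨ham.le.trans ht.1, ht.2⟩) hK
  have val1 : ∫ t in a..m, (t - a) * (m - t) * (((b - t) * g a + (t - a) * g b) / (b - a))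
      = (b - a) ^ 3 * (3 * g a + g b) / 192 := by
    have heq : EqOn
        (fun t : ℝ => (t - a) * (m - t) * (((b - t) * g a + (t - a) * g b) / (b - a)))
        (fun t : ℝ =>
          ((-(a * b ^ 2 * g a) / 2 + a ^ 2 * b * g b / 2 - a ^ 2 * b * g a / 2
              + a ^ 3 * g b / 2) / (b - a))
          + ((b ^ 2 * g a / 2 - a * b * g b + 2 * a * b * g a - 2 * a ^ 2 * g b
              + a ^ 2 * g a / 2) / (b - a)) * t
          + ((b * g b / 2 - 3 * b * g a / 2 + 5 * a * g b / 2 - 3 * a * g a / 2) / (b - a)) * t ^ 2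
          + ((g a - g b) / (b - a)) * t ^ 3) (uIcc a m) := by
      intro t _
      simp only [hm]
      field_simp
      ring
    rw [intervalIntegral.integral_congr heq, int_cubic]
    simp only [hm]
    field_simp
    ring
  have val2 : ∫ t in m..b, (b - t) * (t - m) * (((b - t) * g a + (t - a) * g b) / (b - a))
      = (b - a) ^ 3 * (g a + 3 * g b) / 192 := by
    have heq : EqOn
        (fun t : ℝ => (b - t) * (t - m) * (((b - t) * g a + (t - a) * g b) / (b - a)))
        (fun t : ℝ =>
          ((-(b ^ 3 * g a) / 2 + a * b ^ 2 * g b / 2 - a * b ^ 2 * g a / 2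
              + a ^ 2 * b * g b / 2) / (b - a))
          + ((-(b ^ 2 * g b) / 2 + 2 * b ^ 2 * g a - 2 * a * b * g b + a * b * g a
              - a ^ 2 * g b / 2) / (b - a)) * t
          + ((3 * b * g b / 2 - 5 * b * g a / 2 + 3 * a * g b / 2 - a * g a / 2) / (b - a)) * t ^ 2
          + ((g a - g b) / (b - a)) * t ^ 3) (uIcc m b) := by
      intro t _
      simp only [hm]
      field_simp
      ring
    rw [intervalIntegral.integral_congr heq, int_cubic]
    simp only [hm]
    field_simp
    ring
  have hlo : (b - a) ^ 3 / 48 * (g a + g b)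
      ≤ (∫ t in a..m, (t - a) * (m - t) * g t) + ∫ t in m..b, (b - t) * (t - m) * g t := by
    linarith [mono1, mono2, val1, val2]
  -- upper bound via reflection and midpoint concavity
  have h1 := intervalIntegral.integral_comp_sub_left (a := a) (b := m)
    (fun x => (b - x) * (x - m) * g x) (a + b)
  rw [show a + b - m = m from by rw [hm]; ring, show a + b - a = b from by ring] at h1
  have hflip : ∫ t in m..b, (b - t) * (t - m) * g t
      = ∫ s in a..m, (s - a) * (m - s) * g (a + b - s) := by
    refine h1.symm.trans (intervalIntegral.integral_congr fun t _ => ?_)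
    simp only [hm]
    ring_nf
  have hKgflip : IntervalIntegrable (fun s => (s - a) * (m - s) * g (a + b - s)) volume a m := by
    have hmaps : MapsTo (fun s : ℝ => a + b - s) (Icc a m) I := by
      intro x hx
      dsimp only
      exact hsub2 ⟨by linarith [hx.2], by linarith [hx.1]⟩
    have hc : ContinuousOn (fun s => (s - a) * (m - s) * f₂ (a + b - s)) (uIcc a m) := by
      rw [uIcc_of_le ham.le]
      exact hK1c.continuousOn.mul
        (hcf2.comp ((continuous_const.sub continuous_id).continuousOn) hmaps)
    refine hc.intervalIntegrable.congr_ae ?_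
    rw [uIoc_of_le ham.le]
    filter_upwards [ae_restrict_mem measurableSet_Ioc] with x hx
    rw [hgf2 (a + b - x) (hIoo2 ⟨by linarith [hx.2], by linarith [hx.1]⟩)]
  have hsumsplit : ∫ s in a..m,
        ((s - a) * (m - s) * g s + (s - a) * (m - s) * g (a + b - s))
      = (∫ t in a..m, (t - a) * (m - t) * g t)
        + ∫ s in a..m, (s - a) * (m - s) * g (a + b - s) :=
    intervalIntegral.integral_add hKg1 hKgflip
  have hmidpt : ∀ s ∈ Icc a m, (s - a) * (m - s) * g s + (s - a) * (m - s) * g (a + b - s)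
      ≤ (s - a) * (m - s) * (2 * g m) := by
    intro s hs
    have hs1 : s ∈ I := hsub1 hs
    have hs2 : (a + b - s) ∈ I := hsub2 ⟨by linarith [hs.2], by linarith [hs.1]⟩
    have hw := hconc''.2 hs1 hs2 (by norm_num : (0:ℝ) ≤ 1/2) (by norm_num : (0:ℝ) ≤ 1/2)
      (by norm_num : (1:ℝ)/2 + 1/2 = 1)
    have h3 : (1/2 : ℝ) • s + (1/2 : ℝ) • (a + b - s) = m := by
      simp only [smul_eq_mul]; rw [hm]; ring
    rw [h3] at hw
    simp only [smul_eq_mul] at hw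
    have hgsum : g s + g (a + b - s) ≤ 2 * g m := by linarith
    have hK : 0 ≤ (s - a) * (m - s) :=
      mul_nonneg (by linarith [hs.1]) (by linarith [hs.2])
    calc (s - a) * (m - s) * g s + (s - a) * (m - s) * g (a + b - s)
        = (s - a) * (m - s) * (g s + g (a + b - s)) := by ring
      _ ≤ (s - a) * (m - s) * (2 * g m) := mul_le_mul_of_nonneg_left hgsum hK
  have hintU : IntervalIntegrable (fun s => (s - a) * (m - s) * (2 * g m)) volume a m :=
    (hK1c.mul continuous_const).intervalIntegrable a m
  have monoU : ∫ s in a..m, ((s - a) * (m - s) * g s + (s - a) * (m - s) * g (a + b - s))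
      ≤ ∫ s in a..m, (s - a) * (m - s) * (2 * g m) :=
    intervalIntegral.integral_mono_on ham.le (hKg1.add hKgflip) hintU hmidpt
  have valU : ∫ s in a..m, (s - a) * (m - s) * (2 * g m) = (b - a) ^ 3 * g m / 24 := by
    have heq : EqOn (fun s : ℝ => (s - a) * (m - s) * (2 * g m))
        (fun s : ℝ => (-(a * b) / 2 - a ^ 2 / 2) * (2 * g m)
          + ((b / 2 + 3 * a / 2) * (2 * g m)) * s + (-(2 * g m)) * s ^ 2
          + 0 * s ^ 3) (uIcc a m) := by
      intro s _
      simp only [hm]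
      ring
    rw [intervalIntegral.integral_congr heq, int_cubic]
    simp only [hm]
    ring
  have hup : (∫ t in a..m, (t - a) * (m - t) * g t) + (∫ t in m..b, (b - t) * (t - m) * g t)
      ≤ (b - a) ^ 3 * g m / 24 := by
    rw [hflip]
    linarith [monoU, valU, hsumsplit]
  constructor
  · rw [key, le_div_iff₀ (by linarith : (0:ℝ) < 2 * (b - a))]
    calc (b - a) ^ 2 / 96 * (g a + g b) * (2 * (b - a))
        = (b - a) ^ 3 / 48 * (g a + g b) := by ring
      _ ≤ _ := hlo
  · rw [key, div_le_iff₀ (by linarith : (0:ℝ) < 2 * (b - a))]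
    calc (∫ t in a..m, (t - a) * (m - t) * g t) + ∫ t in m..b, (b - t) * (t - m) * g t
        ≤ (b - a) ^ 3 * g m / 24 := hup
      _ = (b - a) ^ 2 / 48 * g m * (2 * (b - a)) := by ring
end

section
/- Let f : ℝ → ℝ be four times continuously differentiable on an interval I and let a, b ∈ I with a < b. Then (1/4)(f(a)+f(b)) + (1/2) f((a+b)/2) − (1/(b-a)) ∫_a^b f(t) dt = ((b-a)^2/16) ∫_0^1 t(1−t) [ f''(a·t/2 + b(1−t/2)) + f''(b·t/2 + a(1−t/2)) ] dt. -/
open MeasureTheory intervalIntegral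

lemma key_aux (f g1 g2 : ℝ → ℝ) (u v : ℝ) (hne : u ≠ v)
    (hfc : ContinuousOn f (Set.uIcc u v))
    (hg1c : ContinuousOn g1 (Set.uIcc u v))
    (hg2c : ContinuousOn g2 (Set.uIcc u v))
    (hd1 : ∀ x ∈ Set.Ioo (min u v) (max u v), HasDerivAt f (g1 x) x)
    (hd2 : ∀ x ∈ Set.Ioo (min u v) (max u v), HasDerivAt g1 (g2 x) x) :
    ∫ t in (0:ℝ)..1, t * (1 - t) * g2 (u + (v - u) * t)
      = (1 / (v - u) ^ 2) * (f u + f v) - (2 / (v - u) ^ 3) * ∫ x in u..v, f x := by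
  set c := v - u with hcdef
  have hc : c ≠ 0 := sub_ne_zero.mpr (Ne.symm hne)
  have haff : Continuous (fun t : ℝ => u + c * t) := by continuity
  have hmem : ∀ t ∈ Set.Icc (0:ℝ) 1, u + c * t ∈ Set.uIcc u v := by
    intro t ht
    rcases le_total u v with h | h
    · rw [Set.uIcc_of_le h]
      constructor <;> nlinarith [ht.1, ht.2]
    · rw [Set.uIcc_of_ge h]
      constructor <;> nlinarith [ht.1, ht.2]
  have hmem' : ∀ t ∈ Set.Ioo (0:ℝ) 1, u + c * t ∈ Set.Ioo (min u v) (max u v) := by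
    intro t ht
    rcases lt_or_gt_of_ne hne with h | h
    · rw [min_eq_left h.le, max_eq_right h.le]
      constructor <;> nlinarith [ht.1, ht.2]
    · rw [min_eq_right h.le, max_eq_left h.le]
      constructor <;> nlinarith [ht.1, ht.2]
  have hIooSub : Set.Ioo (min u v) (max u v) ⊆ Set.uIcc u v := Set.Ioo_subset_Icc_self
  have hfI : IntegrableOn f (Set.uIcc u v) := hfc.integrableOn_compact isCompact_uIcc
  set F : ℝ → ℝ := fun t =>
    (1/c) * ((t * (1 - t)) * g1 (u + c * t)) - (1/c^2) * ((1 - 2*t) * f (u + c * t))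
      - (2/c^3) * ∫ x in u..(u + c * t), f x with hF
  have hmapsTo : Set.MapsTo (fun t : ℝ => u + c * t) (Set.Icc 0 1) (Set.uIcc u v) :=
    fun t ht => hmem t ht
  have hFcont : ContinuousOn F (Set.Icc 0 1) := by
    apply ContinuousOn.sub
    apply ContinuousOn.sub
    · exact continuousOn_const.mul
        (((continuousOn_id.mul (continuousOn_const.sub continuousOn_id))).mul
          (hg1c.comp haff.continuousOn hmapsTo))
    · exact continuousOn_const.mul
        ((continuousOn_const.sub (continuousOn_const.mul continuousOn_id)).mul
          (hfc.comp haff.continuousOn hmapsTo))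
    · exact continuousOn_const.mul
        ((continuousOn_primitive_interval hfI).comp haff.continuousOn hmapsTo)
  have hFderiv : ∀ t ∈ Set.Ioo (0:ℝ) 1,
      HasDerivAt F (t * (1 - t) * g2 (u + c * t)) t := by
    intro t ht
    have hx : u + c * t ∈ Set.Ioo (min u v) (max u v) := hmem' t ht
    have hnx : Set.uIcc u v ∈ nhds (u + c * t) :=
      Filter.mem_of_superset (isOpen_Ioo.mem_nhds hx) hIooSub
    have h1 : HasDerivAt (fun s : ℝ => u + c * s) c t := by
      simpa using ((hasDerivAt_id t).const_mul c).const_add u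
    have h2 : HasDerivAt (fun s => g1 (u + c * s)) (g2 (u + c * t) * c) t :=
      (hd2 _ hx).comp t h1
    have h3 : HasDerivAt (fun s => f (u + c * s)) (g1 (u + c * t) * c) t :=
      (hd1 _ hx).comp t h1
    have h4 : HasDerivAt (fun s : ℝ => s * (1 - s)) (1 - 2*t) t := by
      have := (hasDerivAt_id t).mul ((hasDerivAt_const t (1:ℝ)).sub (hasDerivAt_id t))
      refine this.congr_deriv ?_
      simp [id]
      ring
    have h5 : HasDerivAt (fun s : ℝ => ∫ x in u..(u + c * s), f x) (f (u + c * t) * c) t := by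
      have hint : IntervalIntegrable f volume u (u + c * t) := by
        apply (hfc.mono (Set.uIcc_subset_uIcc Set.left_mem_uIcc (hIooSub hx))).intervalIntegrable
      have hca : ContinuousAt f (u + c * t) := hfc.continuousAt hnx
      have hmeas : StronglyMeasurableAtFilter f (nhds (u + c * t)) volume :=
        ContinuousOn.stronglyMeasurableAtFilter isOpen_Ioo (hfc.mono hIooSub) _ hx
      exact (intervalIntegral.integral_hasDerivAt_right hint hmeas hca).comp t h1
    have := (((h4.mul h2).const_mul (1/c)).sub
      (((((hasDerivAt_const t (1:ℝ)).sub ((hasDerivAt_id t).const_mul 2)).mul h3).const_mul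
        (1/c^2)))).sub (h5.const_mul (2/c^3))
    refine this.congr_deriv ?_
    simp only [Pi.sub_apply, id]
    field_simp
    ring
  have hIntg : IntervalIntegrable (fun t => t * (1 - t) * g2 (u + c * t)) volume 0 1 := by
    apply ContinuousOn.intervalIntegrable
    rw [Set.uIcc_of_le (zero_le_one)]
    exact (continuousOn_id.mul (continuousOn_const.sub continuousOn_id)).mul
      (hg2c.comp haff.continuousOn hmapsTo)
  have hFTC := intervalIntegral.integral_eq_sub_of_hasDerivAt_of_le zero_le_one hFcont
    hFderiv hIntg
  rw [hFTC, hF]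
  have e1 : u + c * 1 = v := by rw [hcdef]; ring
  have e0 : u + c * 0 = u := by ring
  beta_reduce
  rw [e1, e0]
  simp only [intervalIntegral.integral_same]
  field_simp
  ring

set_option maxHeartbeats 1000000 in
/-- **Lemma 2.** If `f ∈ C⁴(I)` and `a, b ∈ I` with `a < b`, then
`N(1/4,1/2) - (1/(b-a)) ∫_a^b f
  = ((b-a)²/16) ∫_0^1 t(1-t)[f''(a t/2 + b(1-t/2)) + f''(b t/2 + a(1-t/2))] dt`. -/
theorem stmt_4 (f : ℝ → ℝ) (I : Set ℝ) (hI : Convex ℝ I)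
    (hf : ContDiffOn ℝ 4 f I)
    (a b : ℝ) (ha : a ∈ I) (hb : b ∈ I) (hab : a < b) :
    (1 / 4) * (f a + f b) + (1 / 2) * f ((a + b) / 2)
      - (1 / (b - a)) * ∫ t in a..b, f t =
    (b - a) ^ 2 / 16 * ∫ t in (0:ℝ)..1, t * (1 - t) *
      (deriv (deriv f) (a * (t / 2) + b * (1 - t / 2))
        + deriv (deriv f) (b * (t / 2) + a * (1 - t / 2))) := by
  have hba : b - a > 0 := by linarith
  have hsub : Set.Icc a b ⊆ I := hI.ordConnected.out ha hb
  have hIoo : Set.Ioo a b ⊆ interior I :=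
    interior_maximal (Set.Ioo_subset_Icc_self.trans hsub) isOpen_Ioo
  set m : ℝ := (a + b) / 2 with hm
  have hm1 : a < m := by rw [hm]; linarith
  have hm2 : m < b := by rw [hm]; linarith
  have hUD : UniqueDiffOn ℝ I := uniqueDiffOn_convex hI ⟨m, hIoo ⟨hm1, hm2⟩⟩
  set g1 : ℝ → ℝ := derivWithin f I with hg1
  set g2 : ℝ → ℝ := derivWithin g1 I with hg2
  have hfc : ContinuousOn f I := hf.continuousOn
  have hg1cd : ContDiffOn ℝ 3 g1 I := hf.derivWithin hUD (by norm_num)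
  have hg1c : ContinuousOn g1 I := hg1cd.continuousOn
  have hg2c : ContinuousOn g2 I := hg1cd.continuousOn_derivWithin hUD (by norm_num)
  have hnhds : ∀ x ∈ Set.Ioo a b, I ∈ nhds x :=
    fun x hx => mem_interior_iff_mem_nhds.mp (hIoo hx)
  have hd1 : ∀ x ∈ Set.Ioo a b, HasDerivAt f (g1 x) x := by
    intro x hx
    have hnx := hnhds x hx
    have hdiff : DifferentiableAt ℝ f x :=
      (hf.contDiffAt hnx).differentiableAt (by norm_num)
    have := hdiff.hasDerivAt
    rwa [hg1, derivWithin_of_mem_nhds hnx]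
  have hd2 : ∀ x ∈ Set.Ioo a b, HasDerivAt g1 (g2 x) x := by
    intro x hx
    have hnx := hnhds x hx
    have hdiff : DifferentiableAt ℝ g1 x :=
      (hg1cd.contDiffAt hnx).differentiableAt (by norm_num)
    have := hdiff.hasDerivAt
    rwa [hg2, derivWithin_of_mem_nhds hnx]
  have hdd : ∀ x ∈ Set.Ioo a b, deriv (deriv f) x = g2 x := by
    intro x hx
    have hnx := hnhds x hx
    have heq : deriv f =ᶠ[nhds x] g1 := by
      filter_upwards [isOpen_Ioo.mem_nhds hx] with y hy
      rw [hg1, derivWithin_of_mem_nhds (hnhds y hy)]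
    rw [heq.deriv_eq, hg2, derivWithin_of_mem_nhds hnx]
  -- membership of the two curves
  have hxmem : ∀ t ∈ Set.Icc (0:ℝ) 1, a * (t / 2) + b * (1 - t / 2) ∈ Set.Icc a b := by
    intro t ht
    constructor <;> nlinarith [ht.1, ht.2]
  have hymem : ∀ t ∈ Set.Icc (0:ℝ) 1, b * (t / 2) + a * (1 - t / 2) ∈ Set.Icc a b := by
    intro t ht
    constructor <;> nlinarith [ht.1, ht.2]
  have hxmem' : ∀ t ∈ Set.Ioc (0:ℝ) 1, a * (t / 2) + b * (1 - t / 2) ∈ Set.Ioo a b := by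
    intro t ht
    constructor <;> nlinarith [ht.1, ht.2]
  have hymem' : ∀ t ∈ Set.Ioc (0:ℝ) 1, b * (t / 2) + a * (1 - t / 2) ∈ Set.Ioo a b := by
    intro t ht
    constructor <;> nlinarith [ht.1, ht.2]
  -- Step A: replace deriv (deriv f) by g2 a.e.
  have stepA : (∫ t in (0:ℝ)..1, t * (1 - t) *
      (deriv (deriv f) (a * (t / 2) + b * (1 - t / 2))
        + deriv (deriv f) (b * (t / 2) + a * (1 - t / 2))))
      = ∫ t in (0:ℝ)..1, t * (1 - t) *
      (g2 (a * (t / 2) + b * (1 - t / 2)) + g2 (b * (t / 2) + a * (1 - t / 2))) := by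
    apply intervalIntegral.integral_congr_ae
    apply MeasureTheory.ae_of_all
    intro t ht
    rw [Set.uIoc_of_le zero_le_one] at ht
    rw [hdd _ (hxmem' t ht), hdd _ (hymem' t ht)]
  rw [stepA]
  -- continuity of composed integrands
  have hcx : Continuous (fun t : ℝ => a * (t / 2) + b * (1 - t / 2)) := by fun_prop
  have hcy : Continuous (fun t : ℝ => b * (t / 2) + a * (1 - t / 2)) := by fun_prop
  have hintX : IntervalIntegrable
      (fun t => t * (1 - t) * g2 (a * (t / 2) + b * (1 - t / 2))) volume 0 1 := by
    apply ContinuousOn.intervalIntegrable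
    rw [Set.uIcc_of_le zero_le_one]
    exact (continuousOn_id.mul (continuousOn_const.sub continuousOn_id)).mul
      ((hg2c.mono hsub).comp hcx.continuousOn (fun t ht => hxmem t ht))
  have hintY : IntervalIntegrable
      (fun t => t * (1 - t) * g2 (b * (t / 2) + a * (1 - t / 2))) volume 0 1 := by
    apply ContinuousOn.intervalIntegrable
    rw [Set.uIcc_of_le zero_le_one]
    exact (continuousOn_id.mul (continuousOn_const.sub continuousOn_id)).mul
      ((hg2c.mono hsub).comp hcy.continuousOn (fun t ht => hymem t ht))
  have stepB : (∫ t in (0:ℝ)..1, t * (1 - t) *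
      (g2 (a * (t / 2) + b * (1 - t / 2)) + g2 (b * (t / 2) + a * (1 - t / 2))))
      = (∫ t in (0:ℝ)..1, t * (1 - t) * g2 (a * (t / 2) + b * (1 - t / 2)))
        + ∫ t in (0:ℝ)..1, t * (1 - t) * g2 (b * (t / 2) + a * (1 - t / 2)) := by
    rw [← intervalIntegral.integral_add hintX hintY]
    apply intervalIntegral.integral_congr
    intro t _
    ring
  rw [stepB]
  -- apply the key lemma for the pair (b, m)
  have huIcc1 : Set.uIcc b m ⊆ I := by
    rw [Set.uIcc_of_ge hm2.le]
    exact (Set.Icc_subset_Icc hm1.le le_rfl).trans hsub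
  have huIcc2 : Set.uIcc a m ⊆ I := by
    rw [Set.uIcc_of_le hm1.le]
    exact (Set.Icc_subset_Icc le_rfl hm2.le).trans hsub
  have hK1 := key_aux f g1 g2 b m hm2.ne' (hfc.mono huIcc1) (hg1c.mono huIcc1)
    (hg2c.mono huIcc1)
    (fun x hx => hd1 x (by
      rw [min_eq_right hm2.le, max_eq_left hm2.le] at hx
      exact ⟨lt_trans hm1 hx.1, hx.2⟩))
    (fun x hx => hd2 x (by
      rw [min_eq_right hm2.le, max_eq_left hm2.le] at hx
      exact ⟨lt_trans hm1 hx.1, hx.2⟩))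
  have hK2 := key_aux f g1 g2 a m hm1.ne (hfc.mono huIcc2) (hg1c.mono huIcc2)
    (hg2c.mono huIcc2)
    (fun x hx => hd1 x (by
      rw [min_eq_left hm1.le, max_eq_right hm1.le] at hx
      exact ⟨hx.1, lt_trans hx.2 hm2⟩))
    (fun x hx => hd2 x (by
      rw [min_eq_left hm1.le, max_eq_right hm1.le] at hx
      exact ⟨hx.1, lt_trans hx.2 hm2⟩))
  have ex : (∫ t in (0:ℝ)..1, t * (1 - t) * g2 (a * (t / 2) + b * (1 - t / 2)))
      = ∫ t in (0:ℝ)..1, t * (1 - t) * g2 (b + (m - b) * t) := by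
    apply intervalIntegral.integral_congr
    intro t _
    beta_reduce
    have : a * (t / 2) + b * (1 - t / 2) = b + (m - b) * t := by rw [hm]; ring
    rw [this]
  have ey : (∫ t in (0:ℝ)..1, t * (1 - t) * g2 (b * (t / 2) + a * (1 - t / 2)))
      = ∫ t in (0:ℝ)..1, t * (1 - t) * g2 (a + (m - a) * t) := by
    apply intervalIntegral.integral_congr
    intro t _
    beta_reduce
    have : b * (t / 2) + a * (1 - t / 2) = a + (m - a) * t := by rw [hm]; ring
    rw [this]
  rw [ex, ey, hK1, hK2]
  -- combine integrals
  have hiam : IntervalIntegrable f volume a m :=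
    (hfc.mono huIcc2).intervalIntegrable
  have himb : IntervalIntegrable f volume m b := by
    apply ContinuousOn.intervalIntegrable
    apply hfc.mono
    rw [Set.uIcc_of_le hm2.le]
    exact (Set.Icc_subset_Icc hm1.le le_rfl).trans hsub
  have hsplit : (∫ x in a..m, f x) + ∫ x in m..b, f x = ∫ x in a..b, f x :=
    intervalIntegral.integral_add_adjacent_intervals hiam himb
  have hbm : (∫ x in b..m, f x) = - ∫ x in m..b, f x :=
    intervalIntegral.integral_symm m b
  rw [hbm, ← hsplit]
  have hmb : m - b = -((b - a) / 2) := by rw [hm]; ring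
  have hma : m - a = (b - a) / 2 := by rw [hm]; ring
  rw [hmb, hma]
  have hne : b - a ≠ 0 := ne_of_gt hba
  have e2 : (-((b - a) / 2)) ^ 2 = (b - a) ^ 2 / 4 := by ring
  have e3 : (-((b - a) / 2)) ^ 3 = -((b - a) ^ 3 / 8) := by ring
  have e2' : ((b - a) / 2) ^ 2 = (b - a) ^ 2 / 4 := by ring
  have e3' : ((b - a) / 2) ^ 3 = (b - a) ^ 3 / 8 := by ring
  rw [e2, e3, e2', e3']
  field_simp [hne]
  ring
end

section
/- Let f : ℝ → ℝ be four times continuously differentiable on an interval I with f'' convex on I. Then for all a, b ∈ I with a < b: (1/(b-a)) ∫_a^b f(t) dt ≤ (1/6)(f(a)+f(b)) + (2/3) f((a+b)/2). -/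
open MeasureTheory intervalIntegral

/-- **Theorem 3, first part.** If `f ∈ C⁴(I)` and `f''` is convex on the interval `I`,
then for `a, b ∈ I` with `a < b`,
`(1/(b-a)) ∫_a^b f ≤ (1/6)(f a + f b) + (2/3) f((a+b)/2)`. -/
theorem stmt_5 (f : ℝ → ℝ) (I : Set ℝ) (hI : Convex ℝ I)
    (hf : ContDiffOn ℝ 4 f I) (hconv'' : ConvexOn ℝ I (deriv (deriv f)))
    (a b : ℝ) (ha : a ∈ I) (hb : b ∈ I) (hab : a < b) :
    (1 / (b - a)) * ∫ t in a..b, f t ≤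
      (1 / 6) * (f a + f b) + (2 / 3) * f ((a + b) / 2) := by
  set m : ℝ := (a + b) / 2 with hm
  set r : ℝ := (b - a) / 2 with hr
  have hr0 : 0 < r := by rw [hr]; linarith
  have hma : m - r = a := by rw [hm, hr]; ring
  have hmb : m + r = b := by rw [hm, hr]; ring
  clear_value m r
  have hIcc : Set.Icc a b ⊆ I := hI.ordConnected.out ha hb
  have hfI : ContDiffOn ℝ 4 f (Set.Icc a b) := hf.mono hIcc
  have hu : UniqueDiffOn ℝ (Set.Icc a b) := uniqueDiffOn_Icc hab
  set F1 : ℝ → ℝ := derivWithin f (Set.Icc a b) with hF1def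
  have hF1 : ContDiffOn ℝ 3 F1 (Set.Icc a b) := hfI.derivWithin hu (by norm_num)
  set F2 : ℝ → ℝ := derivWithin F1 (Set.Icc a b) with hF2def
  have hF2 : ContDiffOn ℝ 2 F2 (Set.Icc a b) := hF1.derivWithin hu (by norm_num)
  have hfc : ContinuousOn f (Set.Icc a b) := hfI.continuousOn
  have hF1c : ContinuousOn F1 (Set.Icc a b) := hF1.continuousOn
  have hF2c : ContinuousOn F2 (Set.Icc a b) := hF2.continuousOn
  -- derivative facts at interior points
  have hdf : ∀ x ∈ Set.Ioo a b, HasDerivAt f (F1 x) x := by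
    intro x hx
    have hmem : Set.Icc a b ∈ nhds x := Icc_mem_nhds hx.1 hx.2
    have h1 : DifferentiableWithinAt ℝ f (Set.Icc a b) x :=
      (hfI.differentiableOn (by norm_num)) x (Set.mem_Icc.2 ⟨hx.1.le, hx.2.le⟩)
    have h2 : DifferentiableAt ℝ f x := h1.differentiableAt hmem
    have h3 : F1 x = deriv f x := derivWithin_of_mem_nhds hmem
    rw [h3]; exact h2.hasDerivAt
  have hdF1 : ∀ x ∈ Set.Ioo a b, HasDerivAt F1 (F2 x) x := by
    intro x hx
    have hmem : Set.Icc a b ∈ nhds x := Icc_mem_nhds hx.1 hx.2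
    have h1 : DifferentiableWithinAt ℝ F1 (Set.Icc a b) x :=
      (hF1.differentiableOn (by norm_num)) x (Set.mem_Icc.2 ⟨hx.1.le, hx.2.le⟩)
    have h2 : DifferentiableAt ℝ F1 x := h1.differentiableAt hmem
    have h3 : F2 x = deriv F1 x := derivWithin_of_mem_nhds hmem
    rw [h3]; exact h2.hasDerivAt
  -- F2 agrees with deriv (deriv f) on the interior
  have hGF2 : ∀ x ∈ Set.Ioo a b, deriv (deriv f) x = F2 x := by
    intro x hx
    have hmem : Set.Icc a b ∈ nhds x := Icc_mem_nhds hx.1 hx.2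
    have hev : F1 =ᶠ[nhds x] deriv f := by
      filter_upwards [Ioo_mem_nhds hx.1 hx.2] with y hy
      exact derivWithin_of_mem_nhds (Icc_mem_nhds hy.1 hy.2)
    have h1 : deriv (deriv f) x = deriv F1 x := (hev.deriv_eq).symm
    rw [h1, ← derivWithin_of_mem_nhds hmem]
  set G : ℝ → ℝ := deriv (deriv f) with hG
  -- monotonicity of χ u = G(m+u) + G(m-u) on [0, r]
  set χ : ℝ → ℝ := fun u => G (m + u) + G (m - u) with hχ
  have hmemI : ∀ u : ℝ, 0 ≤ u → u ≤ r → (m + u ∈ I ∧ m - u ∈ I) := by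
    intro u h0 h1
    constructor <;> apply hIcc <;> constructor <;> linarith
  have hmono : ∀ x y : ℝ, 0 ≤ x → x ≤ y → y ≤ r → χ x ≤ χ y := by
    intro x y h0x hxy hyr
    rcases eq_or_lt_of_le hxy with h | h
    · rw [h]
    have hy0 : 0 < y := lt_of_le_of_lt h0x h
    obtain ⟨hyI1, hyI2⟩ := hmemI y (by linarith) hyr
    have hl1 : (0:ℝ) ≤ (y - x) / (2 * y) := div_nonneg (by linarith) (by linarith)
    have hl2 : (0:ℝ) ≤ (y + x) / (2 * y) := div_nonneg (by linarith) (by linarith)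
    have hsum : (y - x) / (2 * y) + (y + x) / (2 * y) = 1 := by field_simp; ring
    have c1 := hconv''.2 hyI2 hyI1 hl1 hl2 hsum
    have c2 := hconv''.2 hyI2 hyI1 hl2 hl1 (by linarith [hsum])
    have e1 : ((y - x) / (2 * y)) • (m - y) + ((y + x) / (2 * y)) • (m + y) = m + x := by
      simp only [smul_eq_mul]; field_simp; ring
    have e2 : ((y + x) / (2 * y)) • (m - y) + ((y - x) / (2 * y)) • (m + y) = m - x := by
      simp only [smul_eq_mul]; field_simp; ring
    rw [e1] at c1; rw [e2] at c2
    simp only [hχ, smul_eq_mul]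
    calc G (m + x) + G (m - x) ≤
        ((y-x)/(2*y) * G (m-y) + (y+x)/(2*y) * G (m+y)) +
        ((y+x)/(2*y) * G (m-y) + (y-x)/(2*y) * G (m+y)) := by
          exact add_le_add c1 c2
      _ = G (m + y) + G (m - y) := by field_simp; ring
  -- auxiliary functions
  set Φ : ℝ → ℝ := fun u => f (m + u) + f (m - u) with hΦ
  set Φ1 : ℝ → ℝ := fun u => F1 (m + u) - F1 (m - u) with hΦ1
  set ψ : ℝ → ℝ := fun u => F2 (m + u) + F2 (m - u) with hψ
  set k : ℝ → ℝ := fun u => (r - u) * (r - 3 * u) / 6 with hk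
  -- maps
  have hmaps1 : ∀ u ∈ Set.Icc (0:ℝ) r, m + u ∈ Set.Icc a b := by
    intro u hu'; obtain ⟨h1, h2⟩ := hu'; constructor <;> linarith
  have hmaps2 : ∀ u ∈ Set.Icc (0:ℝ) r, m - u ∈ Set.Icc a b := by
    intro u hu'; obtain ⟨h1, h2⟩ := hu'; constructor <;> linarith
  have hcontplus : ContinuousOn (fun u : ℝ => m + u) (Set.Icc 0 r) :=
    (continuous_const.add continuous_id).continuousOn
  have hcontminus : ContinuousOn (fun u : ℝ => m - u) (Set.Icc 0 r) :=
    (continuous_const.sub continuous_id).continuousOn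
  have hΦc : ContinuousOn Φ (Set.Icc 0 r) :=
    (hfc.comp hcontplus hmaps1).add (hfc.comp hcontminus hmaps2)
  have hΦ1c : ContinuousOn Φ1 (Set.Icc 0 r) :=
    (hF1c.comp hcontplus hmaps1).sub (hF1c.comp hcontminus hmaps2)
  have hψc : ContinuousOn ψ (Set.Icc 0 r) :=
    (hF2c.comp hcontplus hmaps1).add (hF2c.comp hcontminus hmaps2)
  have hkc : Continuous k := by
    simp only [hk]
    exact ((continuous_const.sub continuous_id).mul
      (continuous_const.sub (continuous_const.mul continuous_id))).div_const 6
  -- derivative of Φ and Φ1 on interior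
  have hioo : ∀ u : ℝ, u ∈ Set.Ioo (0:ℝ) r → m + u ∈ Set.Ioo a b ∧ m - u ∈ Set.Ioo a b := by
    intro u hu'; obtain ⟨h1, h2⟩ := hu'
    constructor <;> constructor <;> linarith
  have hdΦ : ∀ u ∈ Set.Ioo (0:ℝ) r, HasDerivAt Φ (Φ1 u) u := by
    intro u hu'
    obtain ⟨h1, h2⟩ := hioo u hu'
    have d1 : HasDerivAt (fun u : ℝ => f (m + u)) (F1 (m + u)) u := by
      have := (hdf (m + u) h1).comp u ((hasDerivAt_id u).const_add m)
      simpa [Function.comp_def] using this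
    have d2 : HasDerivAt (fun u : ℝ => f (m - u)) (-F1 (m - u)) u := by
      have := (hdf (m - u) h2).comp u ((hasDerivAt_id u).neg.const_add m)
      simpa [sub_eq_add_neg, Function.comp_def] using this
    have := d1.add d2
    simpa [hΦ, hΦ1, sub_eq_add_neg, Pi.add_def] using this
  have hdΦ1 : ∀ u ∈ Set.Ioo (0:ℝ) r, HasDerivAt Φ1 (ψ u) u := by
    intro u hu'
    obtain ⟨h1, h2⟩ := hioo u hu'
    have d1 : HasDerivAt (fun u : ℝ => F1 (m + u)) (F2 (m + u)) u := by
      have := (hdF1 (m + u) h1).comp u ((hasDerivAt_id u).const_add m)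
      simpa [Function.comp_def] using this
    have d2 : HasDerivAt (fun u : ℝ => F1 (m - u)) (-F2 (m - u)) u := by
      have := (hdF1 (m - u) h2).comp u ((hasDerivAt_id u).neg.const_add m)
      simpa [sub_eq_add_neg, Function.comp_def] using this
    have := d1.sub d2
    simpa [hΦ1, hψ, sub_eq_add_neg, Pi.add_def, Pi.neg_def] using this
  have hdk : ∀ u : ℝ, HasDerivAt k (u - 2 * r / 3) u := by
    intro u
    have h1 : HasDerivAt (fun u : ℝ => (r - u) * (r - 3 * u) / 6)
        (((0 - 1) * (r - 3 * u) + (r - u) * (0 - 3 * 1)) / 6) u := by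
      exact (((hasDerivAt_const u r).sub (hasDerivAt_id u)).mul
        ((hasDerivAt_const u r).sub ((hasDerivAt_id u).const_mul 3))).div_const 6
    convert h1 using 1
    ring
  clear_value F1 F2 G χ Φ Φ1 ψ k
  -- FTC identity: ∫₀ʳ (k ψ - Φ) = W r - W 0
  set W : ℝ → ℝ := fun u => k u * Φ1 u - (u - 2 * r / 3) * Φ u with hW
  have hWc : ContinuousOn W (Set.Icc 0 r) := by
    apply ContinuousOn.sub
    · exact (hkc.continuousOn).mul hΦ1c
    · exact ((continuous_id.sub continuous_const).continuousOn).mul hΦc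
  have hInt : IntervalIntegrable (fun u => k u * ψ u - Φ u) volume 0 r := by
    apply ContinuousOn.intervalIntegrable
    rw [Set.uIcc_of_le hr0.le]
    exact ((hkc.continuousOn).mul hψc).sub hΦc
  have hdW : ∀ u ∈ Set.Ioo (0:ℝ) r, HasDerivAt W (k u * ψ u - Φ u) u := by
    intro u hu'
    have d1 := ((hdk u).mul (hdΦ1 u hu')).sub
      ((((hasDerivAt_id u).sub_const (2 * r / 3))).mul (hdΦ u hu'))
    rw [hW]
    refine HasDerivAt.congr_deriv d1 ?_
    simp only [id_eq]; ring
  have hFTC : ∫ u in (0:ℝ)..r, (k u * ψ u - Φ u) = W r - W 0 :=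
    integral_eq_sub_of_hasDerivAt_of_le hr0.le hWc hdW hInt
  -- Φ1 0 = 0
  have hΦ10 : Φ1 0 = 0 := by simp [hΦ1]
  have hWr : W r - W 0 = -(r / 3) * Φ r - (2 * r / 3) * Φ 0 := by
    simp only [hW, hk, hΦ10]
    ring_nf
  clear_value W
  -- integrability pieces
  have hkψInt : IntervalIntegrable (fun u => k u * ψ u) volume 0 r := by
    apply ContinuousOn.intervalIntegrable
    rw [Set.uIcc_of_le hr0.le]
    exact (hkc.continuousOn).mul hψc
  have hΦInt : IntervalIntegrable Φ volume 0 r := by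
    apply ContinuousOn.intervalIntegrable
    rw [Set.uIcc_of_le hr0.le]
    exact hΦc
  have hsplit : (∫ u in (0:ℝ)..r, (k u * ψ u - Φ u)) =
      (∫ u in (0:ℝ)..r, k u * ψ u) - ∫ u in (0:ℝ)..r, Φ u :=
    integral_sub hkψInt hΦInt
  -- ∫₀ʳ k = 0
  have hkint0 : ∫ u in (0:ℝ)..r, k u = 0 := by
    have hA : ∀ u : ℝ, HasDerivAt (fun u : ℝ => (r^2 * u - 2 * r * u^2 + u^3) / 6) (k u) u := by
      intro u
      have h1 : HasDerivAt (fun u : ℝ => (r^2 * u - 2 * r * u^2 + u^3) / 6)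
          ((r^2 * 1 - 2 * r * (2 * u^1 * 1) + 3 * u^2 * 1) / 6) u := by
        exact ((((hasDerivAt_id u).const_mul (r^2)).sub
          (((hasDerivAt_id u).pow 2).const_mul (2*r))).add ((hasDerivAt_id u).pow 3)).div_const 6
      convert h1 using 1
      simp only [hk]; ring
    have := integral_eq_sub_of_hasDerivAt (fun u _ => hA u)
      (ContinuousOn.intervalIntegrable (by rw [Set.uIcc_of_le hr0.le]; exact hkc.continuousOn))
    rw [this]; ring
  -- ∫₀ʳ k ψ ≤ 0
  have hkey : (∫ u in (0:ℝ)..r, k u * ψ u) ≤ 0 := by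
    set c : ℝ := χ (r / 3) with hc
    have heq : (∫ u in (0:ℝ)..r, k u * ψ u) = ∫ u in (0:ℝ)..r, k u * ψ u - c * k u := by
      rw [integral_sub hkψInt (((ContinuousOn.intervalIntegrable (by
        rw [Set.uIcc_of_le hr0.le]; exact hkc.continuousOn)) : IntervalIntegrable k volume 0 r).const_mul c)]
      rw [intervalIntegral.integral_const_mul, hkint0]
      ring
    rw [heq]
    have hnonpos : ∀ u ∈ Set.Icc (0:ℝ) r, k u * ψ u - c * k u ≤ 0 := by
      intro u hu'
      obtain ⟨h0u, hur⟩ := hu'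
      rcases eq_or_lt_of_le hur with h | h
      · have : k u = 0 := by simp [hk, h]
        rw [this]; simp
      · -- u < r: here ψ u = χ u
        have hψχ : ψ u = χ u := by
          have h1 : m + u ∈ Set.Ioo a b := by constructor <;> linarith
          have h2 : m - u ∈ Set.Ioo a b := by constructor <;> linarith
          simp only [hψ, hχ]
          rw [hGF2 (m + u) h1, hGF2 (m - u) h2]
        have hru : k u * ψ u - c * k u = k u * (χ u - c) := by rw [hψχ]; ring
        rw [hru]
        rcases le_total u (r / 3) with hcase | hcase
        · have hk0 : 0 ≤ k u := by
            simp only [hk]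
            have : 0 ≤ r - u := by linarith
            have : 0 ≤ r - 3 * u := by linarith
            positivity
          have hχc : χ u - c ≤ 0 := by
            have := hmono u (r/3) h0u hcase (by linarith)
            simp only [hc]; linarith
          exact mul_nonpos_of_nonneg_of_nonpos hk0 hχc
        · have hk0 : k u ≤ 0 := by
            simp only [hk]
            have h1 : 0 ≤ r - u := by linarith
            have h2 : r - 3 * u ≤ 0 := by linarith
            nlinarith
          have hχc : 0 ≤ χ u - c := by
            have := hmono (r/3) u (by linarith) hcase hur
            simp only [hc]; linarith
          exact mul_nonpos_of_nonpos_of_nonneg hk0 hχc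
    have := integral_nonneg (μ := volume) (f := fun u => -(k u * ψ u - c * k u)) hr0.le
      (fun u hu' => by simpa using neg_nonneg.2 (hnonpos u hu'))
    rw [intervalIntegral.integral_neg] at this
    linarith
  -- now the substitution: ∫ₐᵇ f = ∫₀ʳ Φ
  have hsub : (∫ t in a..b, f t) = ∫ u in (0:ℝ)..r, Φ u := by
    have h1 : (∫ u in (-r:ℝ)..r, f (m + u)) = ∫ t in a..b, f t := by
      rw [integral_comp_add_left f m]
      congr 1
    have hInt1 : IntervalIntegrable (fun u => f (m + u)) volume (-r) 0 := by
      apply ContinuousOn.intervalIntegrable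
      apply hfc.comp (continuous_const.add continuous_id).continuousOn
      intro u hu'
      rw [Set.uIcc_of_le (by linarith : (-r:ℝ) ≤ 0)] at hu'
      obtain ⟨hh1, hh2⟩ := hu'
      simp only [id_eq, Set.mem_Icc, Pi.add_apply, Pi.sub_apply]
      constructor <;> linarith
    have hInt2 : IntervalIntegrable (fun u => f (m + u)) volume 0 r := by
      apply ContinuousOn.intervalIntegrable
      apply hfc.comp (continuous_const.add continuous_id).continuousOn
      intro u hu'
      rw [Set.uIcc_of_le hr0.le] at hu'
      obtain ⟨hh1, hh2⟩ := hu'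
      simp only [id_eq, Set.mem_Icc, Pi.add_apply, Pi.sub_apply]
      constructor <;> linarith
    have h2 : (∫ u in (-r:ℝ)..(0:ℝ), f (m + u)) + (∫ u in (0:ℝ)..r, f (m + u)) =
        ∫ u in (-r:ℝ)..r, f (m + u) := integral_add_adjacent_intervals hInt1 hInt2
    have h3 : (∫ u in (-r:ℝ)..(0:ℝ), f (m + u)) = ∫ u in (0:ℝ)..r, f (m - u) := by
      have := integral_comp_neg (fun u => f (m + u)) (a := 0) (b := r)
      simp only [neg_zero] at this
      rw [← this]
      simp only [sub_eq_add_neg]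
    have hInt3 : IntervalIntegrable (fun u => f (m - u)) volume 0 r := by
      apply ContinuousOn.intervalIntegrable
      apply hfc.comp (continuous_const.sub continuous_id).continuousOn
      intro u hu'
      rw [Set.uIcc_of_le hr0.le] at hu'
      obtain ⟨hh1, hh2⟩ := hu'
      simp only [id_eq, Set.mem_Icc, Pi.add_apply, Pi.sub_apply]
      constructor <;> linarith
    have h4 : (∫ u in (0:ℝ)..r, Φ u) =
        (∫ u in (0:ℝ)..r, f (m + u)) + ∫ u in (0:ℝ)..r, f (m - u) := by
      rw [← integral_add hInt2 hInt3, hΦ]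
    rw [h4, ← h3, add_comm, h2, h1]
  -- combine
  have hmain : (∫ t in a..b, f t) ≤ (r / 3) * (f a + f b) + (4 * r / 3) * f m := by
    rw [hsub]
    have h5 : (∫ u in (0:ℝ)..r, Φ u) =
        (∫ u in (0:ℝ)..r, k u * ψ u) - ((W r) - (W 0)) := by
      rw [← hFTC, hsplit]; ring
    rw [h5, hWr]
    have hΦr : Φ r = f b + f a := by simp only [hΦ]; rw [hmb, hma]
    have hΦ0 : Φ 0 = 2 * f m := by simp [hΦ]; ring
    rw [hΦr, hΦ0]
    ring_nf
    ring_nf at hkey ⊢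
    linarith [hkey]
  have hba : (0:ℝ) < b - a := by linarith
  have h2r : b - a = 2 * r := by rw [hr]; ring
  have hrne : r ≠ 0 := ne_of_gt hr0
  have hfin : (1 / (b - a)) * (∫ t in a..b, f t) ≤
      (1 / (b - a)) * ((r / 3) * (f a + f b) + (4 * r / 3) * f m) := by
    apply mul_le_mul_of_nonneg_left hmain
    positivity
  calc (1 / (b - a)) * (∫ t in a..b, f t)
      ≤ (1 / (b - a)) * ((r / 3) * (f a + f b) + (4 * r / 3) * f m) := hfin
    _ = (1 / 6) * (f a + f b) + (2 / 3) * f m := by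
        rw [h2r]; field_simp; ring
end

section
/- Let f : ℝ → ℝ be four times continuously differentiable on an interval I with f'' concave on I. Then for all a, b ∈ I with a < b: (1/6)(f(a)+f(b)) + (2/3) f((a+b)/2) ≤ (1/(b-a)) ∫_a^b f(t) dt. -/
open MeasureTheory intervalIntegral
open Set

/-- **Theorem 3, second part.** If `f ∈ C⁴(I)` and `f''` is concave on the interval `I`,
then for `a, b ∈ I` with `a < b`,
`(1/6)(f a + f b) + (2/3) f((a+b)/2) ≤ (1/(b-a)) ∫_a^b f`. -/
theorem stmt_6 (f : ℝ → ℝ) (I : Set ℝ) (hI : Convex ℝ I)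
    (hf : ContDiffOn ℝ 4 f I) (hconc'' : ConcaveOn ℝ I (deriv (deriv f)))
    (a b : ℝ) (ha : a ∈ I) (hb : b ∈ I) (hab : a < b) :
    (1 / 6) * (f a + f b) + (2 / 3) * f ((a + b) / 2) ≤
      (1 / (b - a)) * ∫ t in a..b, f t := by
  set f1 := deriv f with hf1def
  set f2 := deriv f1 with hf2def
  set f3 := deriv f2 with hf3def
  set m := (a + b) / 2 with hmdef
  set H := (b - a) / 2 with hHdef
  have hH : 0 < H := by rw [hHdef]; linarith
  have hmH1 : m - H = a := by rw [hmdef, hHdef]; ring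
  have hmH2 : m + H = b := by rw [hmdef, hHdef]; ring
  have hIcc : Icc a b ⊆ I := hI.ordConnected.out ha hb
  have hIoo : Ioo a b ⊆ interior I :=
    isOpen_Ioo.subset_interior_iff.mpr (Set.Ioo_subset_Icc_self.trans hIcc)
  have hopen : IsOpen (interior I) := isOpen_interior
  have hfi : ContDiffOn ℝ 4 f (interior I) := hf.mono interior_subset
  have hf1i : ContDiffOn ℝ 3 f1 (interior I) := hfi.deriv_of_isOpen hopen (by norm_num)
  have hf2i : ContDiffOn ℝ 2 f2 (interior I) := hf1i.deriv_of_isOpen hopen (by norm_num)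
  have hmem : ∀ {x : ℝ}, 0 ≤ x → x < H → m + x ∈ Ioo a b ∧ m - x ∈ Ioo a b := by
    intro x h0 hx
    rw [hHdef] at hx
    constructor <;> constructor <;> (rw [hmdef]; linarith)
  have hder1 : ∀ x ∈ Ioo a b, HasDerivAt f (f1 x) x := fun x hx =>
    ((hfi.differentiableOn (by norm_num)).differentiableAt
      (hopen.mem_nhds (hIoo hx))).hasDerivAt
  have hder2 : ∀ x ∈ Ioo a b, HasDerivAt f1 (f2 x) x := fun x hx =>
    ((hf1i.differentiableOn (by norm_num)).differentiableAt
      (hopen.mem_nhds (hIoo hx))).hasDerivAt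
  have hder3 : ∀ x ∈ Ioo a b, HasDerivAt f2 (f3 x) x := fun x hx =>
    ((hf2i.differentiableOn (by norm_num)).differentiableAt
      (hopen.mem_nhds (hIoo hx))).hasDerivAt
  have hcont1 : ContinuousOn f1 (interior I) := hf1i.continuousOn
  have hcont2 : ContinuousOn f2 (interior I) := hf2i.continuousOn
  have hcontf : ContinuousOn f (Icc a b) := hf.continuousOn.mono hIcc
  have hanti : AntitoneOn f3 (Ioo a b) := by
    have hcc : ConcaveOn ℝ (Ioo a b) f2 :=
      hconc''.subset (Set.Ioo_subset_Icc_self.trans hIcc) (convex_Ioo a b)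
    exact hcc.antitoneOn_deriv (fun x hx => (hder3 x hx).differentiableAt)
  -- derivative transfer helpers
  have key : ∀ (g g' : ℝ → ℝ), (∀ z ∈ Ioo a b, HasDerivAt g (g' z) z) → ∀ x : ℝ, 0 ≤ x → x < H →
      HasDerivAt (fun y => g (m + y)) (g' (m + x)) x ∧
      HasDerivAt (fun y => g (m - y)) (-g' (m - x)) x := by
    intro g g' hg x h0 hx
    have hp := (hmem h0 hx).1
    have hq := (hmem h0 hx).2
    constructor
    · have := (hg _ hp).comp x ((hasDerivAt_id x).const_add m)
      simpa [Function.comp_def] using this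
    · have := (hg _ hq).comp x ((hasDerivAt_id x).const_sub m)
      simpa [Function.comp_def] using this
  have ccomp : ∀ (g : ℝ → ℝ), ContinuousOn g (interior I) → ∀ h' : ℝ, h' < H →
      ContinuousOn (fun y => g (m + y)) (Icc 0 h') ∧
      ContinuousOn (fun y => g (m - y)) (Icc 0 h') := by
    intro g hg h' hh'
    constructor
    · exact hg.comp (by fun_prop) (fun x hx => hIoo (hmem hx.1 (lt_of_le_of_lt hx.2 hh')).1)
    · exact hg.comp (by fun_prop) (fun x hx => hIoo (hmem hx.1 (lt_of_le_of_lt hx.2 hh')).2)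
  -- the ψ function
  set ψ : ℝ → ℝ := fun h => f1 (m + h) - f1 (m - h) - h * (f2 (m + h) + f2 (m - h)) with hψdef
  have hdψ : ∀ x : ℝ, 0 ≤ x → x < H → HasDerivAt ψ (x * (f3 (m - x) - f3 (m + x))) x := by
    intro x h0 hx
    have d1 := (key f1 f2 hder2 x h0 hx).1
    have d2 := (key f1 f2 hder2 x h0 hx).2
    have d3 : HasDerivAt (fun y => y * (f2 (m + y) + f2 (m - y)))
        (1 * (f2 (m + x) + f2 (m - x)) + x * (f3 (m + x) + -f3 (m - x))) x :=
      (hasDerivAt_id x).mul ((key f2 f3 hder3 x h0 hx).1.add (key f2 f3 hder3 x h0 hx).2)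
    have := (d1.sub d2).sub d3
    refine this.congr_deriv ?_
    ring
  have hψnn : ∀ h : ℝ, 0 ≤ h → h < H → 0 ≤ ψ h := by
    intro h h0 hh
    have hmono : MonotoneOn ψ (Icc 0 h) := by
      apply monotoneOn_of_deriv_nonneg (convex_Icc 0 h)
      · exact (((ccomp f1 hcont1 h hh).1.sub (ccomp f1 hcont1 h hh).2).sub
          (continuousOn_id.mul ((ccomp f2 hcont2 h hh).1.add (ccomp f2 hcont2 h hh).2)))
      · rw [interior_Icc]
        intro x hx
        exact (hdψ x hx.1.le (hx.2.trans hh)).differentiableAt.differentiableWithinAt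
      · rw [interior_Icc]
        intro x hx
        rw [(hdψ x hx.1.le (hx.2.trans hh)).deriv]
        have hle : f3 (m + x) ≤ f3 (m - x) :=
          hanti (hmem hx.1.le (hx.2.trans hh)).2
            (hmem hx.1.le (hx.2.trans hh)).1 (by linarith [hx.1])
        exact mul_nonneg hx.1.le (sub_nonneg.mpr hle)
    have h0m : (0:ℝ) ∈ Icc (0:ℝ) h := left_mem_Icc.mpr h0
    have hhm : h ∈ Icc (0:ℝ) h := right_mem_Icc.mpr h0
    have := hmono h0m hhm h0
    have hz : ψ 0 = 0 := by simp [hψdef]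
    linarith [this, hz.le]
  -- the φ function
  set φ : ℝ → ℝ := fun h => 2*(f (m + h) + f (m - h)) - 4 * f m - h * (f1 (m + h) - f1 (m - h)) with hφdef
  have hdφ : ∀ x : ℝ, 0 ≤ x → x < H → HasDerivAt φ (ψ x) x := by
    intro x h0 hx
    have d1 := (key f f1 hder1 x h0 hx).1
    have d2 := (key f f1 hder1 x h0 hx).2
    have dsum : HasDerivAt (fun y => 2*(f (m + y) + f (m - y))) (2*(f1 (m + x) + -f1 (m - x))) x :=
      (d1.add d2).const_mul 2
    have d3 : HasDerivAt (fun y => y * (f1 (m + y) - f1 (m - y)))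
        (1 * (f1 (m + x) - f1 (m - x)) + x * (f2 (m + x) - -f2 (m - x))) x :=
      (hasDerivAt_id x).mul ((key f1 f2 hder2 x h0 hx).1.sub (key f1 f2 hder2 x h0 hx).2)
    have := (dsum.sub (hasDerivAt_const x (4 * f m))).sub d3
    refine this.congr_deriv ?_
    simp only [hψdef]
    ring
  have hφnn : ∀ h : ℝ, 0 ≤ h → h < H → 0 ≤ φ h := by
    intro h h0 hh
    have hmono : MonotoneOn φ (Icc 0 h) := by
      apply monotoneOn_of_deriv_nonneg (convex_Icc 0 h)
      · have hcf : ContinuousOn f (interior I) := hfi.continuousOn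
        exact ((continuousOn_const.mul ((ccomp f hcf h hh).1.add (ccomp f hcf h hh).2)).sub
          continuousOn_const).sub
          (continuousOn_id.mul ((ccomp f1 hcont1 h hh).1.sub (ccomp f1 hcont1 h hh).2))
      · rw [interior_Icc]
        intro x hx
        exact (hdφ x hx.1.le (hx.2.trans hh)).differentiableAt.differentiableWithinAt
      · rw [interior_Icc]
        intro x hx
        rw [(hdφ x hx.1.le (hx.2.trans hh)).deriv]
        exact hψnn x hx.1.le (hx.2.trans hh)
    have := hmono (left_mem_Icc.mpr h0) (right_mem_Icc.mpr h0) h0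
    have hz : φ 0 = 0 := by simp only [hφdef, add_zero, sub_zero, zero_mul]; ring
    linarith
  -- the primitive
  have hcu : ContinuousOn f (uIcc a b) := by rwa [Set.uIcc_of_le hab.le]
  have hfint : IntervalIntegrable f volume a b := hcu.intervalIntegrable
  set P : ℝ → ℝ := fun u => ∫ t in a..u, f t with hPdef
  have hPcont : ContinuousOn P (Icc a b) := by
    have : IntegrableOn f (uIcc a b) volume := by
      rw [Set.uIcc_of_le hab.le]; exact hcontf.integrableOn_Icc
    have := intervalIntegral.continuousOn_primitive_interval this
    rwa [Set.uIcc_of_le hab.le] at this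
  have hPder : ∀ x ∈ Ioo a b, HasDerivAt P (f x) x := by
    intro x hx
    apply intervalIntegral.integral_hasDerivAt_right
    · apply hfint.mono_set
      apply Set.uIcc_subset_uIcc left_mem_uIcc
      rw [Set.uIcc_of_le hab.le]
      exact Set.Ioo_subset_Icc_self hx
    · exact ContinuousOn.stronglyMeasurableAtFilter hopen hfi.continuousOn x (hIoo hx)
    · exact hfi.continuousOn.continuousAt (hopen.mem_nhds (hIoo hx))
  -- the F function
  set F : ℝ → ℝ := fun h => P (m + h) - P (m - h) - h/3 * (f (m - h) + f (m + h)) - h * (4/3 * f m) with hFdef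
  have hdF : ∀ x : ℝ, 0 < x → x < H → HasDerivAt F (φ x / 3) x := by
    intro x h0 hx
    have hp := (hmem h0.le hx).1
    have hq := (hmem h0.le hx).2
    have dP1 : HasDerivAt (fun y => P (m + y)) (f (m + x)) x := by
      have := (hPder _ hp).comp x ((hasDerivAt_id x).const_add m)
      simpa [Function.comp_def] using this
    have dP2 : HasDerivAt (fun y => P (m - y)) (-f (m - x)) x := by
      have := (hPder _ hq).comp x ((hasDerivAt_id x).const_sub m)
      simpa [Function.comp_def] using this
    have d3 : HasDerivAt (fun y => y/3 * (f (m - y) + f (m + y)))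
        (1/3 * (f (m - x) + f (m + x)) + x/3 * (-f1 (m - x) + f1 (m + x))) x :=
      ((hasDerivAt_id x).div_const 3).mul ((key f f1 hder1 x h0.le hx).2.add (key f f1 hder1 x h0.le hx).1)
    have d4 : HasDerivAt (fun y => y * (4/3 * f m)) (1 * (4/3 * f m)) x :=
      (hasDerivAt_id x).mul_const (4/3 * f m)
    have := ((dP1.sub dP2).sub d3).sub d4
    refine this.congr_deriv ?_
    simp only [hφdef]
    ring
  have hma : a < m := by rw [hmdef]; linarith
  have hmb : m < b := by rw [hmdef]; linarith
  have hmaps1 : Set.MapsTo (fun y : ℝ => m + y) (Icc 0 H) (Icc a b) := by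
    intro y hy
    have h1 : a ≤ m + y := by linarith [hy.1]
    have h2 : m + y ≤ b := by linarith [hy.2]
    exact ⟨h1, h2⟩
  have hmaps2 : Set.MapsTo (fun y : ℝ => m - y) (Icc 0 H) (Icc a b) := by
    intro y hy
    have h1 : a ≤ m - y := by linarith [hy.2]
    have h2 : m - y ≤ b := by linarith [hy.1]
    exact ⟨h1, h2⟩
  have hFcont : ContinuousOn F (Icc 0 H) := by
    have cP1 : ContinuousOn (fun y : ℝ => P (m + y)) (Icc 0 H) :=
      hPcont.comp (by fun_prop) hmaps1
    have cP2 : ContinuousOn (fun y : ℝ => P (m - y)) (Icc 0 H) :=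
      hPcont.comp (by fun_prop) hmaps2
    have cf1 : ContinuousOn (fun y : ℝ => f (m - y)) (Icc 0 H) :=
      hcontf.comp (by fun_prop) hmaps2
    have cf2 : ContinuousOn (fun y : ℝ => f (m + y)) (Icc 0 H) :=
      hcontf.comp (by fun_prop) hmaps1
    exact ((cP1.sub cP2).sub ((continuousOn_id.div_const 3).mul (cf1.add cf2))).sub
      (continuousOn_id.mul continuousOn_const)
  have hFmono : MonotoneOn F (Icc 0 H) := by
    apply monotoneOn_of_deriv_nonneg (convex_Icc 0 H) hFcont
    · rw [interior_Icc]
      intro x hx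
      exact (hdF x hx.1 hx.2).differentiableAt.differentiableWithinAt
    · rw [interior_Icc]
      intro x hx
      rw [(hdF x hx.1 hx.2).deriv]
      exact div_nonneg (hφnn x hx.1.le hx.2) (by norm_num)
  have hF0 : F 0 = 0 := by simp [hFdef]
  have hFH : 0 ≤ F H := by
    have := hFmono (left_mem_Icc.mpr hH.le) (right_mem_Icc.mpr hH.le) hH.le
    linarith
  have e1 : F H = (∫ t in a..b, f t) - H/3*(f a + f b) - H*(4/3 * f m) := by
    simp only [hFdef, hmH1, hmH2, hPdef]
    rw [intervalIntegral.integral_same]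
    ring
  have hba : (0:ℝ) < b - a := by linarith
  rw [mul_comm (1/(b-a)) _, ← div_eq_mul_one_div, le_div_iff₀ hba]
  have hFH2 : 0 ≤ (∫ t in a..b, f t) - H/3*(f a + f b) - H*(4/3 * f m) := e1 ▸ hFH
  have key2 : H/3*(f a + f b) + H*(4/3*f m) ≤ ∫ t in a..b, f t := by linarith [hFH2]
  rw [hHdef] at key2
  ring_nf at key2 ⊢
  linarith
end

section
/- Let f : ℝ → ℝ be four times continuously differentiable on an interval I, with f convex and f'' concave on I. Then for all a, b ∈ I with a < b: (1/6)(f(a)+f(b)) + (2/3) f((a+b)/2) ≤ (1/(b-a)) ∫_a^b f(t) dt ≤ (1/4)(f(a)+f(b)) + (1/2) f((a+b)/2). -/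
open MeasureTheory intervalIntegral

lemma linear_int (c d k v : ℝ) :
    ∫ t in c..d, (v + (t - c) * k) = (d - c) * v + k * ((d - c)^2 / 2) := by
  rw [intervalIntegral.integral_add (intervalIntegrable_const) ((by continuity : Continuous fun t:ℝ => (t-c)*k).intervalIntegrable _ _)]
  rw [intervalIntegral.integral_const, intervalIntegral.integral_comp_sub_right (fun t => t * k) c]
  simp [intervalIntegral.integral_mul_const]
  ring

lemma trapez {g : ℝ → ℝ} {c d : ℝ} (hcd : c ≤ d)
    (hg : ConvexOn ℝ (Set.Icc c d) g) (hcont : ContinuousOn g (Set.Icc c d)) :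
    ∫ t in c..d, g t ≤ (d - c) * (g c + g d) / 2 := by
  rcases eq_or_lt_of_le hcd with rfl | hlt
  · simp
  have hdc : (0:ℝ) < d - c := by linarith
  have key : ∀ t ∈ Set.Icc c d, g t ≤ g c + (t - c) * ((g d - g c) / (d - c)) := by
    intro t ht
    obtain ⟨h1, h2⟩ := ht
    set l : ℝ := (t - c) / (d - c) with hl
    have hl0 : 0 ≤ l := div_nonneg (by linarith) (by linarith)
    have hl1 : l ≤ 1 := by rw [hl, div_le_one hdc]; linarith
    have := hg.2 (Set.left_mem_Icc.2 hcd) (Set.right_mem_Icc.2 hcd)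
      (by linarith : (0:ℝ) ≤ 1 - l) hl0 (by ring)
    have ht' : (1 - l) • c + l • d = t := by
      field_simp [hl]
      have h5 : l * (d - c) = t - c := by rw [hl, div_mul_cancel₀ _ hdc.ne']
      linear_combination h5
    rw [ht'] at this
    have : g t ≤ (1 - l) * g c + l * g d := by simpa using this
    calc g t ≤ (1 - l) * g c + l * g d := this
      _ = g c + (t - c) * ((g d - g c) / (d - c)) := by
          rw [hl]; field_simp; ring
  calc ∫ t in c..d, g t ≤ ∫ t in c..d, (g c + (t - c) * ((g d - g c) / (d - c))) := by
        apply intervalIntegral.integral_mono_on hcd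
          (hcont.intervalIntegrable_of_Icc hcd) ((by continuity : Continuous fun t:ℝ => g c + (t - c) * ((g d - g c) / (d - c))).intervalIntegrable _ _) key
    _ = (d - c) * g c + ((g d - g c) / (d - c)) * ((d - c)^2 / 2) := linear_int ..
    _ = (d - c) * (g c + g d) / 2 := by field_simp; ring

lemma trapez' {g : ℝ → ℝ} {c d : ℝ} (hcd : c ≤ d)
    (hg : ConcaveOn ℝ (Set.Icc c d) g) (hcont : ContinuousOn g (Set.Icc c d)) :
    (d - c) * (g c + g d) / 2 ≤ ∫ t in c..d, g t := by
  have := trapez hcd hg.neg hcont.neg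
  simp only [Pi.neg_apply, intervalIntegral.integral_neg] at this
  linarith
lemma simpson_lower {f : ℝ → ℝ} {s : Set ℝ} (hs : IsOpen s) {a b : ℝ} (hab : a ≤ b)
    (hsub : Set.Icc a b ⊆ s) (hf : ContDiffOn ℝ 4 f s)
    (hconc : ConcaveOn ℝ (Set.Icc a b) (deriv (deriv f))) :
    (b - a) / 6 * (f a + 4 * f ((a + b) / 2) + f b) ≤ ∫ t in a..b, f t := by
  set m : ℝ := (a + b) / 2 with hm
  set r : ℝ := (b - a) / 2 with hr
  have hr0 : 0 ≤ r := by simp [hr]; linarith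
  set f₁ : ℝ → ℝ := deriv f with hf₁
  set f₂ : ℝ → ℝ := deriv f₁ with hf₂
  -- membership facts
  have hmem : ∀ x ∈ Set.Icc (0:ℝ) r, m + x ∈ Set.Icc a b ∧ m - x ∈ Set.Icc a b := by
    intro x hx
    obtain ⟨h0, h1⟩ := hx
    constructor <;> constructor <;> simp [hm, hr] at h1 ⊢ <;> linarith
  -- regularity facts
  have hfc : ContinuousOn f s := hf.continuousOn
  have hf1 : ContDiffOn ℝ 3 f₁ s := hf.deriv_of_isOpen hs (by norm_num)
  have hf2 : ContDiffOn ℝ 2 f₂ s := hf1.deriv_of_isOpen hs (by norm_num)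
  have hdf : ∀ y ∈ s, HasDerivAt f (f₁ y) y := fun y hy =>
    (((hf.contDiffAt (hs.mem_nhds hy)).differentiableAt (by norm_num)).hasDerivAt)
  have hdf1 : ∀ y ∈ s, HasDerivAt f₁ (f₂ y) y := fun y hy =>
    (((hf1.contDiffAt (hs.mem_nhds hy)).differentiableAt (by norm_num)).hasDerivAt)
  have hintf : ∀ c d : ℝ, Set.uIcc c d ⊆ Set.Icc a b → IntervalIntegrable f volume c d :=
    fun c d h => (hfc.mono (h.trans hsub)).intervalIntegrable
  -- ψ ≥ 0
  have hψ : ∀ x ∈ Set.Icc (0:ℝ) r,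
      0 ≤ (1/3) * (f₁ (m + x) - f₁ (m - x)) - x / 3 * (f₂ (m + x) + f₂ (m - x)) := by
    intro x hx
    obtain ⟨hp, hq⟩ := hmem x hx
    have hle : m - x ≤ m + x := by linarith [hx.1]
    have hsubx : Set.Icc (m - x) (m + x) ⊆ Set.Icc a b :=
      Set.Icc_subset_Icc hq.1 hp.2
    have hftc : f₁ (m + x) - f₁ (m - x) = ∫ t in (m - x)..(m + x), f₂ t := by
      rw [intervalIntegral.integral_eq_sub_of_hasDerivAt
        (fun t ht => hdf1 t (hsub (hsubx ((Set.uIcc_of_le hle) ▸ ht))))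
        ((hf2.continuousOn.mono fun t ht =>
          hsub (hsubx ((Set.uIcc_of_le hle) ▸ ht))).intervalIntegrable)]
    have htrap := trapez' hle (hconc.subset hsubx (convex_Icc _ _))
      ((hf2.continuousOn.mono (hsubx.trans hsub)))
    rw [← hftc] at htrap
    have : (m + x - (m - x)) = 2 * x := by ring
    rw [this] at htrap
    nlinarith [htrap]
  -- φ and its derivative
  set φ : ℝ → ℝ := fun x =>
    (2/3) * (f (m + x) + f (m - x)) - (4/3) * f m - x / 3 * (f₁ (m + x) - f₁ (m - x)) with hφ
  have hφder : ∀ x ∈ Set.Icc (0:ℝ) r, HasDerivAt φ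
      ((1/3) * (f₁ (m + x) - f₁ (m - x)) - x / 3 * (f₂ (m + x) + f₂ (m - x))) x := by
    intro x hx
    obtain ⟨hp, hq⟩ := hmem x hx
    have h1 : HasDerivAt (fun y : ℝ => f (m + y)) (f₁ (m + x)) x := by
      simpa [Function.comp_def] using (hdf _ (hsub hp)).comp x ((hasDerivAt_id x).const_add m)
    have h2 : HasDerivAt (fun y : ℝ => f (m - y)) (-f₁ (m - x)) x := by
      simpa [Function.comp_def] using (hdf _ (hsub hq)).comp x ((hasDerivAt_id x).const_sub m)
    have h3 : HasDerivAt (fun y : ℝ => f₁ (m + y)) (f₂ (m + x)) x := by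
      simpa [Function.comp_def] using (hdf1 _ (hsub hp)).comp x ((hasDerivAt_id x).const_add m)
    have h4 : HasDerivAt (fun y : ℝ => f₁ (m - y)) (-f₂ (m - x)) x := by
      simpa [Function.comp_def] using (hdf1 _ (hsub hq)).comp x ((hasDerivAt_id x).const_sub m)
    have hprod : HasDerivAt (fun y : ℝ => y / 3 * (f₁ (m + y) - f₁ (m - y)))
        ((1:ℝ) / 3 * (f₁ (m + x) - f₁ (m - x)) + x / 3 * (f₂ (m + x) - -f₂ (m - x))) x := by
      exact ((hasDerivAt_id x).div_const 3).mul (h3.sub h4)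
    have := (((h1.add h2).const_mul (2/3:ℝ)).sub (hasDerivAt_const x ((4/3:ℝ) * f m))).sub hprod
    exact this.congr_deriv (by ring)
  have hφ0 : φ 0 = 0 := by simp [hφ]; ring
  have hφnn : ∀ x ∈ Set.Icc (0:ℝ) r, 0 ≤ φ x := by
    have hmono : MonotoneOn φ (Set.Icc 0 r) := by
      apply monotoneOn_of_deriv_nonneg (convex_Icc _ _)
        (fun x hx => (hφder x hx).continuousAt.continuousWithinAt)
      · intro x hx
        rw [interior_Icc] at hx
        exact ((hφder x (Set.mem_Icc_of_Ioo hx)).differentiableAt).differentiableWithinAt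
      · intro x hx
        rw [interior_Icc] at hx
        rw [(hφder x (Set.mem_Icc_of_Ioo hx)).deriv]
        exact hψ x (Set.mem_Icc_of_Ioo hx)
    intro x hx
    have := hmono (Set.left_mem_Icc.2 hr0) hx hx.1
    rw [hφ0] at this
    exact this
  -- g and its derivative
  set F : ℝ → ℝ := fun y => ∫ t in m..y, f t with hF
  have hmI : m ∈ Set.Icc a b := by constructor <;> simp [hm] <;> linarith
  have hFder : ∀ y ∈ Set.Icc a b, HasDerivAt F (f y) y := by
    intro y hy
    exact intervalIntegral.integral_hasDerivAt_right
      (hintf m y (Set.uIcc_subset_Icc hmI hy))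
      (ContinuousOn.stronglyMeasurableAtFilter hs hfc y (hsub hy))
      ((hfc y (hsub hy)).continuousAt (hs.mem_nhds (hsub hy)))
  set g : ℝ → ℝ := fun x =>
    F (m + x) - F (m - x) - x / 3 * (f (m - x) + 4 * f m + f (m + x)) with hg
  have hgder : ∀ x ∈ Set.Icc (0:ℝ) r, HasDerivAt g (φ x) x := by
    intro x hx
    obtain ⟨hp, hq⟩ := hmem x hx
    have h1 : HasDerivAt (fun y : ℝ => F (m + y)) (f (m + x)) x := by
      simpa [Function.comp_def] using (hFder _ hp).comp x ((hasDerivAt_id x).const_add m)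
    have h2 : HasDerivAt (fun y : ℝ => F (m - y)) (-f (m - x)) x := by
      simpa [Function.comp_def] using (hFder _ hq).comp x ((hasDerivAt_id x).const_sub m)
    have h3 : HasDerivAt (fun y : ℝ => f (m + y)) (f₁ (m + x)) x := by
      simpa [Function.comp_def] using (hdf _ (hsub hp)).comp x ((hasDerivAt_id x).const_add m)
    have h4 : HasDerivAt (fun y : ℝ => f (m - y)) (-f₁ (m - x)) x := by
      simpa [Function.comp_def] using (hdf _ (hsub hq)).comp x ((hasDerivAt_id x).const_sub m)
    have hprod : HasDerivAt (fun y : ℝ => y / 3 * (f (m - y) + 4 * f m + f (m + y)))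
        ((1:ℝ) / 3 * (f (m - x) + 4 * f m + f (m + x)) +
          x / 3 * (-f₁ (m - x) + 0 + f₁ (m + x))) x := by
      exact ((hasDerivAt_id x).div_const 3).mul
        ((h4.add (hasDerivAt_const x (4 * f m))).add h3)
    have := (h1.sub h2).sub hprod
    exact this.congr_deriv (by simp [hφ]; ring)
  have hg0 : g 0 = 0 := by simp [hg]
  have hgmono : MonotoneOn g (Set.Icc 0 r) := by
    apply monotoneOn_of_deriv_nonneg (convex_Icc _ _)
      (fun x hx => (hgder x hx).continuousAt.continuousWithinAt)
    · intro x hx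
      rw [interior_Icc] at hx
      exact ((hgder x (Set.mem_Icc_of_Ioo hx)).differentiableAt).differentiableWithinAt
    · intro x hx
      rw [interior_Icc] at hx
      rw [(hgder x (Set.mem_Icc_of_Ioo hx)).deriv]
      exact hφnn x (Set.mem_Icc_of_Ioo hx)
  have hgr : 0 ≤ g r := by
    have := hgmono (Set.left_mem_Icc.2 hr0) (Set.right_mem_Icc.2 hr0) hr0
    rw [hg0] at this
    exact this
  -- unfold g r
  have hma : m - r = a := by simp [hm, hr]; ring
  have hmb : m + r = b := by simp [hm, hr]; ring
  have hsplit : F b - F a = ∫ t in a..b, f t := by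
    rw [hF]
    rw [← intervalIntegral.integral_add_adjacent_intervals
      (hintf a m (Set.uIcc_subset_Icc (Set.left_mem_Icc.2 hab) hmI))
      (hintf m b (Set.uIcc_subset_Icc hmI (Set.right_mem_Icc.2 hab)))]
    rw [intervalIntegral.integral_symm m a]
    ring
  have hgr' : 0 ≤ F (m + r) - F (m - r) - r / 3 * (f (m - r) + 4 * f m + f (m + r)) := hgr
  rw [hma, hmb, hsplit] at hgr'
  have h6 : r / 3 = (b - a) / 6 := by rw [hr]; ring
  rw [h6] at hgr'
  linarith [hgr']

open MeasureTheory intervalIntegral Topology Filter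

/-- **Corollary 1.** If `f ∈ C⁴(I)`, `f` is convex and `f''` is concave on the interval `I`,
then for `a, b ∈ I` with `a < b`,
`N(1/6,2/3) ≤ (1/(b-a)) ∫_a^b f ≤ N(1/4,1/2)`. -/
theorem stmt_7 (f : ℝ → ℝ) (I : Set ℝ) (hI : Convex ℝ I)
    (hf : ContDiffOn ℝ 4 f I) (hconv : ConvexOn ℝ I f)
    (hconc'' : ConcaveOn ℝ I (deriv (deriv f)))
    (a b : ℝ) (ha : a ∈ I) (hb : b ∈ I) (hab : a < b) :
    (1 / 6) * (f a + f b) + (2 / 3) * f ((a + b) / 2) ≤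
      (1 / (b - a)) * ∫ t in a..b, f t ∧
    (1 / (b - a)) * ∫ t in a..b, f t ≤
      (1 / 4) * (f a + f b) + (1 / 2) * f ((a + b) / 2) := by
  set m : ℝ := (a + b) / 2 with hm
  have hba : (0:ℝ) < b - a := by linarith
  have hIcc : Set.Icc a b ⊆ I := hI.ordConnected.out ha hb
  have ham : a ≤ m := by rw [hm]; linarith
  have hmb : m ≤ b := by rw [hm]; linarith
  have hmI : m ∈ Set.Icc a b := ⟨ham, hmb⟩
  have hfc : ContinuousOn f (Set.Icc a b) := hf.continuousOn.mono hIcc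
  have hint : ∀ c d : ℝ, Set.uIcc c d ⊆ Set.Icc a b → IntervalIntegrable f volume c d :=
    fun c d h => (hfc.mono h).intervalIntegrable
  constructor
  · -- lower bound
    have hIooI : Set.Ioo a b ⊆ interior I :=
      interior_maximal (Set.Ioo_subset_Icc_self.trans hIcc) isOpen_Ioo
    have hfint : ContDiffOn ℝ 4 f (interior I) := hf.mono interior_subset
    have key : ∀ t ∈ Set.Ioo (0:ℝ) ((b - a) / 2),
        (b - a - 2 * t) / 6 * (f (a + t) + 4 * f m + f (b - t)) ≤
          ∫ u in (a + t)..(b - t), f u := by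
      intro t ht
      obtain ⟨ht0, ht1⟩ := ht
      have hle : a + t ≤ b - t := by linarith
      have hsub2 : Set.Icc (a + t) (b - t) ⊆ Set.Ioo a b :=
        Set.Icc_subset_Ioo (by linarith) (by linarith)
      have := simpson_lower isOpen_interior hle (hsub2.trans hIooI) hfint
        (hconc''.subset ((hsub2.trans Set.Ioo_subset_Icc_self).trans hIcc) (convex_Icc _ _))
      have e1 : (a + t + (b - t)) / 2 = m := by rw [hm]; ring
      have e2 : (b - t - (a + t)) = b - a - 2 * t := by ring
      rw [e1, e2] at this
      exact this
    set L : Filter ℝ := nhdsWithin (0:ℝ) (Set.Ioi 0) with hL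
    have hmemL : Set.Ioo (0:ℝ) ((b - a) / 2) ∈ L := Ioo_mem_nhdsGT_of_mem ⟨le_refl 0, by linarith⟩
    have hid : Filter.Tendsto (fun t : ℝ => t) L (𝓝 0) :=
      Filter.Tendsto.mono_left Filter.tendsto_id nhdsWithin_le_nhds
    -- endpoint tendsto
    have T_a : Filter.Tendsto (fun t : ℝ => f (a + t)) L (𝓝 (f a)) := by
      have h1 : Filter.Tendsto (fun t : ℝ => a + t) L (𝓝[Set.Icc a b] a) := by
        apply tendsto_nhdsWithin_of_tendsto_nhds_of_eventually_within
        · simpa using (tendsto_const_nhds.add hid)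
        · filter_upwards [hmemL] with t ht
          exact ⟨by linarith [ht.1, ht.2], by linarith [ht.1, ht.2]⟩
      exact (hfc a ⟨le_refl a, hab.le⟩).tendsto.comp h1
    have T_b : Filter.Tendsto (fun t : ℝ => f (b - t)) L (𝓝 (f b)) := by
      have h1 : Filter.Tendsto (fun t : ℝ => b - t) L (𝓝[Set.Icc a b] b) := by
        apply tendsto_nhdsWithin_of_tendsto_nhds_of_eventually_within
        · simpa using (tendsto_const_nhds.sub hid)
        · filter_upwards [hmemL] with t ht
          exact ⟨by linarith [ht.1, ht.2], by linarith [ht.1, ht.2]⟩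
      exact (hfc b ⟨hab.le, le_refl b⟩).tendsto.comp h1
    -- integral tendsto
    have hFcont : ContinuousOn (fun x => ∫ u in a..x, f u) (Set.Icc a b) := by
      have := intervalIntegral.continuousOn_primitive_interval
        (f := f) (a := a) (b := b) (μ := volume) (by
          rw [Set.uIcc_of_le hab.le]; exact hfc.integrableOn_Icc)
      rwa [Set.uIcc_of_le hab.le] at this
    have T_F : Filter.Tendsto (fun t : ℝ => ∫ u in (a + t)..(b - t), f u) L
        (𝓝 (∫ u in a..b, f u)) := by
      have T1 : Filter.Tendsto (fun t : ℝ => ∫ u in a..(b - t), f u) L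
          (𝓝 (∫ u in a..b, f u)) := by
        have h1 : Filter.Tendsto (fun t : ℝ => b - t) L (𝓝[Set.Icc a b] b) := by
          apply tendsto_nhdsWithin_of_tendsto_nhds_of_eventually_within
          · simpa using (tendsto_const_nhds.sub hid)
          · filter_upwards [hmemL] with t ht
            exact ⟨by linarith [ht.1, ht.2], by linarith [ht.1, ht.2]⟩
        exact (hFcont b ⟨hab.le, le_refl b⟩).tendsto.comp h1
      have T2 : Filter.Tendsto (fun t : ℝ => ∫ u in a..(a + t), f u) L (𝓝 0) := by
        have h1 : Filter.Tendsto (fun t : ℝ => a + t) L (𝓝[Set.Icc a b] a) := by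
          apply tendsto_nhdsWithin_of_tendsto_nhds_of_eventually_within
          · simpa using (tendsto_const_nhds.add hid)
          · filter_upwards [hmemL] with t ht
            exact ⟨by linarith [ht.1, ht.2], by linarith [ht.1, ht.2]⟩
        have := (hFcont a ⟨le_refl a, hab.le⟩).tendsto.comp h1
        simpa [Function.comp_def] using this
      have heq : ∀ᶠ t in L, (∫ u in a..(b - t), f u) - (∫ u in a..(a + t), f u)
          = ∫ u in (a + t)..(b - t), f u := by
        filter_upwards [hmemL] with t ht
        have hi1 : IntervalIntegrable f volume a (b - t) := by
          apply hint
          rw [Set.uIcc_of_le (by linarith [ht.1, ht.2] : a ≤ b - t)]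
          exact Set.Icc_subset_Icc le_rfl (by linarith [ht.1])
        have hi2 : IntervalIntegrable f volume a (a + t) := by
          apply hint
          rw [Set.uIcc_of_le (by linarith [ht.1] : a ≤ a + t)]
          exact Set.Icc_subset_Icc le_rfl (by linarith [ht.2])
        exact intervalIntegral.integral_interval_sub_left hi1 hi2
      have := T1.sub T2
      rw [sub_zero] at this
      exact Filter.Tendsto.congr' heq this
    have T_lhs : Filter.Tendsto
        (fun t : ℝ => (b - a - 2 * t) / 6 * (f (a + t) + 4 * f m + f (b - t))) L
        (𝓝 ((b - a) / 6 * (f a + 4 * f m + f b))) := by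
      have h1 : Filter.Tendsto (fun t : ℝ => (b - a - 2 * t) / 6) L (𝓝 ((b - a) / 6)) := by
        have := ((tendsto_const_nhds (x := b - a)).sub (hid.const_mul 2)).div_const 6
        simpa using this
      exact h1.mul ((T_a.add tendsto_const_nhds).add T_b)
    have hlow : (b - a) / 6 * (f a + 4 * f m + f b) ≤ ∫ u in a..b, f u := by
      refine le_of_tendsto_of_tendsto T_lhs T_F ?_
      filter_upwards [hmemL] with t ht
      exact key t ht
    rw [show (1:ℝ)/(b-a) = (b-a)⁻¹ from one_div _, le_inv_mul_iff₀ hba]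
    nlinarith [hlow]
  · -- upper bound
    have hsub1 : Set.Icc a m ⊆ Set.Icc a b := Set.Icc_subset_Icc le_rfl hmb
    have hsub2 : Set.Icc m b ⊆ Set.Icc a b := Set.Icc_subset_Icc ham le_rfl
    have t1 := trapez ham (hconv.subset (hsub1.trans hIcc) (convex_Icc _ _)) (hfc.mono hsub1)
    have t2 := trapez hmb (hconv.subset (hsub2.trans hIcc) (convex_Icc _ _)) (hfc.mono hsub2)
    have hsplit : (∫ u in a..b, f u) = (∫ u in a..m, f u) + ∫ u in m..b, f u :=
      (intervalIntegral.integral_add_adjacent_intervals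
        (hint a m (by rw [Set.uIcc_of_le ham]; exact hsub1))
        (hint m b (by rw [Set.uIcc_of_le hmb]; exact hsub2))).symm
    have hma : m - a = (b - a) / 2 := by rw [hm]; ring
    have hbm : b - m = (b - a) / 2 := by rw [hm]; ring
    rw [show (1:ℝ)/(b-a) = (b-a)⁻¹ from one_div _, inv_mul_le_iff₀ hba]
    rw [hsplit]
    rw [hma] at t1
    rw [hbm] at t2
    nlinarith [t1, t2]
end

section
/- Let f : ℝ → ℝ be four times continuously differentiable on an interval I with f'' convex on I. Then for all a, b ∈ I with a < b: 0 ≤ (1/6)(f(a)+f(b)) + (2/3) f((a+b)/2) − (1/(b-a)) ∫_a^b f(t) dt ≤ ((b-a)^2/324) [ f''(a) + f''(b) − 2 f''((a+b)/2) ]. -/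
open MeasureTheory intervalIntegral Set Filter Topology

private lemma my_ibp {u u' v v' : ℝ → ℝ} {c d : ℝ} (hcd : c ≤ d)
    (hu : ∀ t, HasDerivAt u (u' t) t) (hu' : Continuous u')
    (hcv : ContinuousOn v (Icc c d)) (hv : ∀ t ∈ Ioo c d, HasDerivAt v (v' t) t)
    (hv' : ContinuousOn v' (Icc c d)) :
    ∫ t in c..d, u t * v' t = u d * v d - u c * v c - ∫ t in c..d, u' t * v t := by
  have hucont : Continuous u := by
    rw [continuous_iff_continuousAt]; exact fun x => (hu x).continuousAt
  have h2 : IntervalIntegrable (fun t => u' t * v t) volume c d := by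
    apply ContinuousOn.intervalIntegrable
    rw [uIcc_of_le hcd]; exact hu'.continuousOn.mul hcv
  have h3 : IntervalIntegrable (fun t => u t * v' t) volume c d := by
    apply ContinuousOn.intervalIntegrable
    rw [uIcc_of_le hcd]; exact hucont.continuousOn.mul hv'
  have h1 : ∫ t in c..d, (u' t * v t + u t * v' t) = u d * v d - u c * v c := by
    apply integral_eq_sub_of_hasDeriv_right_of_le hcd (hucont.continuousOn.mul hcv)
    · intro x hx
      exact ((hu x).mul (hv x hx)).hasDerivWithinAt
    · exact h2.add h3
  rw [integral_add h2 h3] at h1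
  linarith

private lemma ker_nonneg {h X : ℝ} (hh : 0 < h) (h0 : 0 ≤ X) (h2 : X ≤ h / 2) :
    0 ≤ X ^ 3 * (2 * h - 3 * X) / (72 * h) := by
  apply div_nonneg
  · apply mul_nonneg (by positivity)
    nlinarith
  · positivity

private lemma ker_le {h X : ℝ} (hh : 0 < h) (h0 : 0 ≤ X) (h2 : X ≤ h / 2) :
    X ^ 3 * (2 * h - 3 * X) / (72 * h) ≤ h ^ 2 / 324 * X := by
  rw [div_le_iff₀ (by positivity)]
  nlinarith [mul_nonneg h0 (sq_nonneg (9 * X - 4 * h)), mul_nonneg hh.le (sq_nonneg (9 * X - 4 * h)),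
    mul_nonneg hh.le (mul_nonneg hh.le hh.le), sq_nonneg (3 * X - h)]

private lemma hdP {a b : ℝ} (t : ℝ) :
    HasDerivAt (fun t => (t-a)^3*(2*(b-a)-3*(t-a))/(72*(b-a)))
      ((t-a)^2*((b-a)-2*(t-a))/(12*(b-a))) t := by
  have h1 : HasDerivAt (fun x : ℝ => x - a) 1 t := (hasDerivAt_id t).sub_const a
  have h2 := ((h1.pow 3).mul (HasDerivAt.const_sub (2*(b-a)) (h1.const_mul (3:ℝ)))).div_const
    (72*(b-a))
  refine h2.congr_deriv ?_
  simp only [Pi.pow_apply]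
  rcases eq_or_ne (b - a) 0 with h | h
  · rw [h]; ring_nf
  · field_simp; ring

private lemma hdP1 {a b : ℝ} (t : ℝ) :
    HasDerivAt (fun t => (t-a)^2*((b-a)-2*(t-a))/(12*(b-a)))
      ((t-a)*((b-a)-3*(t-a))/(6*(b-a))) t := by
  have h1 : HasDerivAt (fun x : ℝ => x - a) 1 t := (hasDerivAt_id t).sub_const a
  have h2 := ((h1.pow 2).mul (HasDerivAt.const_sub (b-a) (h1.const_mul (2:ℝ)))).div_const
    (12*(b-a))
  refine h2.congr_deriv ?_
  simp only [Pi.pow_apply]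
  rcases eq_or_ne (b - a) 0 with h | h
  · rw [h]; ring_nf
  · field_simp; ring

private lemma hdP2 {a b : ℝ} (hne : b - a ≠ 0) (t : ℝ) :
    HasDerivAt (fun t => (t-a)*((b-a)-3*(t-a))/(6*(b-a)))
      (1/6 - (t-a)/(b-a)) t := by
  have h1 : HasDerivAt (fun x : ℝ => x - a) 1 t := (hasDerivAt_id t).sub_const a
  have h2 := (h1.mul (HasDerivAt.const_sub (b-a) (h1.const_mul (3:ℝ)))).div_const (6*(b-a))
  refine h2.congr_deriv ?_
  field_simp
  ring

private lemma hdP3 {a b : ℝ} (t : ℝ) :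
    HasDerivAt (fun t : ℝ => 1/6 - (t-a)/(b-a)) (-(1/(b-a))) t := by
  have h1 : HasDerivAt (fun x : ℝ => x - a) 1 t := (hasDerivAt_id t).sub_const a
  exact HasDerivAt.const_sub (1/6 : ℝ) (h1.div_const (b-a))

private lemma hdQ {a b : ℝ} (t : ℝ) :
    HasDerivAt (fun t => (b-t)^3*(2*(b-a)-3*(b-t))/(72*(b-a)))
      (-((b-t)^2*((b-a)-2*(b-t))/(12*(b-a)))) t := by
  have h1 : HasDerivAt (fun x : ℝ => b - x) (-1) t := (hasDerivAt_id t).const_sub b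
  have h2 := ((h1.pow 3).mul (HasDerivAt.const_sub (2*(b-a)) (h1.const_mul (3:ℝ)))).div_const
    (72*(b-a))
  refine h2.congr_deriv ?_
  simp only [Pi.pow_apply]
  rcases eq_or_ne (b - a) 0 with h | h
  · rw [h]; ring_nf
  · field_simp; ring

private lemma hdQ1 {a b : ℝ} (t : ℝ) :
    HasDerivAt (fun t => -((b-t)^2*((b-a)-2*(b-t))/(12*(b-a))))
      ((b-t)*((b-a)-3*(b-t))/(6*(b-a))) t := by
  have h1 : HasDerivAt (fun x : ℝ => b - x) (-1) t := (hasDerivAt_id t).const_sub b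
  have h2 := (((h1.pow 2).mul (HasDerivAt.const_sub (b-a) (h1.const_mul (2:ℝ)))).div_const
    (12*(b-a))).neg
  refine h2.congr_deriv ?_
  simp only [Pi.pow_apply]
  rcases eq_or_ne (b - a) 0 with h | h
  · rw [h]; ring_nf
  · field_simp; ring

private lemma hdQ2 {a b : ℝ} (hne : b - a ≠ 0) (t : ℝ) :
    HasDerivAt (fun t => (b-t)*((b-a)-3*(b-t))/(6*(b-a)))
      (-(1/6) + (b-t)/(b-a)) t := by
  have h1 : HasDerivAt (fun x : ℝ => b - x) (-1) t := (hasDerivAt_id t).const_sub b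
  have h2 := (h1.mul (HasDerivAt.const_sub (b-a) (h1.const_mul (3:ℝ)))).div_const (6*(b-a))
  refine h2.congr_deriv ?_
  field_simp
  ring

private lemma hdQ3 {a b : ℝ} (t : ℝ) :
    HasDerivAt (fun t : ℝ => -(1/6) + (b-t)/(b-a)) (-(1/(b-a))) t := by
  have h1 : HasDerivAt (fun x : ℝ => b - x) (-1) t := (hasDerivAt_id t).const_sub b
  have h2 := HasDerivAt.const_add (-(1/6) : ℝ) (h1.div_const (b-a))
  refine h2.congr_deriv ?_
  ring

set_option maxHeartbeats 2000000 in
/-- **Theorem 4, first part.** If `f ∈ C⁴(I)` and `f''` is convex on the interval `I`,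
then for `a, b ∈ I` with `a < b`,
`0 ≤ N(1/6,2/3) - (1/(b-a)) ∫_a^b f ≤ ((b-a)²/324)[f''(a) + f''(b) - 2 f''((a+b)/2)]`. -/
theorem stmt_8 (f : ℝ → ℝ) (I : Set ℝ) (hI : Convex ℝ I)
    (hf : ContDiffOn ℝ 4 f I) (hconv'' : ConvexOn ℝ I (deriv (deriv f)))
    (a b : ℝ) (ha : a ∈ I) (hb : b ∈ I) (hab : a < b) :
    0 ≤ (1 / 6) * (f a + f b) + (2 / 3) * f ((a + b) / 2)
        - (1 / (b - a)) * ∫ t in a..b, f t ∧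
    (1 / 6) * (f a + f b) + (2 / 3) * f ((a + b) / 2)
        - (1 / (b - a)) * ∫ t in a..b, f t ≤
      (b - a) ^ 2 / 324 *
        (deriv (deriv f) a + deriv (deriv f) b - 2 * deriv (deriv f) ((a + b) / 2)) := by
  have hpos : 0 < b - a := by linarith
  have hne : b - a ≠ 0 := ne_of_gt hpos
  set m : ℝ := (a + b) / 2 with hm
  have hamlt : a < m := by rw [hm]; linarith
  have hmblt : m < b := by rw [hm]; linarith
  have ham : a ≤ m := hamlt.le
  have hmb : m ≤ b := hmblt.le
  have hsub : Icc a b ⊆ I := hI.ordConnected.out ha hb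
  have hmI : m ∈ I := hsub ⟨ham, hmb⟩
  have hfs : ContDiffOn ℝ 4 f (Icc a b) := hf.mono hsub
  have hu : UniqueDiffOn ℝ (Icc a b) := uniqueDiffOn_Icc hab
  set φ1 := iteratedDerivWithin 1 f (Icc a b) with hφ1
  set φ2 := iteratedDerivWithin 2 f (Icc a b) with hφ2
  set φ3 := iteratedDerivWithin 3 f (Icc a b) with hφ3
  set φ4 := iteratedDerivWithin 4 f (Icc a b) with hφ4
  have cont0 : ContinuousOn f (Icc a b) := hfs.continuousOn
  have cont1 : ContinuousOn φ1 (Icc a b) :=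
    hfs.continuousOn_iteratedDerivWithin (by norm_num) hu
  have cont2 : ContinuousOn φ2 (Icc a b) :=
    hfs.continuousOn_iteratedDerivWithin (by norm_num) hu
  have cont3 : ContinuousOn φ3 (Icc a b) :=
    hfs.continuousOn_iteratedDerivWithin (by norm_num) hu
  have cont4 : ContinuousOn φ4 (Icc a b) :=
    hfs.continuousOn_iteratedDerivWithin (by norm_num) hu
  have hmem : ∀ x ∈ Ioo a b, Icc a b ∈ 𝓝 x := fun x hx => Icc_mem_nhds hx.1 hx.2
  have hdiff0 : DifferentiableOn ℝ f (Icc a b) := hfs.differentiableOn (by norm_num)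
  have hdiff1 : DifferentiableOn ℝ φ1 (Icc a b) :=
    hfs.differentiableOn_iteratedDerivWithin (by norm_num) hu
  have hdiff2 : DifferentiableOn ℝ φ2 (Icc a b) :=
    hfs.differentiableOn_iteratedDerivWithin (by norm_num) hu
  have hdiff3 : DifferentiableOn ℝ φ3 (Icc a b) :=
    hfs.differentiableOn_iteratedDerivWithin (by norm_num) hu
  have hd0 : ∀ x ∈ Ioo a b, HasDerivAt f (φ1 x) x := by
    intro x hx
    have h := (hdiff0 x (Ioo_subset_Icc_self hx)).hasDerivWithinAt
    rw [hφ1, iteratedDerivWithin_one]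
    exact h.hasDerivAt (hmem x hx)
  have hd1 : ∀ x ∈ Ioo a b, HasDerivAt φ1 (φ2 x) x := by
    intro x hx
    have h := (hdiff1 x (Ioo_subset_Icc_self hx)).hasDerivWithinAt
    have heq : φ2 x = derivWithin φ1 (Icc a b) x := by
      rw [hφ2, hφ1, iteratedDerivWithin_succ]
    rw [heq]
    exact h.hasDerivAt (hmem x hx)
  have hd2 : ∀ x ∈ Ioo a b, HasDerivAt φ2 (φ3 x) x := by
    intro x hx
    have h := (hdiff2 x (Ioo_subset_Icc_self hx)).hasDerivWithinAt
    have heq : φ3 x = derivWithin φ2 (Icc a b) x := by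
      rw [hφ3, hφ2, iteratedDerivWithin_succ]
    rw [heq]
    exact h.hasDerivAt (hmem x hx)
  have hd3 : ∀ x ∈ Ioo a b, HasDerivAt φ3 (φ4 x) x := by
    intro x hx
    have h := (hdiff3 x (Ioo_subset_Icc_self hx)).hasDerivWithinAt
    have heq : φ4 x = derivWithin φ3 (Icc a b) x := by
      rw [hφ4, hφ3, iteratedDerivWithin_succ]
    rw [heq]
    exact h.hasDerivAt (hmem x hx)
  have heq2 : ∀ x ∈ Ioo a b, deriv (deriv f) x = φ2 x := by
    intro x hx
    have h1 : ∀ y ∈ Ioo a b, deriv f y = φ1 y := by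
      intro y hy
      rw [hφ1, iteratedDerivWithin_one,
        derivWithin_of_mem_nhds (hmem y hy)]
    have hee : deriv f =ᶠ[𝓝 x] φ1 := by
      filter_upwards [Ioo_mem_nhds hx.1 hx.2] with y hy using h1 y hy
    rw [hee.deriv_eq]
    exact ((hd1 x hx).deriv).symm ▸ rfl
  -- nonnegativity of the fourth derivative
  have hconvφ2 : ConvexOn ℝ (Ioo a b) φ2 :=
    (hconv''.subset (Ioo_subset_Icc_self.trans hsub) (convex_Ioo a b)).congr
      (fun x hx => heq2 x hx)
  have hmono3 : MonotoneOn φ3 (Ioo a b) := by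
    have h' := hconvφ2.monotoneOn_deriv (fun x hx => (hd2 x hx).differentiableAt)
    intro x hx y hy hxy
    have := h' hx hy hxy
    rwa [(hd2 x hx).deriv, (hd2 y hy).deriv] at this
  have h4nn : ∀ x ∈ Ioo a b, 0 ≤ φ4 x := by
    intro x hx
    have hs := hd3 x hx
    rw [hasDerivAt_iff_tendsto_slope] at hs
    have hs' : Tendsto (slope φ3 x) (𝓝[>] x) (𝓝 (φ4 x)) :=
      hs.mono_left (nhdsWithin_mono x (fun y hy => ne_of_gt hy))
    refine ge_of_tendsto hs' ?_
    filter_upwards [Ioo_mem_nhdsGT_of_mem ⟨le_refl x, hx.2⟩] with y hy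
    rw [slope_def_field]
    apply div_nonneg _ (by linarith [hy.1])
    have : φ3 x ≤ φ3 y := hmono3 hx ⟨hx.1.trans hy.1, hy.2⟩ hy.1.le
    linarith
  have hIccA : Icc a b ∈ 𝓝[>] a := by
    apply mem_nhdsWithin.2
    exact ⟨Iio b, isOpen_Iio, hab, fun y hy => ⟨hy.2.le, hy.1.le⟩⟩
  have hIccB : Icc a b ∈ 𝓝[<] b := by
    apply mem_nhdsWithin.2
    exact ⟨Ioi a, isOpen_Ioi, hab, fun y hy => ⟨hy.1.le, hy.2.le⟩⟩
  have h4a : 0 ≤ φ4 a := by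
    have hlim : Tendsto φ4 (𝓝[>] a) (𝓝 (φ4 a)) :=
      (cont4 a ⟨le_refl a, hab.le⟩).mono_left (nhdsWithin_le_of_mem hIccA)
    refine ge_of_tendsto hlim ?_
    filter_upwards [Ioo_mem_nhdsGT_of_mem ⟨le_refl a, hab⟩] with y hy using h4nn y hy
  have h4b : 0 ≤ φ4 b := by
    have hlim : Tendsto φ4 (𝓝[<] b) (𝓝 (φ4 b)) :=
      (cont4 b ⟨hab.le, le_refl b⟩).mono_left (nhdsWithin_le_of_mem hIccB)
    refine ge_of_tendsto hlim ?_
    filter_upwards [Ioo_mem_nhdsLT_of_mem ⟨hab, le_refl b⟩] with y hy using h4nn y hy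
  have h4nnIcc : ∀ x ∈ Icc a b, 0 ≤ φ4 x := by
    intro x hx
    rcases eq_or_lt_of_le hx.1 with h1 | h1
    · rwa [← h1]
    rcases eq_or_lt_of_le hx.2 with h2 | h2
    · rwa [h2]
    exact h4nn x ⟨h1, h2⟩
  -- endpoint comparisons for the second derivative
  have hgm : deriv (deriv f) m = φ2 m := heq2 m ⟨hamlt, hmblt⟩
  have hga : φ2 a ≤ deriv (deriv f) a := by
    have hlim : Tendsto φ2 (𝓝[>] a) (𝓝 (φ2 a)) :=
      (cont2 a ⟨le_refl a, hab.le⟩).mono_left (nhdsWithin_le_of_mem hIccA)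
    have hlam : Tendsto (fun x => (x - a) / (m - a)) (𝓝[>] a) (𝓝 0) := by
      have : Tendsto (fun x => (x - a) / (m - a)) (𝓝 a) (𝓝 ((a - a) / (m - a))) :=
        ((continuous_id.sub continuous_const).div_const _).tendsto a
      simpa using this.mono_left nhdsWithin_le_nhds
    have hA : Tendsto (fun x => φ2 x - (x - a) / (m - a) * deriv (deriv f) m)
        (𝓝[>] a) (𝓝 (φ2 a)) := by
      have := hlim.sub (hlam.mul_const (deriv (deriv f) m))
      simpa using this
    have hB : Tendsto (fun x => (1 - (x - a) / (m - a)) * deriv (deriv f) a)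
        (𝓝[>] a) (𝓝 (deriv (deriv f) a)) := by
      have := ((tendsto_const_nhds : Tendsto (fun _ : ℝ => (1:ℝ)) (𝓝[>] a) (𝓝 1)).sub
        hlam).mul_const (deriv (deriv f) a)
      simpa using this
    refine le_of_tendsto_of_tendsto hA hB ?_
    filter_upwards [Ioo_mem_nhdsGT_of_mem ⟨le_refl a, hamlt⟩] with x hx
    set lam := (x - a) / (m - a) with hlamdef
    have hma : 0 < m - a := by linarith
    have hl0 : 0 ≤ lam := div_nonneg (by linarith [hx.1]) hma.le
    have hl1 : lam ≤ 1 := by rw [hlamdef, div_le_one hma]; linarith [hx.2]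
    have hcx := hconv''.2 ha hmI (by linarith : (0:ℝ) ≤ 1 - lam) hl0 (by ring)
    have hxeq : (1 - lam) • a + lam • m = x := by
      simp only [smul_eq_mul, hlamdef]
      field_simp
      ring
    rw [hxeq] at hcx
    have hgx : deriv (deriv f) x = φ2 x := heq2 x ⟨hx.1, hx.2.trans hmblt⟩
    simp only [smul_eq_mul] at hcx
    rw [hgx] at hcx
    linarith
  have hgb : φ2 b ≤ deriv (deriv f) b := by
    have hlim : Tendsto φ2 (𝓝[<] b) (𝓝 (φ2 b)) :=
      (cont2 b ⟨hab.le, le_refl b⟩).mono_left (nhdsWithin_le_of_mem hIccB)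
    have hlam : Tendsto (fun x => (b - x) / (b - m)) (𝓝[<] b) (𝓝 0) := by
      have : Tendsto (fun x => (b - x) / (b - m)) (𝓝 b) (𝓝 ((b - b) / (b - m))) :=
        ((continuous_const.sub continuous_id).div_const _).tendsto b
      simpa using this.mono_left nhdsWithin_le_nhds
    have hA : Tendsto (fun x => φ2 x - (b - x) / (b - m) * deriv (deriv f) m)
        (𝓝[<] b) (𝓝 (φ2 b)) := by
      have := hlim.sub (hlam.mul_const (deriv (deriv f) m))
      simpa using this
    have hB : Tendsto (fun x => (1 - (b - x) / (b - m)) * deriv (deriv f) b)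
        (𝓝[<] b) (𝓝 (deriv (deriv f) b)) := by
      have := ((tendsto_const_nhds : Tendsto (fun _ : ℝ => (1:ℝ)) (𝓝[<] b) (𝓝 1)).sub
        hlam).mul_const (deriv (deriv f) b)
      simpa using this
    refine le_of_tendsto_of_tendsto hA hB ?_
    filter_upwards [Ioo_mem_nhdsLT_of_mem ⟨hmblt, le_refl b⟩] with x hx
    set lam := (b - x) / (b - m) with hlamdef
    have hbm : 0 < b - m := by linarith
    have hl0 : 0 ≤ lam := div_nonneg (by linarith [hx.2]) hbm.le
    have hl1 : lam ≤ 1 := by rw [hlamdef, div_le_one hbm]; linarith [hx.1]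
    have hcx := hconv''.2 hmI hb hl0 (by linarith : (0:ℝ) ≤ 1 - lam) (by ring)
    have hxeq : lam • m + (1 - lam) • b = x := by
      simp only [smul_eq_mul, hlamdef]
      field_simp
      ring
    rw [hxeq] at hcx
    have hgx : deriv (deriv f) x = φ2 x := heq2 x ⟨hamlt.trans hx.1, hx.2⟩
    simp only [smul_eq_mul] at hcx
    rw [hgx] at hcx
    linarith
  -- kernels
  set P : ℝ → ℝ := fun t => (t-a)^3*(2*(b-a)-3*(t-a))/(72*(b-a)) with hPdef
  set P1 : ℝ → ℝ := fun t => (t-a)^2*((b-a)-2*(t-a))/(12*(b-a)) with hP1def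
  set P2 : ℝ → ℝ := fun t => (t-a)*((b-a)-3*(t-a))/(6*(b-a)) with hP2def
  set P3 : ℝ → ℝ := fun t => 1/6 - (t-a)/(b-a) with hP3def
  set Q : ℝ → ℝ := fun t => (b-t)^3*(2*(b-a)-3*(b-t))/(72*(b-a)) with hQdef
  set Q1 : ℝ → ℝ := fun t => -((b-t)^2*((b-a)-2*(b-t))/(12*(b-a))) with hQ1def
  set Q2 : ℝ → ℝ := fun t => (b-t)*((b-a)-3*(b-t))/(6*(b-a)) with hQ2def
  set Q3 : ℝ → ℝ := fun t => -(1/6) + (b-t)/(b-a) with hQ3def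
  have dP : ∀ t, HasDerivAt P (P1 t) t := fun t => hdP t
  have dP1 : ∀ t, HasDerivAt P1 (P2 t) t := fun t => hdP1 t
  have dP2 : ∀ t, HasDerivAt P2 (P3 t) t := fun t => hdP2 hne t
  have dP3 : ∀ t, HasDerivAt P3 (-(1/(b-a))) t := fun t => hdP3 t
  have dQ : ∀ t, HasDerivAt Q (Q1 t) t := fun t => hdQ t
  have dQ1 : ∀ t, HasDerivAt Q1 (Q2 t) t := fun t => hdQ1 t
  have dQ2 : ∀ t, HasDerivAt Q2 (Q3 t) t := fun t => hdQ2 hne t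
  have dQ3 : ∀ t, HasDerivAt Q3 (-(1/(b-a))) t := fun t => hdQ3 t
  have hPc : Continuous P := by
    rw [continuous_iff_continuousAt]; exact fun x => (dP x).continuousAt
  have hP1c : Continuous P1 := by
    rw [continuous_iff_continuousAt]; exact fun x => (dP1 x).continuousAt
  have hP2c : Continuous P2 := by
    rw [continuous_iff_continuousAt]; exact fun x => (dP2 x).continuousAt
  have hP3c : Continuous P3 := by
    rw [continuous_iff_continuousAt]; exact fun x => (dP3 x).continuousAt
  have hQc : Continuous Q := by
    rw [continuous_iff_continuousAt]; exact fun x => (dQ x).continuousAt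
  have hQ1c : Continuous Q1 := by
    rw [continuous_iff_continuousAt]; exact fun x => (dQ1 x).continuousAt
  have hQ2c : Continuous Q2 := by
    rw [continuous_iff_continuousAt]; exact fun x => (dQ2 x).continuousAt
  have hQ3c : Continuous Q3 := by
    rw [continuous_iff_continuousAt]; exact fun x => (dQ3 x).continuousAt
  have Iam : Icc a m ⊆ Icc a b := Icc_subset_Icc le_rfl hmb
  have Imb : Icc m b ⊆ Icc a b := Icc_subset_Icc ham le_rfl
  have IooAM : Ioo a m ⊆ Ioo a b := Ioo_subset_Ioo le_rfl hmb
  have IooMB : Ioo m b ⊆ Ioo a b := Ioo_subset_Ioo ham le_rfl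
  -- integration by parts chain
  have e1a : ∫ t in a..m, P t * φ4 t
      = P m * φ3 m - P a * φ3 a - ∫ t in a..m, P1 t * φ3 t :=
    my_ibp ham dP hP1c (cont3.mono Iam) (fun x hx => hd3 x (IooAM hx)) (cont4.mono Iam)
  have e1b : ∫ t in m..b, Q t * φ4 t
      = Q b * φ3 b - Q m * φ3 m - ∫ t in m..b, Q1 t * φ3 t :=
    my_ibp hmb dQ hQ1c (cont3.mono Imb) (fun x hx => hd3 x (IooMB hx)) (cont4.mono Imb)
  have e2a : ∫ t in a..m, P1 t * φ3 t
      = P1 m * φ2 m - P1 a * φ2 a - ∫ t in a..m, P2 t * φ2 t :=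
    my_ibp ham dP1 hP2c (cont2.mono Iam) (fun x hx => hd2 x (IooAM hx)) (cont3.mono Iam)
  have e2b : ∫ t in m..b, Q1 t * φ3 t
      = Q1 b * φ2 b - Q1 m * φ2 m - ∫ t in m..b, Q2 t * φ2 t :=
    my_ibp hmb dQ1 hQ2c (cont2.mono Imb) (fun x hx => hd2 x (IooMB hx)) (cont3.mono Imb)
  have e3a : ∫ t in a..m, P2 t * φ2 t
      = P2 m * φ1 m - P2 a * φ1 a - ∫ t in a..m, P3 t * φ1 t :=
    my_ibp ham dP2 hP3c (cont1.mono Iam) (fun x hx => hd1 x (IooAM hx)) (cont2.mono Iam)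
  have e3b : ∫ t in m..b, Q2 t * φ2 t
      = Q2 b * φ1 b - Q2 m * φ1 m - ∫ t in m..b, Q3 t * φ1 t :=
    my_ibp hmb dQ2 hQ3c (cont1.mono Imb) (fun x hx => hd1 x (IooMB hx)) (cont2.mono Imb)
  have e4a : ∫ t in a..m, P3 t * φ1 t
      = P3 m * f m - P3 a * f a - ∫ t in a..m, (fun _ : ℝ => -(1/(b-a))) t * f t :=
    my_ibp (u' := fun _ : ℝ => -(1/(b-a))) ham dP3 continuous_const (cont0.mono Iam)
      (fun x hx => hd0 x (IooAM hx)) (cont1.mono Iam)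
  have e4b : ∫ t in m..b, Q3 t * φ1 t
      = Q3 b * f b - Q3 m * f m - ∫ t in m..b, (fun _ : ℝ => -(1/(b-a))) t * f t :=
    my_ibp (u' := fun _ : ℝ => -(1/(b-a))) hmb dQ3 continuous_const (cont0.mono Imb)
      (fun x hx => hd0 x (IooMB hx)) (cont1.mono Imb)
  have c4a : ∫ t in a..m, (fun _ : ℝ => -(1/(b-a))) t * f t
      = -((1/(b-a)) * ∫ t in a..m, f t) := by
    simp only []
    rw [intervalIntegral.integral_const_mul, neg_mul]
  have c4b : ∫ t in m..b, (fun _ : ℝ => -(1/(b-a))) t * f t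
      = -((1/(b-a)) * ∫ t in m..b, f t) := by
    simp only []
    rw [intervalIntegral.integral_const_mul, neg_mul]
  -- kernel boundary values
  have vPa : P a = 0 := by simp only [hPdef]; ring
  have vQb : Q b = 0 := by simp only [hQdef]; ring
  have vPm : P m = Q m := by simp only [hPdef, hQdef]; rw [hm]; ring
  have vP1a : P1 a = 0 := by simp only [hP1def]; ring
  have vP1m : P1 m = 0 := by simp only [hP1def]; rw [hm]; ring
  have vQ1m : Q1 m = 0 := by simp only [hQ1def]; rw [hm]; ring
  have vQ1b : Q1 b = 0 := by simp only [hQ1def]; ring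
  have vP2a : P2 a = 0 := by simp only [hP2def]; ring
  have vP2m : P2 m = -((b-a)/24) := by
    simp only [hP2def]; rw [hm]; field_simp; ring
  have vQ2m : Q2 m = -((b-a)/24) := by
    simp only [hQ2def]; rw [hm]; field_simp; ring
  have vQ2b : Q2 b = 0 := by simp only [hQ2def]; ring
  have vP3a : P3 a = 1/6 := by simp only [hP3def]; simp
  have vP3m : P3 m = -(1/3) := by
    simp only [hP3def]; rw [hm]; field_simp; ring
  have vQ3m : Q3 m = 1/3 := by
    simp only [hQ3def]; rw [hm]; field_simp; ring
  have vQ3b : Q3 b = -(1/6) := by simp only [hQ3def]; simp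
  -- splitting the integral of f
  have i1 : IntervalIntegrable f volume a m :=
    ContinuousOn.intervalIntegrable (by rw [uIcc_of_le ham]; exact cont0.mono Iam)
  have i2 : IntervalIntegrable f volume m b :=
    ContinuousOn.intervalIntegrable (by rw [uIcc_of_le hmb]; exact cont0.mono Imb)
  have hsplitf : ∫ t in a..b, f t = (∫ t in a..m, f t) + ∫ t in m..b, f t :=
    (integral_add_adjacent_intervals i1 i2).symm
  -- the main identity
  have Sid : (∫ t in a..m, P t * φ4 t) + ∫ t in m..b, Q t * φ4 t
      = (1 / 6) * (f a + f b) + (2 / 3) * f m - (1 / (b - a)) * ∫ t in a..b, f t := by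
    rw [vPa, vPm] at e1a
    rw [vQb] at e1b
    rw [vP1a, vP1m] at e2a
    rw [vQ1b, vQ1m] at e2b
    rw [vP2a, vP2m] at e3a
    rw [vQ2b, vQ2m] at e3b
    rw [vP3a, vP3m, c4a] at e4a
    rw [vQ3b, vQ3m, c4b] at e4b
    rw [hsplitf]
    linarith [e1a, e1b, e2a, e2b, e3a, e3b, e4a, e4b]
  -- the weight identity
  have ftc3a : ∫ t in a..m, φ3 t = φ2 m - φ2 a :=
    integral_eq_sub_of_hasDeriv_right_of_le ham (cont2.mono Iam)
      (fun x hx => (hd2 x (IooAM hx)).hasDerivWithinAt)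
      (ContinuousOn.intervalIntegrable (by rw [uIcc_of_le ham]; exact cont3.mono Iam))
  have ftc3b : ∫ t in m..b, φ3 t = φ2 b - φ2 m :=
    integral_eq_sub_of_hasDeriv_right_of_le hmb (cont2.mono Imb)
      (fun x hx => (hd2 x (IooMB hx)).hasDerivWithinAt)
      (ContinuousOn.intervalIntegrable (by rw [uIcc_of_le hmb]; exact cont3.mono Imb))
  have w1 : ∫ t in a..m, (t - a) * φ4 t
      = (m - a) * φ3 m - (a - a) * φ3 a - ∫ t in a..m, (fun _ : ℝ => (1:ℝ)) t * φ3 t :=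
    my_ibp (u := fun t => t - a) (u' := fun _ : ℝ => (1:ℝ)) ham
      (fun t => (hasDerivAt_id t).sub_const a) continuous_const (cont3.mono Iam)
      (fun x hx => hd3 x (IooAM hx)) (cont4.mono Iam)
  have w2 : ∫ t in m..b, (b - t) * φ4 t
      = (b - b) * φ3 b - (b - m) * φ3 m - ∫ t in m..b, (fun _ : ℝ => (-1:ℝ)) t * φ3 t :=
    my_ibp (u := fun t => b - t) (u' := fun _ : ℝ => (-1:ℝ)) hmb
      (fun t => (hasDerivAt_id t).const_sub b) continuous_const (cont3.mono Imb)
      (fun x hx => hd3 x (IooMB hx)) (cont4.mono Imb)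
  have cw1 : ∫ t in a..m, (fun _ : ℝ => (1:ℝ)) t * φ3 t = φ2 m - φ2 a := by
    simp only [one_mul]
    exact ftc3a
  have cw2 : ∫ t in m..b, (fun _ : ℝ => (-1:ℝ)) t * φ3 t = -(φ2 b - φ2 m) := by
    simp only [neg_one_mul]
    rw [intervalIntegral.integral_neg, ftc3b]
  have hmm2 : m - a = b - m := by rw [hm]; ring
  have Wid : (∫ t in a..m, (t - a) * φ4 t) + ∫ t in m..b, (b - t) * φ4 t
      = φ2 a + φ2 b - 2 * φ2 m := by
    rw [w1, w2, cw1, cw2, hmm2]; ring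
  -- kernel bounds
  have kerP : ∀ t ∈ Icc a m, 0 ≤ P t ∧ P t ≤ (b - a)^2/324 * (t - a) := by
    intro t ht
    have hX0 : 0 ≤ t - a := by linarith [ht.1]
    have hX2 : t - a ≤ (b - a)/2 := by
      have h2 := ht.2; rw [hm] at h2; linarith
    constructor
    · simp only [hPdef]; exact ker_nonneg hpos hX0 hX2
    · simp only [hPdef]; exact ker_le hpos hX0 hX2
  have kerQ : ∀ t ∈ Icc m b, 0 ≤ Q t ∧ Q t ≤ (b - a)^2/324 * (b - t) := by
    intro t ht
    have hX0 : 0 ≤ b - t := by linarith [ht.2]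
    have hX2 : b - t ≤ (b - a)/2 := by
      have h1 := ht.1; rw [hm] at h1; linarith
    constructor
    · simp only [hQdef]; exact ker_nonneg hpos hX0 hX2
    · simp only [hQdef]; exact ker_le hpos hX0 hX2
  -- nonnegativity (lower bound)
  have l1 : 0 ≤ ∫ t in a..m, P t * φ4 t :=
    integral_nonneg ham (fun u hu => mul_nonneg (kerP u hu).1 (h4nnIcc u (Iam hu)))
  have l2 : 0 ≤ ∫ t in m..b, Q t * φ4 t :=
    integral_nonneg hmb (fun u hu => mul_nonneg (kerQ u hu).1 (h4nnIcc u (Imb hu)))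
  -- upper bound comparison
  have intP : IntervalIntegrable (fun t => P t * φ4 t) volume a m :=
    ContinuousOn.intervalIntegrable
      (by rw [uIcc_of_le ham]; exact hPc.continuousOn.mul (cont4.mono Iam))
  have intQ : IntervalIntegrable (fun t => Q t * φ4 t) volume m b :=
    ContinuousOn.intervalIntegrable
      (by rw [uIcc_of_le hmb]; exact hQc.continuousOn.mul (cont4.mono Imb))
  have intCa : IntervalIntegrable (fun t => (b - a)^2/324 * ((t - a) * φ4 t)) volume a m :=
    ContinuousOn.intervalIntegrable (by
      rw [uIcc_of_le ham]
      exact continuousOn_const.mul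
        (((continuous_id.sub continuous_const).continuousOn).mul (cont4.mono Iam)))
  have intCb : IntervalIntegrable (fun t => (b - a)^2/324 * ((b - t) * φ4 t)) volume m b :=
    ContinuousOn.intervalIntegrable (by
      rw [uIcc_of_le hmb]
      exact continuousOn_const.mul
        (((continuous_const.sub continuous_id).continuousOn).mul (cont4.mono Imb)))
  have u1 : ∫ t in a..m, P t * φ4 t
      ≤ (b - a)^2/324 * ∫ t in a..m, (t - a) * φ4 t := by
    rw [← intervalIntegral.integral_const_mul]
    apply integral_mono_on ham intP intCa
    intro x hx
    calc P x * φ4 x ≤ ((b - a)^2/324 * (x - a)) * φ4 x :=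
          mul_le_mul_of_nonneg_right (kerP x hx).2 (h4nnIcc x (Iam hx))
      _ = (b - a)^2/324 * ((x - a) * φ4 x) := by ring
  have u2 : ∫ t in m..b, Q t * φ4 t
      ≤ (b - a)^2/324 * ∫ t in m..b, (b - t) * φ4 t := by
    rw [← intervalIntegral.integral_const_mul]
    apply integral_mono_on hmb intQ intCb
    intro x hx
    calc Q x * φ4 x ≤ ((b - a)^2/324 * (b - x)) * φ4 x :=
          mul_le_mul_of_nonneg_right (kerQ x hx).2 (h4nnIcc x (Imb hx))
      _ = (b - a)^2/324 * ((b - x) * φ4 x) := by ring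
  constructor
  · rw [← Sid]
    exact add_nonneg l1 l2
  · calc (1 / 6) * (f a + f b) + (2 / 3) * f m - (1 / (b - a)) * ∫ t in a..b, f t
        = (∫ t in a..m, P t * φ4 t) + ∫ t in m..b, Q t * φ4 t := Sid.symm
      _ ≤ (b - a)^2/324 * (∫ t in a..m, (t - a) * φ4 t)
            + (b - a)^2/324 * ∫ t in m..b, (b - t) * φ4 t := add_le_add u1 u2
      _ = (b - a)^2/324 * (φ2 a + φ2 b - 2 * φ2 m) := by rw [← mul_add, Wid]
      _ ≤ (b - a) ^ 2 / 324 *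
            (deriv (deriv f) a + deriv (deriv f) b - 2 * deriv (deriv f) m) := by
          apply mul_le_mul_of_nonneg_left _ (by positivity)
          rw [hgm]
          linarith [hga, hgb]
end

section
/- Let f : ℝ → ℝ be four times continuously differentiable on an interval I with f'' concave on I. Then for all a, b ∈ I with a < b: 0 ≤ (1/(b-a)) ∫_a^b f(t) dt − (1/6)[ f(a) + f(b) + 4 f((a+b)/2) ] ≤ ((b-a)^2/324) [ 2 f''((a+b)/2) − (f''(a) + f''(b)) ]. -/
open MeasureTheory intervalIntegral Set

set_option maxHeartbeats 1600000 in
/-- **Theorem 4, second part.** If `f ∈ C⁴(I)` and `f''` is concave on the interval `I`,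
then for `a, b ∈ I` with `a < b`,
`0 ≤ (1/(b-a)) ∫_a^b f - (1/6)[f a + f b + 4 f((a+b)/2)]
   ≤ ((b-a)²/324)[2 f''((a+b)/2) - (f''(a) + f''(b))]`. -/
theorem stmt_9 (f : ℝ → ℝ) (I : Set ℝ) (hI : Convex ℝ I)
    (hf : ContDiffOn ℝ 4 f I) (hconc'' : ConcaveOn ℝ I (deriv (deriv f)))
    (a b : ℝ) (ha : a ∈ I) (hb : b ∈ I) (hab : a < b) :
    0 ≤ (1 / (b - a)) * (∫ t in a..b, f t)
        - (1 / 6) * (f a + f b + 4 * f ((a + b) / 2)) ∧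
    (1 / (b - a)) * (∫ t in a..b, f t)
        - (1 / 6) * (f a + f b + 4 * f ((a + b) / 2)) ≤
      (b - a) ^ 2 / 324 *
        (2 * deriv (deriv f) ((a + b) / 2) - (deriv (deriv f) a + deriv (deriv f) b)) := by
  have hab' : a ≤ b := hab.le
  have hba : b - a ≠ 0 := sub_ne_zero.mpr hab.ne'
  set m : ℝ := (a + b) / 2 with hm
  set h : ℝ := (b - a) / 2 with hh
  have hh0 : 0 < h := by simp only [hh]; linarith
  have hIcc : Set.Icc a b ⊆ I := hI.ordConnected.out ha hb
  have hIoo : Set.Ioo a b ⊆ interior I := by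
    rw [← interior_Icc]; exact interior_mono hIcc
  have hmIoo : m ∈ Set.Ioo a b := ⟨by simp only [hm]; linarith, by simp only [hm]; linarith⟩
  have huniq : UniqueDiffOn ℝ I := uniqueDiffOn_convex hI ⟨m, hIoo hmIoo⟩
  set f1 : ℝ → ℝ := derivWithin f I with hf1def
  set f2 : ℝ → ℝ := derivWithin f1 I with hf2def
  set f3 : ℝ → ℝ := derivWithin f2 I with hf3def
  have hf1 : ContDiffOn ℝ 3 f1 I := hf.derivWithin huniq (by norm_num)
  have hf2 : ContDiffOn ℝ 2 f2 I := hf1.derivWithin huniq (by norm_num)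
  have hf3 : ContDiffOn ℝ 1 f3 I := hf2.derivWithin huniq (by norm_num)
  have hd1 : ∀ x ∈ I, HasDerivWithinAt f (f1 x) I x := fun x hx =>
    ((hf.differentiableOn (by norm_num)) x hx).hasDerivWithinAt
  have hd2 : ∀ x ∈ I, HasDerivWithinAt f1 (f2 x) I x := fun x hx =>
    ((hf1.differentiableOn (by norm_num)) x hx).hasDerivWithinAt
  have hd3 : ∀ x ∈ I, HasDerivWithinAt f2 (f3 x) I x := fun x hx =>
    ((hf2.differentiableOn (by norm_num)) x hx).hasDerivWithinAt
  have hD1 : ∀ x ∈ Set.Ioo a b, HasDerivAt f (f1 x) x := fun x hx =>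
    (hd1 x (hIcc (Ioo_subset_Icc_self hx))).hasDerivAt (mem_interior_iff_mem_nhds.1 (hIoo hx))
  have hD2 : ∀ x ∈ Set.Ioo a b, HasDerivAt f1 (f2 x) x := fun x hx =>
    (hd2 x (hIcc (Ioo_subset_Icc_self hx))).hasDerivAt (mem_interior_iff_mem_nhds.1 (hIoo hx))
  have hD3 : ∀ x ∈ Set.Ioo a b, HasDerivAt f2 (f3 x) x := fun x hx =>
    (hd3 x (hIcc (Ioo_subset_Icc_self hx))).hasDerivAt (mem_interior_iff_mem_nhds.1 (hIoo hx))
  -- deriv (deriv f) = f2 on Ioo a b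
  have hphi : ∀ x ∈ Set.Ioo a b, deriv (deriv f) x = f2 x := by
    intro x hx
    have hev : deriv f =ᶠ[nhds x] f1 := by
      filter_upwards [isOpen_Ioo.mem_nhds hx] with y hy
      exact (hD1 y hy).deriv
    rw [hev.deriv_eq]
    exact (hD2 x hx).deriv
  -- f3 is antitone on Ioo a b
  have hanti3 : AntitoneOn f3 (Set.Ioo a b) := by
    have hsub : Set.Ioo a b ⊆ I := fun x hx => hIcc (Ioo_subset_Icc_self hx)
    have hc2 : ConcaveOn ℝ (Set.Ioo a b) f2 := by
      refine ⟨convex_Ioo a b, fun x hx y hy p q hp hq hpq => ?_⟩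
      have hmem : p • x + q • y ∈ Set.Ioo a b := (convex_Ioo a b) hx hy hp hq hpq
      rw [← hphi _ hmem, ← hphi _ hx, ← hphi _ hy]
      exact hconc''.2 (hsub hx) (hsub hy) hp hq hpq
    have hmono := hc2.antitoneOn_deriv (fun x hx => (hD3 x hx).differentiableAt)
    intro x hx y hy hxy
    have := hmono hx hy hxy
    rwa [(hD3 x hx).deriv, (hD3 y hy).deriv] at this
  -- endpoint comparison
  have hcont2 : ContinuousOn f2 (Set.Icc a b) := (hf2.continuousOn).mono hIcc
  have hconcave_le : ∀ z ∈ Set.Ioo a b,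
      ((b - z) * deriv (deriv f) a + (z - a) * deriv (deriv f) b) / (b - a) ≤ f2 z := by
    intro z hz
    rw [← hphi z hz]
    have hp : (0:ℝ) ≤ (b - z)/(b-a) := div_nonneg (by linarith [hz.2]) (by linarith)
    have hq : (0:ℝ) ≤ (z - a)/(b-a) := div_nonneg (by linarith [hz.1]) (by linarith)
    have hpq : (b-z)/(b-a) + (z-a)/(b-a) = 1 := by field_simp; ring
    have hcc := hconc''.2 ha hb hp hq hpq
    have hcomb : ((b-z)/(b-a)) • a + ((z-a)/(b-a)) • b = z := by
      simp only [smul_eq_mul]; field_simp; ring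
    rw [hcomb] at hcc
    calc ((b - z) * deriv (deriv f) a + (z - a) * deriv (deriv f) b) / (b - a)
        = ((b-z)/(b-a)) • deriv (deriv f) a + ((z-a)/(b-a)) • deriv (deriv f) b := by
          simp only [smul_eq_mul]; ring
      _ ≤ deriv (deriv f) z := hcc
  have hLc : Continuous (fun z : ℝ =>
      ((b - z) * deriv (deriv f) a + (z - a) * deriv (deriv f) b) / (b - a)) := by fun_prop
  have henda : deriv (deriv f) a ≤ f2 a := by
    have hlim : Filter.Tendsto f2 (nhdsWithin a (Set.Ioi a)) (nhds (f2 a)) :=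
      (hcont2 a (Set.left_mem_Icc.2 hab')).tendsto.mono_left
        (nhdsWithin_le_of_mem (Icc_mem_nhdsGT_of_mem ⟨le_refl a, hab⟩))
    have hlimL : Filter.Tendsto (fun z : ℝ =>
        ((b - z) * deriv (deriv f) a + (z - a) * deriv (deriv f) b) / (b - a))
        (nhdsWithin a (Set.Ioi a)) (nhds (deriv (deriv f) a)) := by
      have := (hLc.tendsto a).mono_left (nhdsWithin_le_nhds (s := Set.Ioi a))
      convert this using 2
      field_simp; ring
    refine le_of_tendsto_of_tendsto hlimL hlim ?_
    filter_upwards [Ioo_mem_nhdsGT_of_mem (Set.mem_Ico.2 ⟨le_refl a, hab⟩)] with z hz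
    exact hconcave_le z hz
  have hendb : deriv (deriv f) b ≤ f2 b := by
    have hlim : Filter.Tendsto f2 (nhdsWithin b (Set.Iio b)) (nhds (f2 b)) :=
      (hcont2 b (Set.right_mem_Icc.2 hab')).tendsto.mono_left
        (nhdsWithin_le_of_mem (Icc_mem_nhdsLT_of_mem ⟨hab, le_refl b⟩))
    have hlimL : Filter.Tendsto (fun z : ℝ =>
        ((b - z) * deriv (deriv f) a + (z - a) * deriv (deriv f) b) / (b - a))
        (nhdsWithin b (Set.Iio b)) (nhds (deriv (deriv f) b)) := by
      have := (hLc.tendsto b).mono_left (nhdsWithin_le_nhds (s := Set.Iio b))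
      convert this using 2
      field_simp; ring
    refine le_of_tendsto_of_tendsto hlimL hlim ?_
    filter_upwards [Ioo_mem_nhdsLT_of_mem (Set.mem_Ioc.2 ⟨hab, le_refl b⟩)] with z hz
    exact hconcave_le z hz
  -- clamped functions
  set π : ℝ → ℝ := fun x => max a (min b x) with hπdef
  have hπc : Continuous π := continuous_const.max (continuous_const.min continuous_id)
  have hπmem : ∀ x, π x ∈ Set.Icc a b := fun x => ⟨le_max_left _ _, max_le hab' (min_le_left _ _)⟩
  have hπid : ∀ x ∈ Set.Icc a b, π x = x := fun x hx => by
    simp only [hπdef]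
    rw [min_eq_right hx.2, max_eq_right hx.1]
  set ft : ℝ → ℝ := fun x => f (π x) with hftdef
  set f1t : ℝ → ℝ := fun x => f1 (π x) with hf1tdef
  set f2t : ℝ → ℝ := fun x => f2 (π x) with hf2tdef
  set f3t : ℝ → ℝ := fun x => f3 (π x) with hf3tdef
  have hftc : Continuous ft := (hf.continuousOn.mono hIcc).comp_continuous hπc hπmem
  have hf1tc : Continuous f1t := (hf1.continuousOn.mono hIcc).comp_continuous hπc hπmem
  have hf2tc : Continuous f2t := (hf2.continuousOn.mono hIcc).comp_continuous hπc hπmem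
  have hf3tc : Continuous f3t := (hf3.continuousOn.mono hIcc).comp_continuous hπc hπmem
  have heqft : ∀ x ∈ Set.Icc a b, ft x = f x := fun x hx => by
    simp only [hftdef]; rw [hπid x hx]
  have heqf2t : ∀ x ∈ Set.Icc a b, f2t x = f2 x := fun x hx => by
    simp only [hf2tdef]; rw [hπid x hx]
  have heqf3t : ∀ x ∈ Set.Icc a b, f3t x = f3 x := fun x hx => by
    simp only [hf3tdef]; rw [hπid x hx]
  have hev : ∀ (g : ℝ → ℝ), ∀ x ∈ Set.Ioo a b, (fun y => g (π y)) =ᶠ[nhds x] g := by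
    intro g x hx
    filter_upwards [isOpen_Ioo.mem_nhds hx] with y hy
    rw [hπid y (Ioo_subset_Icc_self hy)]
  have hU1 : ∀ x ∈ Set.Ioo a b, HasDerivAt ft (f1t x) x := fun x hx => by
    have := (hD1 x hx).congr_of_eventuallyEq (hev f x hx)
    rwa [show f1t x = f1 x from by simp only [hf1tdef]; rw [hπid x (Ioo_subset_Icc_self hx)]]
  have hU2 : ∀ x ∈ Set.Ioo a b, HasDerivAt f1t (f2t x) x := fun x hx => by
    have := (hD2 x hx).congr_of_eventuallyEq (hev f1 x hx)
    rwa [show f2t x = f2 x from by simp only [hf2tdef]; rw [hπid x (Ioo_subset_Icc_self hx)]]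
  have hU3 : ∀ x ∈ Set.Ioo a b, HasDerivAt f2t (f3t x) x := fun x hx => by
    have := (hD3 x hx).congr_of_eventuallyEq (hev f2 x hx)
    rwa [show f3t x = f3 x from by simp only [hf3tdef]; rw [hπid x (Ioo_subset_Icc_self hx)]]
  have hmemp : ∀ t ∈ Set.Ico 0 h, m + t ∈ Set.Ioo a b := fun t ht =>
    ⟨by simp only [hm]; linarith [ht.1], by simp only [hm, hh] at *; linarith [ht.2]⟩
  have hmemm : ∀ t ∈ Set.Ico 0 h, m - t ∈ Set.Ioo a b := fun t ht =>
    ⟨by simp only [hm, hh] at *; linarith [ht.2], by simp only [hm]; linarith [ht.1]⟩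
  have hT1 : ∀ t ∈ Set.Ico 0 h, HasDerivAt ft (f1t (m + t)) (m + t) :=
    fun t ht => hU1 _ (hmemp t ht)
  have hT1' : ∀ t ∈ Set.Ico 0 h, HasDerivAt ft (f1t (m - t)) (m - t) :=
    fun t ht => hU1 _ (hmemm t ht)
  have hT2 : ∀ t ∈ Set.Ico 0 h, HasDerivAt f1t (f2t (m + t)) (m + t) :=
    fun t ht => hU2 _ (hmemp t ht)
  have hT2' : ∀ t ∈ Set.Ico 0 h, HasDerivAt f1t (f2t (m - t)) (m - t) :=
    fun t ht => hU2 _ (hmemm t ht)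
  have hT3 : ∀ t ∈ Set.Ico 0 h, HasDerivAt f2t (f3t (m + t)) (m + t) :=
    fun t ht => hU3 _ (hmemp t ht)
  have hT3' : ∀ t ∈ Set.Ico 0 h, HasDerivAt f2t (f3t (m - t)) (m - t) :=
    fun t ht => hU3 _ (hmemm t ht)
  have hanti : ∀ t ∈ Set.Ioo 0 h, f3t (m + t) ≤ f3t (m - t) := by
    intro t ht
    have htI : t ∈ Set.Ico 0 h := ⟨ht.1.le, ht.2⟩
    have hp := hmemp t htI
    have hq := hmemm t htI
    rw [heqf3t _ (Ioo_subset_Icc_self hp), heqf3t _ (Ioo_subset_Icc_self hq)]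
    exact hanti3 hq hp (by linarith [ht.1])
  set K : ℝ → ℝ := fun t => 2 * f2t m - (f2t (m + t) + f2t (m - t)) with hKdef
  set kK : ℝ → ℝ := fun t => f3t (m - t) - f3t (m + t) with hkKdef
  have hKc : Continuous K := by fun_prop
  have hkKc : Continuous kK := by fun_prop
  have hKd : ∀ t ∈ Set.Ico 0 h, HasDerivAt K (kK t) t := by
    intro t ht
    have h1 : HasDerivAt (fun t : ℝ => f2t (m + t)) (f3t (m + t) * 1) t :=
      (hT3 t ht).comp t ((hasDerivAt_id t).const_add m)
    have h2 : HasDerivAt (fun t : ℝ => f2t (m - t)) (f3t (m - t) * (-1)) t :=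
      (hT3' t ht).comp t ((hasDerivAt_id t).const_sub m)
    have := (h1.add h2).const_sub (2 * f2t m)
    refine this.congr_deriv ?_
    simp only [hkKdef]; ring
  set G : ℝ → ℝ := fun u => ∫ x in m..u, ft x with hGdef
  have hGd : ∀ u : ℝ, HasDerivAt G (ft u) u := fun u =>
    (hftc.integral_hasStrictDerivAt m u).hasDerivAt
  have hGc : Continuous G :=
    continuous_iff_continuousAt.2 fun u => (hGd u).differentiableAt.continuousAt
  -- the F chain
  set F0 : ℝ → ℝ := fun t => G (m + t) - G (m - t) - t/3 * (ft (m+t) + ft (m-t) + 4 * ft m)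
    with hF0def
  set F1 : ℝ → ℝ := fun t => 2/3 * (ft (m+t) + ft (m-t) - 2 * ft m)
    - t/3 * (f1t (m+t) - f1t (m-t)) with hF1def
  set F2 : ℝ → ℝ := fun t => 1/3 * (f1t (m+t) - f1t (m-t))
    - t/3 * (f2t (m+t) + f2t (m-t)) with hF2def
  set F3 : ℝ → ℝ := fun t => t/3 * kK t with hF3def
  have hF0c : Continuous F0 := by fun_prop
  have hF1c : Continuous F1 := by fun_prop
  have hF2c : Continuous F2 := by fun_prop
  have hF0d : ∀ t ∈ Set.Ico 0 h, HasDerivAt F0 (F1 t) t := by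
    intro t ht
    have hA : HasDerivAt (fun t : ℝ => G (m + t)) (ft (m + t) * 1) t :=
      (hGd (m + t)).comp t ((hasDerivAt_id t).const_add m)
    have hB : HasDerivAt (fun t : ℝ => G (m - t)) (ft (m - t) * (-1)) t :=
      (hGd (m - t)).comp t ((hasDerivAt_id t).const_sub m)
    have hs1 : HasDerivAt (fun t : ℝ => ft (m + t)) (f1t (m + t) * 1) t :=
      (hT1 t ht).comp t ((hasDerivAt_id t).const_add m)
    have hs2 : HasDerivAt (fun t : ℝ => ft (m - t)) (f1t (m - t) * (-1)) t :=
      (hT1' t ht).comp t ((hasDerivAt_id t).const_sub m)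
    have hS : HasDerivAt (fun t : ℝ => ft (m+t) + ft (m-t) + 4 * ft m)
        (f1t (m + t) * 1 + f1t (m - t) * (-1)) t := (hs1.add hs2).add_const _
    have hP : HasDerivAt (fun t : ℝ => t/3 * (ft (m+t) + ft (m-t) + 4 * ft m))
        (1/3 * (ft (m+t) + ft (m-t) + 4 * ft m)
          + t/3 * (f1t (m + t) * 1 + f1t (m - t) * (-1))) t :=
      ((hasDerivAt_id t).div_const 3).mul hS
    have := (hA.sub hB).sub hP
    refine this.congr_deriv ?_
    simp only [hF1def]; ring
  have hF1d : ∀ t ∈ Set.Ico 0 h, HasDerivAt F1 (F2 t) t := by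
    intro t ht
    have hs1 : HasDerivAt (fun t : ℝ => ft (m + t)) (f1t (m + t) * 1) t :=
      (hT1 t ht).comp t ((hasDerivAt_id t).const_add m)
    have hs2 : HasDerivAt (fun t : ℝ => ft (m - t)) (f1t (m - t) * (-1)) t :=
      (hT1' t ht).comp t ((hasDerivAt_id t).const_sub m)
    have hq1 : HasDerivAt (fun t : ℝ => f1t (m + t)) (f2t (m + t) * 1) t :=
      (hT2 t ht).comp t ((hasDerivAt_id t).const_add m)
    have hq2 : HasDerivAt (fun t : ℝ => f1t (m - t)) (f2t (m - t) * (-1)) t :=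
      (hT2' t ht).comp t ((hasDerivAt_id t).const_sub m)
    have hS : HasDerivAt (fun t : ℝ => ft (m+t) + ft (m-t) - 2 * ft m)
        (f1t (m + t) * 1 + f1t (m - t) * (-1)) t := (hs1.add hs2).sub_const _
    have hSc := hS.const_mul (2/3 : ℝ)
    have hQ : HasDerivAt (fun t : ℝ => f1t (m+t) - f1t (m-t))
        (f2t (m + t) * 1 - f2t (m - t) * (-1)) t := hq1.sub hq2
    have hP : HasDerivAt (fun t : ℝ => t/3 * (f1t (m+t) - f1t (m-t)))
        (1/3 * (f1t (m+t) - f1t (m-t)) + t/3 * (f2t (m + t) * 1 - f2t (m - t) * (-1))) t :=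
      ((hasDerivAt_id t).div_const 3).mul hQ
    have := hSc.sub hP
    refine this.congr_deriv ?_
    simp only [hF2def]; ring
  have hF2d : ∀ t ∈ Set.Ico 0 h, HasDerivAt F2 (F3 t) t := by
    intro t ht
    have hq1 : HasDerivAt (fun t : ℝ => f1t (m + t)) (f2t (m + t) * 1) t :=
      (hT2 t ht).comp t ((hasDerivAt_id t).const_add m)
    have hq2 : HasDerivAt (fun t : ℝ => f1t (m - t)) (f2t (m - t) * (-1)) t :=
      (hT2' t ht).comp t ((hasDerivAt_id t).const_sub m)
    have hr1 : HasDerivAt (fun t : ℝ => f2t (m + t)) (f3t (m + t) * 1) t :=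
      (hT3 t ht).comp t ((hasDerivAt_id t).const_add m)
    have hr2 : HasDerivAt (fun t : ℝ => f2t (m - t)) (f3t (m - t) * (-1)) t :=
      (hT3' t ht).comp t ((hasDerivAt_id t).const_sub m)
    have hQ := (hq1.sub hq2).const_mul (1/3 : ℝ)
    have hP : HasDerivAt (fun t : ℝ => t/3 * (f2t (m+t) + f2t (m-t)))
        (1/3 * (f2t (m+t) + f2t (m-t)) + t/3 * (f3t (m + t) * 1 + f3t (m - t) * (-1))) t :=
      ((hasDerivAt_id t).div_const 3).mul (hr1.add hr2)
    have := hQ.sub hP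
    refine this.congr_deriv ?_
    simp only [hF3def, hkKdef]; ring
  -- the B chain
  set J0 : ℝ → ℝ := fun u => ∫ t in (0:ℝ)..u, K t with hJ0def
  set J1 : ℝ → ℝ := fun u => ∫ t in (0:ℝ)..u, t * K t with hJ1def
  set J2 : ℝ → ℝ := fun u => ∫ t in (0:ℝ)..u, t^2 * K t with hJ2def
  have hJ0d : ∀ u : ℝ, HasDerivAt J0 (K u) u := fun u =>
    (hKc.integral_hasStrictDerivAt 0 u).hasDerivAt
  have hJ1d : ∀ u : ℝ, HasDerivAt J1 (u * K u) u := fun u =>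
    (((continuous_id.mul hKc)).integral_hasStrictDerivAt 0 u).hasDerivAt
  have hJ2d : ∀ u : ℝ, HasDerivAt J2 (u^2 * K u) u := fun u =>
    ((((continuous_pow 2).mul hKc)).integral_hasStrictDerivAt 0 u).hasDerivAt
  have hJ0c : Continuous J0 :=
    continuous_iff_continuousAt.2 fun u => (hJ0d u).differentiableAt.continuousAt
  have hJ1c : Continuous J1 :=
    continuous_iff_continuousAt.2 fun u => (hJ1d u).differentiableAt.continuousAt
  have hJ2c : Continuous J2 :=
    continuous_iff_continuousAt.2 fun u => (hJ2d u).differentiableAt.continuousAt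
  set B2 : ℝ → ℝ := fun s => 1/3 * (s * K s - J0 s) with hB2def
  set B1 : ℝ → ℝ := fun u => -(1/3) * (u * J0 u - 2 * J1 u) with hB1def
  set B0 : ℝ → ℝ := fun u => -(1/6) * (u^2 * J0 u - 4*u*J1 u + 3*J2 u) with hB0def
  have hB2c : Continuous B2 := by fun_prop
  have hB1c : Continuous B1 := by fun_prop
  have hB0c : Continuous B0 := by fun_prop
  have hB2d : ∀ t ∈ Set.Ico 0 h, HasDerivAt B2 (F3 t) t := by
    intro t ht
    have := (((hasDerivAt_id t).mul (hKd t ht)).sub (hJ0d t)).const_mul (1/3 : ℝ)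
    refine this.congr_deriv ?_
    simp only [hF3def, id_eq]; ring
  have hB1d : ∀ u : ℝ, HasDerivAt B1 (B2 u) u := by
    intro u
    have := (((hasDerivAt_id u).mul (hJ0d u)).sub ((hJ1d u).const_mul 2)).const_mul (-(1/3) : ℝ)
    refine this.congr_deriv ?_
    simp only [hB2def, id_eq]; ring
  have hB0d : ∀ u : ℝ, HasDerivAt B0 (B1 u) u := by
    intro u
    have h1 := (hasDerivAt_pow 2 u).mul (hJ0d u)
    have h2 := ((hasDerivAt_id u).const_mul (4:ℝ)).mul (hJ1d u)
    have h3 := (hJ2d u).const_mul (3:ℝ)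
    have := ((h1.sub h2).add h3).const_mul (-(1/6) : ℝ)
    refine this.congr_deriv ?_
    simp only [hB1def, id_eq]; push_cast; ring
  -- F = B on [0, h]
  have hEq2 : ∀ t ∈ Set.Icc 0 h, F2 t = B2 t := by
    refine eq_of_has_deriv_right_eq (f' := F3)
      (fun t ht => (hF2d t ht).hasDerivWithinAt)
      (fun t ht => (hB2d t ht).hasDerivWithinAt)
      hF2c.continuousOn hB2c.continuousOn ?_
    simp [hF2def, hB2def, hJ0def]
  have hEq1 : ∀ t ∈ Set.Icc 0 h, F1 t = B1 t := by
    refine eq_of_has_deriv_right_eq (f' := F2)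
      (fun t ht => (hF1d t ht).hasDerivWithinAt)
      (fun t ht => by
        have := (hB1d t).hasDerivWithinAt (s := Set.Ici t)
        rwa [← hEq2 t (Set.Ico_subset_Icc_self ht)] at this)
      hF1c.continuousOn hB1c.continuousOn ?_
    simp only [hF1def, hB1def, hJ0def, hJ1def]
    simp
    ring
  have hEq0 : ∀ t ∈ Set.Icc 0 h, F0 t = B0 t := by
    refine eq_of_has_deriv_right_eq (f' := F1)
      (fun t ht => (hF0d t ht).hasDerivWithinAt)
      (fun t ht => by
        have := (hB0d t).hasDerivWithinAt (s := Set.Ici t)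
        rwa [← hEq1 t (Set.Ico_subset_Icc_self ht)] at this)
      hF0c.continuousOn hB0c.continuousOn ?_
    simp [hF0def, hB0def, hJ0def, hJ1def, hJ2def, hGdef]
  -- nonnegativity of kK on the interior
  have hkK0 : ∀ t ∈ Set.Ioo 0 h, 0 ≤ kK t := fun t ht => by
    simp only [hkKdef]; linarith [hanti t ht]
  have hF3nn : ∀ t ∈ Set.Ioo 0 h, 0 ≤ F3 t := fun t ht => by
    simp only [hF3def]
    have := hkK0 t ht
    have := ht.1.le
    positivity
  -- lower bound : 0 ≤ F0 h
  have hIcoIoo : Set.Ioo 0 h ⊆ Set.Ico 0 h := Set.Ioo_subset_Ico_self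
  have hmono2 : MonotoneOn F2 (Set.Icc 0 h) := by
    refine monotoneOn_of_deriv_nonneg (convex_Icc 0 h) hF2c.continuousOn ?_ ?_
    · rw [interior_Icc]
      exact fun t ht => ((hF2d t (hIcoIoo ht)).differentiableAt).differentiableWithinAt
    · rw [interior_Icc]
      intro t ht
      rw [(hF2d t (hIcoIoo ht)).deriv]
      exact hF3nn t ht
  have hF2z : F2 0 = 0 := by simp only [hF2def, add_zero, sub_zero]; ring
  have hF2nn : ∀ t ∈ Set.Icc 0 h, 0 ≤ F2 t := fun t ht => by
    have := hmono2 (Set.left_mem_Icc.2 hh0.le) ht ht.1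
    rwa [hF2z] at this
  have hmono1 : MonotoneOn F1 (Set.Icc 0 h) := by
    refine monotoneOn_of_deriv_nonneg (convex_Icc 0 h) hF1c.continuousOn ?_ ?_
    · rw [interior_Icc]
      exact fun t ht => ((hF1d t (hIcoIoo ht)).differentiableAt).differentiableWithinAt
    · rw [interior_Icc]
      intro t ht
      rw [(hF1d t (hIcoIoo ht)).deriv]
      exact hF2nn t (Set.Ioo_subset_Icc_self ht)
  have hF1z : F1 0 = 0 := by simp only [hF1def, add_zero, sub_zero]; ring
  have hF1nn : ∀ t ∈ Set.Icc 0 h, 0 ≤ F1 t := fun t ht => by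
    have := hmono1 (Set.left_mem_Icc.2 hh0.le) ht ht.1
    rwa [hF1z] at this
  have hmono0 : MonotoneOn F0 (Set.Icc 0 h) := by
    refine monotoneOn_of_deriv_nonneg (convex_Icc 0 h) hF0c.continuousOn ?_ ?_
    · rw [interior_Icc]
      exact fun t ht => ((hF0d t (hIcoIoo ht)).differentiableAt).differentiableWithinAt
    · rw [interior_Icc]
      intro t ht
      rw [(hF0d t (hIcoIoo ht)).deriv]
      exact hF1nn t (Set.Ioo_subset_Icc_self ht)
  have hF0z : F0 0 = 0 := by simp only [hF0def, add_zero, sub_zero]; ring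
  have hlow : 0 ≤ F0 h := by
    have := hmono0 (Set.left_mem_Icc.2 hh0.le) (Set.right_mem_Icc.2 hh0.le) hh0.le
    rwa [hF0z] at this
  -- upper bound
  have hKmono : MonotoneOn K (Set.Icc 0 h) := by
    refine monotoneOn_of_deriv_nonneg (convex_Icc 0 h) hKc.continuousOn ?_ ?_
    · rw [interior_Icc]
      exact fun t ht => ((hKd t (hIcoIoo ht)).differentiableAt).differentiableWithinAt
    · rw [interior_Icc]
      intro t ht
      rw [(hKd t (hIcoIoo ht)).deriv]
      exact hkK0 t ht
  have hKz : K 0 = 0 := by simp only [hKdef, add_zero, sub_zero]; ring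
  have hKnn : ∀ t ∈ Set.Icc 0 h, 0 ≤ K t := fun t ht => by
    have := hKmono (Set.left_mem_Icc.2 hh0.le) ht ht.1
    rwa [hKz] at this
  have hKle : ∀ t ∈ Set.Icc 0 h, K t ≤ K h :=
    fun t ht => hKmono ht (Set.right_mem_Icc.2 hh0.le) ht.2
  -- combine the integrals in B0 h
  have hint1 : IntervalIntegrable (fun t => 4*h*(t * K t)) volume 0 h :=
    (Continuous.intervalIntegrable (by fun_prop) _ _)
  have hint2 : IntervalIntegrable (fun t => h^2 * K t) volume 0 h :=
    (Continuous.intervalIntegrable (by fun_prop) _ _)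
  have hint3 : IntervalIntegrable (fun t => 3*(t^2 * K t)) volume 0 h :=
    (Continuous.intervalIntegrable (by fun_prop) _ _)
  have hX : (∫ t in (0:ℝ)..h, (h-t)*(3*t-h)*K t) = 4*h*J1 h - h^2 * J0 h - 3*J2 h := by
    rw [integral_congr (g := fun t => 4*h*(t*K t) - h^2*K t - 3*(t^2*K t))
      (fun t _ => by ring)]
    rw [integral_sub (hint1.sub hint2) hint3, integral_sub hint1 hint2,
      intervalIntegral.integral_const_mul, intervalIntegral.integral_const_mul, intervalIntegral.integral_const_mul]
  have hB0h : F0 h = 1/6 * ∫ t in (0:ℝ)..h, (h-t)*(3*t-h)*K t := by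
    rw [hEq0 h (Set.right_mem_Icc.2 hh0.le), hX]
    simp only [hB0def]; ring
  -- split the integral at h / 3
  have hsplitint1 : IntervalIntegrable (fun t => (h-t)*(3*t-h)*K t) volume 0 (h/3) :=
    (Continuous.intervalIntegrable (by fun_prop) _ _)
  have hsplitint2 : IntervalIntegrable (fun t => (h-t)*(3*t-h)*K t) volume (h/3) h :=
    (Continuous.intervalIntegrable (by fun_prop) _ _)
  have hsplit : (∫ t in (0:ℝ)..h, (h-t)*(3*t-h)*K t)
      = (∫ t in (0:ℝ)..(h/3), (h-t)*(3*t-h)*K t)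
        + ∫ t in (h/3)..h, (h-t)*(3*t-h)*K t :=
    (integral_add_adjacent_intervals hsplitint1 hsplitint2).symm
  have hpart1 : (∫ t in (0:ℝ)..(h/3), (h-t)*(3*t-h)*K t) ≤ 0 := by
    have hmo : (∫ t in (0:ℝ)..(h/3), (h-t)*(3*t-h)*K t) ≤ ∫ t in (0:ℝ)..(h/3), (0:ℝ) := by
      refine integral_mono_on (by linarith) hsplitint1 (continuous_const.intervalIntegrable _ _) ?_
      intro t ht
      have ht1 : 0 ≤ t := ht.1
      have ht2 : t ≤ h/3 := ht.2
      have hKt : 0 ≤ K t := hKnn t ⟨ht1, by linarith⟩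
      have : (h-t)*(3*t-h) ≤ 0 :=
        mul_nonpos_of_nonneg_of_nonpos (by linarith) (by linarith)
      exact mul_nonpos_of_nonpos_of_nonneg this hKt
    simpa using hmo
  have hpart2 : (∫ t in (h/3)..h, (h-t)*(3*t-h)*K t)
      ≤ ∫ t in (h/3)..h, (h-t)*(3*t-h)*K h := by
    refine integral_mono_on (by linarith) hsplitint2
      (Continuous.intervalIntegrable (by fun_prop) _ _) ?_
    intro t ht
    have ht1 : h/3 ≤ t := ht.1
    have ht2 : t ≤ h := ht.2
    have hw : 0 ≤ (h-t)*(3*t-h) := mul_nonneg (by linarith) (by linarith)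
    exact mul_le_mul_of_nonneg_left (hKle t ⟨by linarith, ht2⟩) hw
  have hpoly : (∫ t in (h/3)..h, (h-t)*(3*t-h)) = 4*h^3/27 := by
    have hd : ∀ t ∈ Set.uIcc (h/3) h,
        HasDerivAt (fun t : ℝ => -t^3 + 2*h*t^2 - h^2*t) ((h-t)*(3*t-h)) t := by
      intro t _
      have h1 := (hasDerivAt_pow 3 t).neg
      have h2 := (hasDerivAt_pow 2 t).const_mul (2*h)
      have h3 := (hasDerivAt_id t).const_mul (h^2)
      refine ((h1.add h2).sub h3).congr_deriv ?_
      push_cast; ring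
    rw [integral_eq_sub_of_hasDerivAt hd (Continuous.intervalIntegrable (by fun_prop) _ _)]
    ring
  have hpart2' : (∫ t in (h/3)..h, (h-t)*(3*t-h)*K h) = 4*h^3/27 * K h := by
    rw [integral_congr (g := fun t => K h * ((h-t)*(3*t-h))) (fun t _ => by ring),
      intervalIntegral.integral_const_mul, hpoly]
    ring
  have hupper : F0 h ≤ 2/81 * h^3 * K h := by
    rw [hB0h, hsplit]
    have := hpart2.trans_eq hpart2'
    linarith [hpart1]
  -- translate F0 h into the quantities of the statement
  have hmb : m + h = b := by simp only [hm, hh]; ring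
  have hma : m - h = a := by simp only [hm, hh]; ring
  have hEqOn : Set.EqOn ft f (Set.uIcc a b) := by
    intro x hx
    rw [Set.uIcc_of_le hab'] at hx
    exact heqft x hx
  have hF0hE : F0 h = (∫ t in a..b, f t) - (b - a)/6 * (f a + f b + 4 * f m) := by
    simp only [hF0def, hGdef]
    rw [hmb, hma]
    rw [integral_interval_sub_left (hftc.intervalIntegrable m b) (hftc.intervalIntegrable m a)]
    rw [integral_congr hEqOn]
    rw [heqft a (Set.left_mem_Icc.2 hab'), heqft b (Set.right_mem_Icc.2 hab'),
      heqft m (Ioo_subset_Icc_self hmIoo)]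
    rw [hh]
    ring
  have hKh : K h = 2 * f2 m - (f2 b + f2 a) := by
    simp only [hKdef]
    rw [hmb, hma]
    rw [heqf2t a (Set.left_mem_Icc.2 hab'), heqf2t b (Set.right_mem_Icc.2 hab'),
      heqf2t m (Ioo_subset_Icc_self hmIoo)]
  have hLform : (1 / (b - a)) * (∫ t in a..b, f t) - (1 / 6) * (f a + f b + 4 * f m)
      = F0 h / (b - a) := by
    rw [hF0hE, eq_div_iff hba]
    have hcancel : (b - a) * (b - a)⁻¹ = 1 := mul_inv_cancel₀ hba
    field_simp
  have hKX : K h ≤ 2 * deriv (deriv f) m - (deriv (deriv f) a + deriv (deriv f) b) := by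
    rw [hKh, hphi m hmIoo]
    linarith [henda, hendb]
  constructor
  · rw [hLform]
    exact div_nonneg hlow (by linarith)
  · rw [hLform]
    have hba2 : b - a = 2 * h := by rw [hh]; ring
    have h1 : F0 h / (b - a) ≤ (2/81 * h^3 * K h) / (b - a) :=
      (div_le_div_iff_of_pos_right (by linarith : (0:ℝ) < b - a)).mpr hupper
    have h2 : (2/81 * h^3 * K h) / (b - a) = h^2/81 * K h := by
      rw [hba2]
      field_simp
    have h3 : h^2/81 * K h
        ≤ h^2/81 * (2 * deriv (deriv f) m - (deriv (deriv f) a + deriv (deriv f) b)) :=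
      mul_le_mul_of_nonneg_left hKX (by positivity)
    have h4 : (b - a)^2/324 * (2 * deriv (deriv f) m - (deriv (deriv f) a + deriv (deriv f) b))
        = h^2/81 * (2 * deriv (deriv f) m - (deriv (deriv f) a + deriv (deriv f) b)) := by
      rw [hba2]; ring
    linarith
end

section
/- Let f : ℝ → ℝ be four times continuously differentiable on an interval I and let a, b ∈ I with a < b. Then (1/6)(f(a)+f(b)) + (2/3) f((a+b)/2) − (1/(b-a)) ∫_a^b f(t) dt = ((b-a)^2/48) ∫_0^1 t(2−3t) [ f''(a·t/2 + b(1−t/2)) + f''(b·t/2 + a(1−t/2)) ] dt. -/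
open MeasureTheory intervalIntegral Set

/-- **Lemma 4.** If `f ∈ C⁴(I)` and `a, b ∈ I` with `a < b`, then
`N(1/6,2/3) - (1/(b-a)) ∫_a^b f
  = ((b-a)²/48) ∫_0^1 t(2-3t)[f''(a t/2 + b(1-t/2)) + f''(b t/2 + a(1-t/2))] dt`. -/
theorem stmt_10 (f : ℝ → ℝ) (I : Set ℝ) (hI : Convex ℝ I)
    (hf : ContDiffOn ℝ 4 f I)
    (a b : ℝ) (ha : a ∈ I) (hb : b ∈ I) (hab : a < b) :
    (1 / 6) * (f a + f b) + (2 / 3) * f ((a + b) / 2)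
      - (1 / (b - a)) * ∫ t in a..b, f t =
    (b - a) ^ 2 / 48 * ∫ t in (0:ℝ)..1, t * (2 - 3 * t) *
      (deriv (deriv f) (a * (t / 2) + b * (1 - t / 2))
        + deriv (deriv f) (b * (t / 2) + a * (1 - t / 2))) := by
  have hsub : Icc a b ⊆ I := hI.ordConnected.out ha hb
  have hba : (0:ℝ) < b - a := by linarith
  set c : ℝ := (b - a) / 2 with hc
  have hc0 : c ≠ 0 := by positivity
  have hcpos : (0:ℝ) < c := by positivity
  have hUD : UniqueDiffOn ℝ I := uniqueDiffOn_convex hI ⟨(a+b)/2, by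
    rw [mem_interior_iff_mem_nhds]
    exact Filter.mem_of_superset (Icc_mem_nhds (by linarith) (by linarith)) hsub⟩
  set ψ : ℝ → ℝ := derivWithin f I with hψdef
  set φ : ℝ → ℝ := derivWithin ψ I with hφdef
  set F : ℝ → ℝ := fun x => ∫ s in a..x, f s with hFdef
  have hψcd : ContDiffOn ℝ 3 ψ I := hf.derivWithin hUD (by norm_num)
  have hψcont : ContinuousOn ψ I := hψcd.continuousOn
  have hφcont : ContinuousOn φ I := (hψcd.derivWithin hUD (by norm_num) :
    ContDiffOn ℝ 2 φ I).continuousOn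
  have hfcont : ContinuousOn f I := hf.continuousOn
  -- neighborhood facts
  have hnb : ∀ x ∈ Ioo a b, I ∈ nhds x := fun x hx =>
    Filter.mem_of_superset (Icc_mem_nhds hx.1 hx.2) hsub
  have hderivf : ∀ x ∈ Ioo a b, HasDerivAt f (ψ x) x := by
    intro x hx
    have hd : DifferentiableAt ℝ f x :=
      ((hf.differentiableOn (by norm_num) x (hsub ⟨hx.1.le, hx.2.le⟩)).differentiableAt
        (hnb x hx))
    have := hd.hasDerivAt
    rwa [← derivWithin_of_mem_nhds (hnb x hx)] at this
  have hderivψ : ∀ x ∈ Ioo a b, HasDerivAt ψ (φ x) x := by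
    intro x hx
    have hd : DifferentiableAt ℝ ψ x :=
      ((hψcd.differentiableOn (by norm_num) x (hsub ⟨hx.1.le, hx.2.le⟩)).differentiableAt
        (hnb x hx))
    have := hd.hasDerivAt
    rwa [← derivWithin_of_mem_nhds (hnb x hx)] at this
  have hkey : ∀ x ∈ Ioo a b, deriv (deriv f) x = φ x := by
    intro x hx
    have hev : deriv f =ᶠ[nhds x] ψ := by
      filter_upwards [Ioo_mem_nhds hx.1 hx.2] with y hy
      exact (derivWithin_of_mem_nhds (hnb y hy)).symm
    rw [hev.deriv_eq]
    exact (derivWithin_of_mem_nhds (hnb x hx)).symm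
  have hfInt : IntervalIntegrable f volume a b := by
    apply ContinuousOn.intervalIntegrable
    rw [uIcc_of_le hab.le]
    exact hfcont.mono hsub
  have hderivF : ∀ x ∈ Ioo a b, HasDerivAt F (f x) x := by
    intro x hx
    refine intervalIntegral.integral_hasDerivAt_right
      ((hfcont.mono ?_).intervalIntegrable) ?_ ?_
    · rw [uIcc_of_le hx.1.le]; exact (Icc_subset_Icc le_rfl hx.2.le).trans hsub
    · exact ContinuousOn.stronglyMeasurableAtFilter isOpen_Ioo
        ((hfcont.mono (Ioo_subset_Icc_self.trans hsub))) x hx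
    · exact (hfcont.mono (Ioo_subset_Icc_self.trans hsub)).continuousAt
        (Ioo_mem_nhds hx.1 hx.2)
  have hF0 : F a = 0 := intervalIntegral.integral_same
  have hval : ∫ t in a..b, f t = F b := rfl
  have hFcont : ContinuousOn F (Icc a b) := by
    have h := continuousOn_primitive_interval' hfInt
      (by rw [uIcc_of_le hab.le]; exact left_mem_Icc.2 hab.le)
    rwa [uIcc_of_le hab.le] at h
  clear_value ψ φ F
  -- the explicit antiderivative
  set G : ℝ → ℝ := fun t =>
    1/c * ((2*t-3*t^2) * ψ (a+c*t)) - 1/c^2 * ((2-6*t) * f (a+c*t))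
      - 6/c^3 * F (a+c*t)
    - 1/c * ((2*t-3*t^2) * ψ (b-c*t)) - 1/c^2 * ((2-6*t) * f (b-c*t))
      + 6/c^3 * F (b-c*t) with hGdef
  have hmapA : ∀ t ∈ Icc (0:ℝ) 1, a + c*t ∈ Icc a b := by
    intro t ht
    constructor <;> nlinarith [ht.1, ht.2]
  have hmapB : ∀ t ∈ Icc (0:ℝ) 1, b - c*t ∈ Icc a b := by
    intro t ht
    constructor <;> nlinarith [ht.1, ht.2]
  have hmapA' : ∀ t ∈ Ioo (0:ℝ) 1, a + c*t ∈ Ioo a b := by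
    intro t ht
    constructor <;> nlinarith [ht.1, ht.2]
  have hmapB' : ∀ t ∈ Ioo (0:ℝ) 1, b - c*t ∈ Ioo a b := by
    intro t ht
    constructor <;> nlinarith [ht.1, ht.2]
  have hA : ∀ t : ℝ, HasDerivAt (fun t : ℝ => a + c*t) c t := by
    intro t
    simpa using ((hasDerivAt_id t).const_mul c).const_add a
  have hB : ∀ t : ℝ, HasDerivAt (fun t : ℝ => b - c*t) (-c) t := by
    intro t
    simpa [sub_eq_add_neg] using (((hasDerivAt_id t).const_mul c)).neg.const_add b
  have hw : ∀ t : ℝ, HasDerivAt (fun t : ℝ => 2*t-3*t^2) (2-6*t) t := by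
    intro t
    have := ((hasDerivAt_id t).const_mul 2).sub ((hasDerivAt_pow 2 t).const_mul 3)
    refine this.congr_deriv ?_
    ring
  have hw2 : ∀ t : ℝ, HasDerivAt (fun t : ℝ => 2-6*t) (-6) t := by
    intro t
    simpa [sub_eq_add_neg] using (((hasDerivAt_id t).const_mul 6)).neg.const_add 2
  have hG : ∀ t ∈ Ioo (0:ℝ) 1,
      HasDerivAt G ((2*t-3*t^2) * (φ (a+c*t) + φ (b-c*t))) t := by
    intro t ht
    have hxa := hmapA' t ht
    have hxb := hmapB' t ht
    have dψa : HasDerivAt (fun t : ℝ => ψ (a+c*t)) (φ (a+c*t) * c) t :=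
      (hderivψ _ hxa).comp t (hA t)
    have dψb : HasDerivAt (fun t : ℝ => ψ (b-c*t)) (φ (b-c*t) * (-c)) t :=
      (hderivψ _ hxb).comp t (hB t)
    have dfa : HasDerivAt (fun t : ℝ => f (a+c*t)) (ψ (a+c*t) * c) t :=
      (hderivf _ hxa).comp t (hA t)
    have dfb : HasDerivAt (fun t : ℝ => f (b-c*t)) (ψ (b-c*t) * (-c)) t :=
      (hderivf _ hxb).comp t (hB t)
    have dFa : HasDerivAt (fun t : ℝ => F (a+c*t)) (f (a+c*t) * c) t :=
      (hderivF _ hxa).comp t (hA t)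
    have dFb : HasDerivAt (fun t : ℝ => F (b-c*t)) (f (b-c*t) * (-c)) t :=
      (hderivF _ hxb).comp t (hB t)
    have H1 := ((hw t).mul dψa).const_mul (1/c)
    have H2 := ((hw2 t).mul dfa).const_mul (1/c^2)
    have H3 := dFa.const_mul (6/c^3)
    have H4 := ((hw t).mul dψb).const_mul (1/c)
    have H5 := ((hw2 t).mul dfb).const_mul (1/c^2)
    have H6 := dFb.const_mul (6/c^3)
    have H := ((((H1.sub H2).sub H3).sub H4).sub H5).add H6
    rw [hGdef]
    refine H.congr_deriv ?_
    field_simp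
    ring
  -- continuity of G on [0,1]
  have hcontA : ContinuousOn (fun t : ℝ => a + c*t) (Icc 0 1) := by fun_prop
  have hcontB : ContinuousOn (fun t : ℝ => b - c*t) (Icc 0 1) := by fun_prop
  have hGcont : ContinuousOn G (Icc 0 1) := by
    apply ContinuousOn.add
    apply ContinuousOn.sub
    apply ContinuousOn.sub
    apply ContinuousOn.sub
    apply ContinuousOn.sub
    · exact continuousOn_const.mul ((by fun_prop : ContinuousOn (fun t : ℝ => 2*t-3*t^2)
        (Icc 0 1)).mul ((hψcont.mono hsub).comp hcontA hmapA))
    · exact continuousOn_const.mul ((by fun_prop : ContinuousOn (fun t : ℝ => 2-6*t)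
        (Icc 0 1)).mul ((hfcont.mono hsub).comp hcontA hmapA))
    · exact continuousOn_const.mul (hFcont.comp hcontA hmapA)
    · exact continuousOn_const.mul ((by fun_prop : ContinuousOn (fun t : ℝ => 2*t-3*t^2)
        (Icc 0 1)).mul ((hψcont.mono hsub).comp hcontB hmapB))
    · exact continuousOn_const.mul ((by fun_prop : ContinuousOn (fun t : ℝ => 2-6*t)
        (Icc 0 1)).mul ((hfcont.mono hsub).comp hcontB hmapB))
    · exact continuousOn_const.mul (hFcont.comp hcontB hmapB)
  have hIntegrand : IntervalIntegrable
      (fun t => (2*t-3*t^2) * (φ (a+c*t) + φ (b-c*t))) volume 0 1 := by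
    apply ContinuousOn.intervalIntegrable
    rw [uIcc_of_le zero_le_one]
    exact (by fun_prop : ContinuousOn (fun t : ℝ => 2*t-3*t^2) (Icc 0 1)).mul
      (((hφcont.mono hsub).comp hcontA hmapA).add
        ((hφcont.mono hsub).comp hcontB hmapB))
  have hFTC : ∫ t in (0:ℝ)..1, (2*t-3*t^2) * (φ (a+c*t) + φ (b-c*t)) = G 1 - G 0 :=
    intervalIntegral.integral_eq_sub_of_hasDeriv_right_of_le zero_le_one hGcont
      (fun t ht => (hG t ht).hasDerivWithinAt) hIntegrand
  -- identify the integrand of the statement with ours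
  have hcongr : (∫ t in (0:ℝ)..1, t * (2 - 3 * t) *
      (deriv (deriv f) (a * (t / 2) + b * (1 - t / 2))
        + deriv (deriv f) (b * (t / 2) + a * (1 - t / 2))))
      = ∫ t in (0:ℝ)..1, (2*t-3*t^2) * (φ (a+c*t) + φ (b-c*t)) := by
    apply intervalIntegral.integral_congr_ae
    apply Filter.Eventually.of_forall
    intro t ht
    rw [Set.uIoc_of_le zero_le_one] at ht
    have ht' : t ∈ Ioc (0:ℝ) 1 := ht
    have h1 : a * (t / 2) + b * (1 - t / 2) = b - c*t := by rw [hc]; ring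
    have h2 : b * (t / 2) + a * (1 - t / 2) = a + c*t := by rw [hc]; ring
    have hxa : a + c*t ∈ Ioo a b := by
      constructor <;> nlinarith [ht'.1, ht'.2]
    have hxb : b - c*t ∈ Ioo a b := by
      constructor <;> nlinarith [ht'.1, ht'.2]
    rw [h1, h2, hkey _ hxa, hkey _ hxb]
    ring
  rw [hcongr, hFTC, hval]
  simp only [hGdef]
  norm_num
  rw [show a + c = (a+b)/2 by rw [hc]; ring, show b - c = (a+b)/2 by rw [hc]; ring,
    hF0, hc]
  field_simp [sub_ne_zero.mpr hab.ne']
  ring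
end

section
/- For all real numbers a, b with 0 < a < b, the logarithmic mean L = (b−a)/(log b − log a), arithmetic mean A = (a+b)/2 and geometric mean G = √(ab) satisfy (1/3)(A + 2G) − (2/81)((A − G)/L)^2 (A + G) ≤ L ≤ (1/3)(A + 2G). -/
open Real

lemma my_sinh_nonneg {x : ℝ} (hx : 0 ≤ x) : 0 ≤ Real.sinh x := by
  rw [← Real.sinh_zero]; exact Real.sinh_le_sinh.mpr hx

/-- If `F 0 = 0` and `F` has nonnegative derivative `F'` on `(0,∞)`, then `F ≥ 0` on `[0,∞)`. -/
lemma mono_aux {F F' : ℝ → ℝ} (hF : ∀ x, HasDerivAt F (F' x) x)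
    (hF' : ∀ x, 0 < x → 0 ≤ F' x) {u : ℝ} (hu : 0 ≤ u) : F 0 ≤ F u := by
  have hd : Differentiable ℝ F := fun x => (hF x).differentiableAt
  have hm : MonotoneOn F (Set.Ici 0) := by
    apply monotoneOn_of_deriv_nonneg (convex_Ici 0) hd.continuous.continuousOn
      (hd.differentiableOn)
    intro x hx
    rw [interior_Ici] at hx
    rw [(hF x).deriv]
    exact hF' x hx
  exact hm Set.self_mem_Ici hu hu

lemma L1 {u : ℝ} (hu : 0 ≤ u) : Real.sinh u ≤ u * Real.cosh u := by
  have h := mono_aux (F := fun x => x * Real.cosh x - Real.sinh x)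
    (F' := fun x => x * Real.sinh x)
    (fun x => by
      have h1 := ((hasDerivAt_id x).mul (Real.hasDerivAt_cosh x)).sub (Real.hasDerivAt_sinh x)
      refine HasDerivAt.congr_deriv (h1) ?_; simp only [id_eq]; push_cast; norm_num)
    (fun x hx => by
      show (0:ℝ) ≤ x * Real.sinh x
      exact mul_nonneg hx.le (my_sinh_nonneg hx.le)) hu
  simp at h
  linarith

lemma L2 {u : ℝ} (hu : 0 ≤ u) : 9 * u * Real.cosh u ≤ (9 + 4 * u ^ 2) * Real.sinh u := by
  have h := mono_aux (F := fun x => (9 + 4 * x ^ 2) * Real.sinh x - 9 * x * Real.cosh x)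
    (F' := fun x => 4 * x ^ 2 * Real.cosh x - x * Real.sinh x)
    (fun x => by
      have h1 := (((hasDerivAt_pow 2 x).const_mul (4:ℝ)).const_add 9).mul (Real.hasDerivAt_sinh x)
      have h2 := (((hasDerivAt_id x).const_mul (9:ℝ)).mul (Real.hasDerivAt_cosh x))
      refine HasDerivAt.congr_deriv (h1.sub h2) ?_; simp only [id_eq]; push_cast; norm_num; ring)
    (fun x hx => by
      show (0:ℝ) ≤ 4 * x ^ 2 * Real.cosh x - x * Real.sinh x
      have hs := L1 hx.le
      have hc : (1:ℝ) ≤ Real.cosh x := Real.one_le_cosh x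
      nlinarith [sq_nonneg x, mul_nonneg hx.le (by linarith : (0:ℝ) ≤ Real.cosh x)]) hu
  simp at h
  linarith

lemma L3 {u : ℝ} (hu : 0 ≤ u) : 2 * (Real.cosh u - 1) ≤ u * Real.sinh u := by
  have h := mono_aux (F := fun x => x * Real.sinh x - 2 * Real.cosh x + 2)
    (F' := fun x => x * Real.cosh x - Real.sinh x)
    (fun x => by
      have h1 := (hasDerivAt_id x).mul (Real.hasDerivAt_sinh x)
      have h2 := (Real.hasDerivAt_cosh x).const_mul (2:ℝ)
      refine HasDerivAt.congr_deriv ((h1.sub h2).add_const (2:ℝ)) ?_; simp only [id_eq]; push_cast; norm_num; ring)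
    (fun x hx => by
      show (0:ℝ) ≤ x * Real.cosh x - Real.sinh x
      linarith [L1 hx.le]) hu
  simp at h
  linarith

lemma L4 {u : ℝ} (hu : 0 ≤ u) : 3 * Real.sinh u ≤ u * Real.cosh u + 2 * u := by
  have h := mono_aux (F := fun x => x * Real.cosh x + 2 * x - 3 * Real.sinh x)
    (F' := fun x => x * Real.sinh x - 2 * Real.cosh x + 2)
    (fun x => by
      have h1 := (hasDerivAt_id x).mul (Real.hasDerivAt_cosh x)
      have h2 := (hasDerivAt_id x).const_mul (2:ℝ)
      have h3 := (Real.hasDerivAt_sinh x).const_mul (3:ℝ)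
      refine HasDerivAt.congr_deriv ((h1.add h2).sub h3) ?_; simp only [id_eq]; push_cast; norm_num; ring)
    (fun x hx => by
      show (0:ℝ) ≤ x * Real.sinh x - 2 * Real.cosh x + 2
      linarith [L3 hx.le]) hu
  simp at h
  linarith

lemma L5 {u : ℝ} (hu : 0 ≤ u) :
    0 ≤ 2 / 9 * u ^ 2 * (Real.cosh u - 1) + 2 / 27 * u ^ 3 * Real.sinh u
      + 2 * Real.cosh u - u * Real.sinh u - 2 := by
  have h := mono_aux
    (F := fun x => 2 / 9 * x ^ 2 * (Real.cosh x - 1) + 2 / 27 * x ^ 3 * Real.sinh x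
      + 2 * Real.cosh x - x * Real.sinh x - 2)
    (F' := fun x => 4 / 9 * x * (Real.cosh x - 1) + 4 / 9 * x ^ 2 * Real.sinh x
      + 2 / 27 * x ^ 3 * Real.cosh x + Real.sinh x - x * Real.cosh x)
    (fun x => by
      have h1 := (((hasDerivAt_pow 2 x).const_mul (2/9 : ℝ)).mul
        ((Real.hasDerivAt_cosh x).sub_const 1))
      have h2 := (((hasDerivAt_pow 3 x).const_mul (2/27 : ℝ)).mul (Real.hasDerivAt_sinh x))
      have h3 := (Real.hasDerivAt_cosh x).const_mul (2:ℝ)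
      have h4 := (hasDerivAt_id x).mul (Real.hasDerivAt_sinh x)
      refine HasDerivAt.congr_deriv ((((h1.add h2).add h3).sub h4).sub_const (2:ℝ)) ?_; simp only [id_eq]; push_cast; norm_num; ring)
    (fun x hx => by
      show (0:ℝ) ≤ 4 / 9 * x * (Real.cosh x - 1) + 4 / 9 * x ^ 2 * Real.sinh x
        + 2 / 27 * x ^ 3 * Real.cosh x + Real.sinh x - x * Real.cosh x
      have h2 := L2 hx.le
      have hc : (1:ℝ) ≤ Real.cosh x := Real.one_le_cosh x
      have hs : (0:ℝ) ≤ Real.sinh x := my_sinh_nonneg hx.le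
      have hx3 : (0:ℝ) ≤ 2 / 27 * x ^ 3 * Real.cosh x := by positivity
      nlinarith [mul_nonneg hx.le (by linarith : (0:ℝ) ≤ Real.cosh x - 1)]) hu
  simp at h
  linarith

lemma L6 {u : ℝ} (hu : 0 ≤ u) :
    u * Real.cosh u + 2 * u ≤ 2 / 27 * u ^ 3 * (Real.cosh u - 1) + 3 * Real.sinh u := by
  have h := mono_aux
    (F := fun x => 2 / 27 * x ^ 3 * (Real.cosh x - 1) + 3 * Real.sinh x
      - x * Real.cosh x - 2 * x)
    (F' := fun x => 2 / 9 * x ^ 2 * (Real.cosh x - 1) + 2 / 27 * x ^ 3 * Real.sinh x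
      + 2 * Real.cosh x - x * Real.sinh x - 2)
    (fun x => by
      have h1 := (((hasDerivAt_pow 3 x).const_mul (2/27 : ℝ)).mul
        ((Real.hasDerivAt_cosh x).sub_const 1))
      have h2 := (Real.hasDerivAt_sinh x).const_mul (3:ℝ)
      have h3 := (hasDerivAt_id x).mul (Real.hasDerivAt_cosh x)
      have h4 := (hasDerivAt_id x).const_mul (2:ℝ)
      refine HasDerivAt.congr_deriv (((h1.add h2).sub h3).sub h4) ?_; simp only [id_eq]; push_cast; norm_num; ring)
    (fun x hx => by
      show (0:ℝ) ≤ 2 / 9 * x ^ 2 * (Real.cosh x - 1) + 2 / 27 * x ^ 3 * Real.sinh x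
        + 2 * Real.cosh x - x * Real.sinh x - 2
      exact L5 hx.le) hu
  simp at h
  linarith

set_option maxHeartbeats 1600000 in
/-- **Theorem 5, first part.** For `0 < a < b`, with `A = (a+b)/2`, `G = √(ab)` and
`L = (b-a)/(log b - log a)`, one has
`(1/3)(A + 2G) - (2/81)((A-G)/L)² (A+G) ≤ L ≤ (1/3)(A + 2G)`. -/
theorem stmt_11 (a b A G L : ℝ) (ha : 0 < a) (hab : a < b)
    (hA : A = (a + b) / 2) (hG : G = Real.sqrt (a * b))
    (hL : L = (b - a) / (Real.log b - Real.log a)) :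
    (1 / 3) * (A + 2 * G) - (2 / 81) * ((A - G) / L) ^ 2 * (A + G) ≤ L ∧
    L ≤ (1 / 3) * (A + 2 * G) := by
  have hb : 0 < b := ha.trans hab
  set u : ℝ := (Real.log b - Real.log a) / 2 with hu_def
  have hu : 0 < u := by
    have := Real.log_lt_log ha hab
    simp only [hu_def]; linarith
  have hsa : 0 < Real.sqrt a := Real.sqrt_pos.mpr ha
  have hsb : 0 < Real.sqrt b := Real.sqrt_pos.mpr hb
  have hexpu : Real.exp u = Real.sqrt b / Real.sqrt a := by
    rw [hu_def, sub_div, Real.exp_sub, ← Real.log_sqrt ha.le, ← Real.log_sqrt hb.le,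
      Real.exp_log hsb, Real.exp_log hsa]
  have hexpnu : Real.exp (-u) = Real.sqrt a / Real.sqrt b := by
    rw [Real.exp_neg, hexpu, inv_div]
  set g0 : ℝ := Real.sqrt (a * b) with hg0_def
  have hsqab : g0 = Real.sqrt a * Real.sqrt b := Real.sqrt_mul ha.le b
  have hg0 : 0 < g0 := by rw [hsqab]; positivity
  set c : ℝ := Real.cosh u with hc_def
  set s : ℝ := Real.sinh u with hs_def
  have haa : Real.sqrt a * Real.sqrt a = a := Real.mul_self_sqrt ha.le
  have hbb : Real.sqrt b * Real.sqrt b = b := Real.mul_self_sqrt hb.le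
  have hc : g0 * c * 2 = a + b := by
    rw [hc_def, Real.cosh_eq, hexpu, hexpnu, hsqab]
    field_simp
    nlinarith [haa, hbb]
  have hs : g0 * s * 2 = b - a := by
    rw [hs_def, Real.sinh_eq, hexpu, hexpnu, hsqab]
    field_simp
    nlinarith [haa, hbb]
  have hspos : 0 < s := by rw [hs_def]; exact Real.sinh_pos_iff.mpr hu
  have hc1 : 1 ≤ c := Real.one_le_cosh u
  have hs2 : s ^ 2 = c ^ 2 - 1 := by
    rw [hs_def, hc_def]; have := Real.cosh_sq_sub_sinh_sq u; nlinarith [this]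
  -- express A, G, L
  have hA' : A = g0 * c := by rw [hA]; linarith
  have hG' : G = g0 := hG
  have hL' : L = g0 * s / u := by
    rw [hL, ← hs]
    rw [show Real.log b - Real.log a = 2 * u by rw [hu_def]; ring]
    field_simp
  have h4 := L4 hu.le
  have h6 := L6 hu.le
  rw [← hc_def, ← hs_def] at h4 h6
  clear_value u g0 c s
  clear hL hA hG hexpu hexpnu hsqab hu_def hc_def hs_def haa hbb hsa hsb
  constructor
  · -- lower bound
    rw [hA', hG', hL']
    have hdiv : (g0 * c - g0) / (g0 * s / u) = u * (c - 1) / s := by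
      field_simp
    rw [hdiv, ← sub_nonneg]
    have heq : (c - 1) * s ^ 2 = (c - 1) ^ 2 * (c + 1) := by rw [hs2]; ring
    have key : u * (c + 2) * s ^ 2 ≤ 2 / 27 * u ^ 3 * ((c - 1) ^ 2 * (c + 1)) + 3 * s ^ 3 := by
      calc u * (c + 2) * s ^ 2 = (u * c + 2 * u) * s ^ 2 := by ring
        _ ≤ (2 / 27 * u ^ 3 * (c - 1) + 3 * s) * s ^ 2 :=
            mul_le_mul_of_nonneg_right h6 (sq_nonneg s)
        _ = 2 / 27 * u ^ 3 * ((c - 1) * s ^ 2) + 3 * s ^ 3 := by ring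
        _ = 2 / 27 * u ^ 3 * ((c - 1) ^ 2 * (c + 1)) + 3 * s ^ 3 := by rw [heq]
    have hid : g0 * s / u - (1 / 3 * (g0 * c + 2 * g0)
        - 2 / 81 * (u * (c - 1) / s) ^ 2 * (g0 * c + g0))
        = g0 * (2 / 27 * u ^ 3 * ((c - 1) ^ 2 * (c + 1)) + 3 * s ^ 3 - u * (c + 2) * s ^ 2)
          / (3 * u * s ^ 2) := by
      field_simp
      ring
    rw [hid]
    apply div_nonneg
    · exact mul_nonneg hg0.le (by linarith)
    · positivity
  · -- upper bound
    rw [hA', hG', hL', div_le_iff₀ hu]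
    nlinarith [mul_le_mul_of_nonneg_left h4 hg0.le]
end
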